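/- arXiv:1507.06479 — 8 statements merged into one kernel-verified Lean document; each statement's English description precedes it below -/
import Mathlib

section
/- (Typicality of thermal equilibrium.) Let E be a finite-dimensional complex inner product space of dimension D ≥ 1, let μ be the uniform probability measure on the unit sphere of E, and let P be a positive semidefinite self-adjoint operator on E. Let V > 0 and 0 < α < γ be real constants, and assume the thermodynamic bound (Tr P)/D ≤ exp(−γV). Then μ{ φ on the unit sphere : ⟨φ, P φ⟩ > exp(−αV) } ≤ exp(−(γ−α)V); that is, with probability at least 1 − exp(−(γ−α)V) a randomly chosen normalized state φ satisfies ⟨φ, P φ⟩ ≤ exp(−αV). -/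
open MeasureTheory

private lemma coord_integral_swap
    {E : Type*} [NormedAddCommGroup E] [InnerProductSpace ℂ E] [FiniteDimensional ℂ E]
    [MeasurableSpace E] [BorelSpace E] {D : ℕ}
    (μ : Measure E) (hinv : ∀ U : E ≃ₗᵢ[ℂ] E, μ.map U = μ)
    (b : OrthonormalBasis (Fin D) ℂ E) (i j : Fin D) :
    ∫ φ, ‖b.repr φ i‖^2 ∂μ = ∫ φ, ‖b.repr φ j‖^2 ∂μ := by
  classical
  set U : E ≃ₗᵢ[ℂ] E := b.repr.trans (b.reindex (Equiv.swap i j)).repr.symm with hU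
  have hUsymm : U.symm (b j) = b i := by
    have h1 : (b.reindex (Equiv.swap i j)).repr (b j) = EuclideanSpace.single i 1 := by
      have : b j = (b.reindex (Equiv.swap i j)) i := by
        rw [OrthonormalBasis.reindex_apply]; simp
      rw [this, OrthonormalBasis.repr_self]
    simp only [U, LinearIsometryEquiv.symm_trans, LinearIsometryEquiv.trans_apply,
      LinearIsometryEquiv.symm_symm, h1, OrthonormalBasis.repr_symm_single]
  have key : ∀ φ : E, b.repr (U φ) j = b.repr φ i := by
    intro φ
    rw [b.repr_apply_apply, b.repr_apply_apply, ← hUsymm, ← U.symm.inner_map_map,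
      U.symm_apply_apply]
  have hmeas : AEStronglyMeasurable (fun φ : E => ‖b.repr φ j‖^2) μ := by
    refine Continuous.aestronglyMeasurable ?_
    fun_prop
  calc ∫ φ, ‖b.repr φ i‖^2 ∂μ = ∫ φ, ‖b.repr (U φ) j‖^2 ∂μ := by simp_rw [key]
    _ = ∫ φ, ‖b.repr φ j‖^2 ∂(μ.map U) := by
        rw [integral_map (by fun_prop) (by rw [hinv U]; exact hmeas)]
    _ = _ := by rw [hinv U]

/-- **Typicality of thermal equilibrium.**  If `P` is a positive semidefinite self-adjoint
operator on a `D`-dimensional complex inner product space satisfying the thermodynamic bound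
`(Tr P)/D ≤ exp(−γV)`, then with respect to the uniform (unitarily invariant) probability
measure on the unit sphere, the set of normalized states `φ` with `⟪φ, P φ⟫ > exp(−αV)` has
measure at most `exp(−(γ−α)V)`. -/
theorem typicality_of_thermal_equilibrium
    {E : Type*} [NormedAddCommGroup E] [InnerProductSpace ℂ E] [FiniteDimensional ℂ E]
    [MeasurableSpace E] [BorelSpace E]
    {D : ℕ} (hD : 1 ≤ D) (hdim : Module.finrank ℂ E = D)
    (μ : Measure E) [IsProbabilityMeasure μ]
    (hsphere : μ {x : E | ‖x‖ ≠ 1} = 0)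
    (hinv : ∀ U : E ≃ₗᵢ[ℂ] E, μ.map U = μ)
    (P : E →ₗ[ℂ] E) (hsym : P.IsSymmetric)
    (hpos : ∀ x : E, 0 ≤ (inner ℂ x (P x) : ℂ).re)
    (V α γ : ℝ) (hV : 0 < V) (hα : 0 < α) (hαγ : α < γ)
    (htdb : (LinearMap.trace ℂ E P).re / (D : ℝ) ≤ Real.exp (-γ * V)) :
    μ {φ : E | Real.exp (-α * V) < (inner ℂ φ (P φ) : ℂ).re}
      ≤ ENNReal.ofReal (Real.exp (-(γ - α) * V)) := by
  classical
  have hDpos : (0:ℝ) < D := by exact_mod_cast hD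
  set b : OrthonormalBasis (Fin D) ℂ E := hsym.eigenvectorBasis hdim with hb
  set lam : Fin D → ℝ := hsym.eigenvalues hdim with hlam
  have heig : ∀ i, P (b i) = (lam i : ℂ) • b i := fun i => hsym.apply_eigenvectorBasis hdim i
  -- a.e. norm one
  have hae : ∀ᵐ φ ∂μ, ‖φ‖ = 1 := by
    rw [ae_iff]
    exact hsphere
  -- pointwise expansion
  have hexp : ∀ φ : E, (inner ℂ φ (P φ) : ℂ).re = ∑ i, lam i * ‖b.repr φ i‖^2 := by
    intro φ
    have h1 : P φ = ∑ i, (b.repr φ i * (lam i : ℂ)) • b i := by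
      conv_lhs => rw [← b.sum_repr φ]
      rw [map_sum]
      congr 1; ext i
      rw [LinearMap.map_smul, heig i, smul_smul]
    have h2 : (inner ℂ φ (P φ) : ℂ) = ∑ i, (lam i : ℂ) * (b.repr φ i * (starRingEnd ℂ) (b.repr φ i)) := by
      rw [h1, inner_sum]
      congr 1; ext i
      rw [inner_smul_right]
      have : (inner ℂ φ (b i) : ℂ) = (starRingEnd ℂ) (b.repr φ i) := by
        rw [b.repr_apply_apply, ← inner_conj_symm]
      rw [this]; ring
    rw [h2, Complex.re_sum]
    congr 1; ext i
    rw [Complex.mul_conj, ← Complex.ofReal_mul, Complex.ofReal_re, Complex.normSq_eq_norm_sq]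
  -- nonneg eigenvalues
  have hlamnn : ∀ i, 0 ≤ lam i := by
    intro i
    have := hpos (b i)
    rw [heig i, inner_smul_right] at this
    have hbi : (inner ℂ (b i) (b i) : ℂ) = 1 := by
      rw [inner_self_eq_norm_sq_to_K]
      simp [b.orthonormal.1 i]
    rw [hbi, mul_one] at this
    simpa using this
  -- integrability of coordinates
  have hint : ∀ i, Integrable (fun φ : E => ‖b.repr φ i‖^2) μ := by
    intro i
    refine Integrable.mono' (integrable_const 1) (Continuous.aestronglyMeasurable (by fun_prop)) ?_
    filter_upwards [hae] with φ hφ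
    have hsq : ‖b.repr φ‖^2 = ∑ j, ‖b.repr φ j‖^2 := by
      rw [EuclideanSpace.norm_eq, Real.sq_sqrt (Finset.sum_nonneg fun j _ => by positivity)]
    have h1 : ‖b.repr φ i‖^2 ≤ ‖b.repr φ‖^2 := by
      rw [hsq]
      exact Finset.single_le_sum (f := fun j => ‖b.repr φ j‖^2)
        (fun j _ => by positivity) (Finset.mem_univ i)
    have h2 : ‖b.repr φ‖ = 1 := by rw [b.repr.norm_map, hφ]
    rw [Real.norm_of_nonneg (by positivity)]
    rw [h2] at h1
    simpa using h1
  -- coordinate integrals all equal 1/D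
  have hcoord : ∀ i, ∫ φ, ‖b.repr φ i‖^2 ∂μ = 1 / D := by
    intro i
    have hsum : ∫ φ, (∑ j, ‖b.repr φ j‖^2) ∂μ = 1 := by
      have h1 : ∀ᵐ φ ∂μ, (∑ j, ‖b.repr φ j‖^2) = 1 := by
        filter_upwards [hae] with φ hφ
        have : ‖b.repr φ‖^2 = ∑ j, ‖b.repr φ j‖^2 := by
          rw [EuclideanSpace.norm_eq, Real.sq_sqrt (Finset.sum_nonneg fun j _ => by positivity)]
        rw [← this, b.repr.norm_map, hφ, one_pow]
      rw [integral_congr_ae h1]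
      simp
    have h2 : ∫ φ, (∑ j, ‖b.repr φ j‖^2) ∂μ = ∑ j, ∫ φ, ‖b.repr φ j‖^2 ∂μ :=
      integral_finset_sum _ (fun j _ => hint j)
    have h3 : ∀ j, ∫ φ, ‖b.repr φ j‖^2 ∂μ = ∫ φ, ‖b.repr φ i‖^2 ∂μ :=
      fun j => coord_integral_swap μ hinv b j i
    rw [h2] at hsum
    simp_rw [h3] at hsum
    rw [Finset.sum_const, Finset.card_univ, Fintype.card_fin, nsmul_eq_mul] at hsum
    rw [eq_div_iff (ne_of_gt hDpos)]
    linarith [hsum]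
  -- trace identity
  have htr : (LinearMap.trace ℂ E P).re = ∑ i, lam i := by
    have h1 : LinearMap.trace ℂ E P = ∑ i, ((lam i : ℂ)) := by
      rw [LinearMap.trace_eq_matrix_trace ℂ b.toBasis P, Matrix.trace]
      congr 1; ext i
      have hr : b.repr ((lam i : ℂ) • b i) = (lam i : ℂ) • b.repr (b i) := b.repr.map_smul _ _
      rw [Matrix.diag_apply, LinearMap.toMatrix_apply, OrthonormalBasis.coe_toBasis,
        OrthonormalBasis.coe_toBasis_repr_apply, heig i, hr, OrthonormalBasis.repr_self]
      simp [EuclideanSpace.single_apply]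
    rw [h1, Complex.re_sum]
    simp
  -- integral of g
  set g : E → ℝ := fun φ => (inner ℂ φ (P φ) : ℂ).re with hg
  have hgint : Integrable g μ := by
    have : g = fun φ => ∑ i, lam i * ‖b.repr φ i‖^2 := funext hexp
    rw [this]
    exact integrable_finset_sum _ (fun i _ => (hint i).const_mul _)
  have hgval : ∫ φ, g φ ∂μ = (LinearMap.trace ℂ E P).re / D := by
    simp_rw [hg, hexp]
    rw [integral_finset_sum _ (fun i _ => (hint i).const_mul _)]
    simp_rw [integral_const_mul, hcoord, htr, Finset.sum_div]
    congr 1; ext i; ring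
  -- Markov
  have hgnn : 0 ≤ᵐ[μ] g := Filter.Eventually.of_forall (fun φ => hpos φ)
  have hmarkov := mul_meas_ge_le_integral_of_nonneg hgnn hgint (Real.exp (-α * V))
  have hsub : μ {φ : E | Real.exp (-α * V) < g φ} ≤ μ {φ : E | Real.exp (-α * V) ≤ g φ} :=
    measure_mono (fun φ hφ => le_of_lt (Set.mem_setOf.mp hφ))
  have hfin : μ {φ : E | Real.exp (-α * V) ≤ g φ} ≠ ⊤ := measure_ne_top μ _
  have htoReal : (μ {φ : E | Real.exp (-α * V) ≤ g φ}).toReal ≤ Real.exp (-(γ - α) * V) := by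
    have h1 : (μ {φ : E | Real.exp (-α * V) ≤ g φ}).toReal
        ≤ (∫ φ, g φ ∂μ) / Real.exp (-α * V) := by
      rw [le_div_iff₀ (Real.exp_pos _)]
      have hm : Real.exp (-α * V) * (μ {φ : E | Real.exp (-α * V) ≤ g φ}).toReal ≤ ∫ x, g x ∂μ := hmarkov
      linarith [hm]
    refine h1.trans ?_
    rw [hgval, div_le_iff₀ (Real.exp_pos _), ← Real.exp_add]
    have : -(γ - α) * V + -α * V = -γ * V := by ring
    rw [this]
    exact htdb
  calc μ {φ : E | Real.exp (-α * V) < g φ} ≤ μ {φ : E | Real.exp (-α * V) ≤ g φ} := hsub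
    _ = ENNReal.ofReal (μ {φ : E | Real.exp (-α * V) ≤ g φ}).toReal := (ENNReal.ofReal_toReal hfin).symm
    _ ≤ ENNReal.ofReal (Real.exp (-(γ - α) * V)) := ENNReal.ofReal_le_ofReal htoReal
end

section
/- Let E be a finite-dimensional complex inner product space, J a finite index set, (ψ_j)_{j∈J} an orthonormal family in E, (E_j)_{j∈J} pairwise distinct real numbers, (c_j)_{j∈J} complex coefficients, and P a self-adjoint operator on E. Set φ(t) := ∑_{j∈J} c_j e^{−iE_j t} ψ_j. Then the long-time average of ⟨φ(t), P φ(t)⟩ converges: (1/τ)∫₀^τ ⟨φ(t), P φ(t)⟩ dt → ∑_{j∈J} |c_j|² ⟨ψ_j, P ψ_j⟩ as τ → ∞. -/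
open MeasureTheory Filter

lemma myIntegral_re {f : ℝ → ℂ} {a b : ℝ} (hf : IntervalIntegrable f volume a b) :
    (∫ t in a..b, (f t).re) = (∫ t in a..b, f t).re := by
  simpa using (Complex.reCLM.intervalIntegral_comp_comm hf (a := a) (b := b))

lemma tendsto_avg_exp (a : ℂ) {ω : ℝ} (hω : ω ≠ 0) :
    Tendsto (fun τ : ℝ => (1 / τ) * ∫ t in (0:ℝ)..τ, (a * Complex.exp (Complex.I * ω * t)).re)
      atTop (nhds 0) := by
  have hc : Complex.I * ω ≠ 0 := by
    simp [Complex.I_ne_zero, Complex.ofReal_eq_zero, hω]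
  have hcont : Continuous fun t : ℝ => a * Complex.exp (Complex.I * ω * t) := by
    continuity
  have key : ∀ τ : ℝ, (∫ t in (0:ℝ)..τ, a * Complex.exp (Complex.I * ω * t))
      = a * ((Complex.exp (Complex.I * ω * τ) - 1) / (Complex.I * ω)) := by
    intro τ
    rw [intervalIntegral.integral_const_mul]
    rw [show (∫ t in (0:ℝ)..τ, Complex.exp (Complex.I * ω * t))
        = ∫ t in (0:ℝ)..τ, Complex.exp ((Complex.I * ω) * t) from rfl,
      integral_exp_mul_complex hc]
    simp
  have hbound : ∀ᶠ τ : ℝ in atTop,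
      ‖(1 / τ) * ∫ t in (0:ℝ)..τ, (a * Complex.exp (Complex.I * ω * t)).re‖
        ≤ (1 / τ) * (‖a‖ * 2 / ‖Complex.I * ω‖) := by
    filter_upwards [eventually_ge_atTop (1:ℝ)] with τ hτ
    have hτ0 : (0:ℝ) < τ := lt_of_lt_of_le one_pos hτ
    have hint : IntervalIntegrable (fun t : ℝ => a * Complex.exp (Complex.I * ω * t)) volume 0 τ :=
      hcont.intervalIntegrable 0 τ
    rw [myIntegral_re hint, key τ, Real.norm_eq_abs, abs_mul,
      abs_of_pos (by positivity : (0:ℝ) < 1/τ)]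
    gcongr
    calc |(a * ((Complex.exp (Complex.I * ω * τ) - 1) / (Complex.I * ω))).re|
        ≤ ‖a * ((Complex.exp (Complex.I * ω * τ) - 1) / (Complex.I * ω))‖ :=
          Complex.abs_re_le_norm _
      _ = ‖a‖ * ‖Complex.exp (Complex.I * ω * τ) - 1‖ / ‖Complex.I * ω‖ := by
          rw [norm_mul, norm_div]; ring
      _ ≤ ‖a‖ * 2 / ‖Complex.I * ω‖ := by
          gcongr
          calc ‖Complex.exp (Complex.I * ω * τ) - 1‖
              ≤ ‖Complex.exp (Complex.I * ω * τ)‖ + ‖(1:ℂ)‖ := norm_sub_le _ _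
            _ ≤ 2 := by
                rw [show Complex.I * ω * τ = (↑(ω * τ) : ℝ) * Complex.I by push_cast; ring,
                  Complex.norm_exp_ofReal_mul_I]
                norm_num
  have hlim : Tendsto (fun τ : ℝ => (1 / τ) * (‖a‖ * 2 / ‖Complex.I * ω‖)) atTop (nhds 0) := by
    simpa [one_div] using tendsto_inv_atTop_zero.mul_const (‖a‖ * 2 / ‖Complex.I * ω‖)
  exact squeeze_zero_norm' hbound hlim

/-- For `φ(t) = ∑_j c_j e^{−iE_j t} ψ_j` with `(ψ_j)` orthonormal and the `E_j` pairwise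
distinct reals, the long-time average of `⟪φ(t), P φ(t)⟫` converges to
`∑_j |c_j|² ⟪ψ_j, P ψ_j⟫` for any self-adjoint operator `P`. -/
theorem long_time_average_nondegenerate
    {E : Type*} [NormedAddCommGroup E] [InnerProductSpace ℂ E] [FiniteDimensional ℂ E]
    {J : Type*} [Fintype J]
    (ψ : J → E) (hψ : Orthonormal ℂ ψ)
    (Ej : J → ℝ) (hEj : Function.Injective Ej)
    (c : J → ℂ) (P : E →ₗ[ℂ] E) (hP : P.IsSymmetric)
    (φ : ℝ → E)
    (hφ : ∀ t : ℝ, φ t = ∑ j, (c j * Complex.exp ((-Complex.I) * (Ej j : ℂ) * (t : ℂ))) • ψ j) :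
    Tendsto (fun τ : ℝ => (1 / τ) * ∫ t in (0:ℝ)..τ, (inner ℂ (φ t) (P (φ t)) : ℂ).re)
      atTop (nhds (∑ j, ‖c j‖ ^ 2 * (inner ℂ (ψ j) (P (ψ j)) : ℂ).re)) := by
  classical
  set A : J → J → ℂ := fun j k => starRingEnd ℂ (c j) * c k * (inner ℂ (ψ j) (P (ψ k)) : ℂ) with hA
  have hexp : ∀ t : ℝ, (inner ℂ (φ t) (P (φ t)) : ℂ)
      = ∑ j, ∑ k, A j k * Complex.exp (Complex.I * ((Ej j - Ej k : ℝ) : ℂ) * t) := by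
    intro t
    rw [hφ t, map_sum, sum_inner]
    refine Finset.sum_congr rfl fun j _ => ?_
    rw [inner_smul_left, inner_sum, Finset.mul_sum]
    refine Finset.sum_congr rfl fun k _ => ?_
    rw [P.map_smul, inner_smul_right, map_mul, ← Complex.exp_conj]
    rw [show (starRingEnd ℂ) (-Complex.I * (Ej j : ℂ) * (t : ℂ)) = Complex.I * (Ej j : ℂ) * t by
      simp [map_mul, Complex.conj_I, Complex.conj_ofReal]]
    rw [hA]
    have : Complex.exp (Complex.I * (Ej j : ℂ) * t) * Complex.exp (-Complex.I * (Ej k : ℂ) * t)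
        = Complex.exp (Complex.I * ((Ej j - Ej k : ℝ) : ℂ) * t) := by
      rw [← Complex.exp_add]; congr 1; push_cast; ring
    rw [← this]; ring
  have hre : ∀ t : ℝ, (inner ℂ (φ t) (P (φ t)) : ℂ).re
      = ∑ j, ∑ k, (A j k * Complex.exp (Complex.I * ((Ej j - Ej k : ℝ) : ℂ) * t)).re := by
    intro t; rw [hexp t, Complex.re_sum]
    exact Finset.sum_congr rfl fun j _ => Complex.re_sum _ _
  have hcont : ∀ j k : J,
      Continuous fun t : ℝ => (A j k * Complex.exp (Complex.I * ((Ej j - Ej k : ℝ) : ℂ) * t)).re := by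
    intro j k; continuity
  have heq : ∀ τ : ℝ, (1 / τ) * ∫ t in (0:ℝ)..τ, (inner ℂ (φ t) (P (φ t)) : ℂ).re
      = ∑ j, ∑ k, (1 / τ) *
          ∫ t in (0:ℝ)..τ, (A j k * Complex.exp (Complex.I * ((Ej j - Ej k : ℝ) : ℂ) * t)).re := by
    intro τ
    simp_rw [hre]
    rw [intervalIntegral.integral_finset_sum
      (fun j _ => (continuous_finset_sum _ fun k _ => hcont j k).intervalIntegrable 0 τ),
      Finset.mul_sum]
    refine Finset.sum_congr rfl fun j _ => ?_
    rw [intervalIntegral.integral_finset_sum (fun k _ => (hcont j k).intervalIntegrable 0 τ),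
      Finset.mul_sum]
  have hfun : (fun τ : ℝ => (1 / τ) * ∫ t in (0:ℝ)..τ, (inner ℂ (φ t) (P (φ t)) : ℂ).re)
      = fun τ : ℝ => ∑ j, ∑ k, (1 / τ) *
          ∫ t in (0:ℝ)..τ, (A j k * Complex.exp (Complex.I * ((Ej j - Ej k : ℝ) : ℂ) * t)).re :=
    funext heq
  rw [hfun]
  have htarget : (∑ j, ‖c j‖ ^ 2 * (inner ℂ (ψ j) (P (ψ j)) : ℂ).re)
      = ∑ j, ∑ k, if j = k then ‖c j‖ ^ 2 * (inner ℂ (ψ j) (P (ψ j)) : ℂ).re else 0 := by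
    refine Finset.sum_congr rfl fun j _ => ?_
    rw [Finset.sum_ite_eq]; simp
  rw [htarget]
  refine tendsto_finset_sum _ fun j _ => tendsto_finset_sum _ fun k _ => ?_
  by_cases h : j = k
  · subst h
    simp only [if_pos rfl]
    have hval : ∀ t : ℝ, (A j j * Complex.exp (Complex.I * ((Ej j - Ej j : ℝ) : ℂ) * t)).re
        = ‖c j‖ ^ 2 * (inner ℂ (ψ j) (P (ψ j)) : ℂ).re := by
      intro t
      rw [hA]
      simp only [sub_self, Complex.ofReal_zero, mul_zero, zero_mul, Complex.exp_zero, mul_one]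
      rw [show starRingEnd ℂ (c j) * c j * (inner ℂ (ψ j) (P (ψ j)) : ℂ)
          = ((‖c j‖ ^ 2 : ℝ) : ℂ) * (inner ℂ (ψ j) (P (ψ j)) : ℂ) by
        rw [mul_comm (starRingEnd ℂ (c j)), Complex.mul_conj']; norm_cast]
      exact Complex.re_ofReal_mul _ _
    have hdiag : ∀ᶠ τ : ℝ in atTop, (1 / τ) *
        (∫ t in (0:ℝ)..τ, (A j j * Complex.exp (Complex.I * ((Ej j - Ej j : ℝ) : ℂ) * t)).re)
        = ‖c j‖ ^ 2 * (inner ℂ (ψ j) (P (ψ j)) : ℂ).re := by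
      filter_upwards [eventually_ge_atTop (1:ℝ)] with τ hτ
      have hτ0 : τ ≠ 0 := by positivity
      simp_rw [hval]
      rw [intervalIntegral.integral_const, smul_eq_mul, sub_zero]
      field_simp
    exact Tendsto.congr' (hdiag.mono fun τ h => h.symm) tendsto_const_nhds
  · have hω : Ej j - Ej k ≠ 0 := sub_ne_zero.mpr fun he => h (hEj he)
    simpa only [if_neg h] using tendsto_avg_exp (A j k) hω
end

section
/- (Thermalization for initial states with a moderate energy distribution.) Let E be a finite-dimensional complex inner product space, H a self-adjoint operator on E, and (ψ_j)_{j∈J} an orthonormal family of eigenvectors of H, H ψ_j = E_j ψ_j, with pairwise distinct eigenvalues E_j, where |J| = D ≥ 1. Let P be a self-adjoint operator with 0 ≤ P ≤ 1 (as quadratic forms). Let φ₀ = ∑_{j∈J} c_j ψ_j be a unit vector and φ(t) := exp(−itH)φ₀. Let V > 0, α > 0, ν > 0, 0 ≤ η < γ with γ − η > 2(α+ν). Assume the thermodynamic bound (1/D)∑_{j∈J}⟨ψ_j, P ψ_j⟩ ≤ exp(−γV) and the effective-dimension bound D_eff := (∑_{j∈J}|c_j|⁴)^{−1} ≥ exp(−ηV)·D.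 Then there exists τ₀ > 0 such that for every τ ≥ τ₀ one has (1/τ)∫₀^τ ⟨φ(t), P φ(t)⟩ dt ≤ exp(−(α+ν)V). -/
open NormedSpace in
lemma exp_apply_eigenvector {E : Type*} [NormedAddCommGroup E] [NormedSpace ℂ E]
    [CompleteSpace E] (A : E →L[ℂ] E) (x : E) (μ : ℂ) (h : A x = μ • x) :
    NormedSpace.exp A x = Complex.exp μ • x := by
  have hpow : ∀ n : ℕ, (A ^ n) x = μ ^ n • x := by
    intro n
    induction n with
    | zero => simp
    | succ n ih =>
      rw [pow_succ, ContinuousLinearMap.mul_apply, h, map_smul, ih, smul_smul, mul_comm, pow_succ]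
  have hsum : Summable fun n : ℕ => ((n.factorial : ℂ))⁻¹ • A ^ n := expSeries_summable' A
  have : NormedSpace.exp A x = ∑' n : ℕ, (((n.factorial : ℂ))⁻¹ • A ^ n) x := by
    rw [NormedSpace.exp_eq_tsum (𝕂 := ℂ)]
    exact ((ContinuousLinearMap.apply ℂ E x).map_tsum hsum)
  rw [this]
  have : ∀ n : ℕ, (((n.factorial : ℂ))⁻¹ • A ^ n) x = (((n.factorial : ℂ))⁻¹ * μ ^ n) • x := by
    intro n
    rw [ContinuousLinearMap.smul_apply, hpow, smul_smul]
  rw [tsum_congr this, Summable.tsum_smul_const, Complex.exp_eq_exp_ℂ, NormedSpace.exp_eq_tsum (𝕂 := ℂ)]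
  · exact congrArg (· • x) (tsum_congr fun n => (smul_eq_mul _ _).symm)
  · exact (NormedSpace.expSeries_summable' μ).congr fun n => smul_eq_mul _ _

open MeasureTheory Filter

open Topology

set_option maxHeartbeats 1600000 in
/-- **Thermalization for initial states with a moderate energy distribution.**
Assume the thermodynamic bound `(1/D)∑_j ⟪ψ_j, P ψ_j⟫ ≤ exp(−γV)` and the effective-dimension
bound `(∑_j |c_j|⁴)⁻¹ ≥ exp(−ηV)·D`, with `γ − η > 2(α+ν)`.  Then the time average of
`⟪φ(t), P φ(t)⟫` is at most `exp(−(α+ν)V)` for all sufficiently large averaging times `τ`. -/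
theorem thermalization_moderate_energy_distribution
    {E : Type*} [NormedAddCommGroup E] [InnerProductSpace ℂ E] [FiniteDimensional ℂ E]
    (H : E →L[ℂ] E) (hH : IsSelfAdjoint H)
    {J : Type*} [Fintype J] {D : ℕ} (hD : 1 ≤ D) (hcard : Fintype.card J = D)
    (ψ : J → E) (hψ : Orthonormal ℂ ψ)
    (Ej : J → ℝ) (hEj : Function.Injective Ej)
    (heig : ∀ j, H (ψ j) = (Ej j : ℂ) • ψ j)
    (P : E →L[ℂ] E) (hP : IsSelfAdjoint P)
    (hP0 : ∀ x : E, 0 ≤ (inner ℂ x (P x) : ℂ).re)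
    (hP1 : ∀ x : E, (inner ℂ x (P x) : ℂ).re ≤ ‖x‖ ^ 2)
    (c : J → ℂ) (φ0 : E) (hφ0 : φ0 = ∑ j, c j • ψ j) (hφ0norm : ‖φ0‖ = 1)
    (φ : ℝ → E) (hφ : ∀ t : ℝ, φ t = NormedSpace.exp (((-Complex.I) * (t : ℂ)) • H) φ0)
    (V α ν γ η : ℝ) (hV : 0 < V) (hα : 0 < α) (hν : 0 < ν) (hη : 0 ≤ η) (hηγ : η < γ)
    (hgap : 2 * (α + ν) < γ - η)
    (htdb : (1 / (D : ℝ)) * ∑ j, (inner ℂ (ψ j) (P (ψ j)) : ℂ).re ≤ Real.exp (-γ * V))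
    (heff : Real.exp (-η * V) * (D : ℝ) ≤ (∑ j, ‖c j‖ ^ 4)⁻¹) :
    ∃ τ0 : ℝ, 0 < τ0 ∧ ∀ τ : ℝ, τ0 ≤ τ →
      (1 / τ) * ∫ t in (0:ℝ)..τ, (inner ℂ (φ t) (P (φ t)) : ℂ).re
        ≤ Real.exp (-(α + ν) * V) := by
  classical
  have hDpos : (0 : ℝ) < D := by exact_mod_cast Nat.lt_of_lt_of_le Nat.zero_lt_one hD
  set m : J → J → ℂ := fun j k => (inner ℂ (ψ j) (P (ψ k)) : ℂ) with hm
  set coef : J → J → ℂ := fun j k => (starRingEnd ℂ) (c j) * c k * m j k with hcoef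
  set f : J → J → ℝ → ℂ :=
    fun j k t => Complex.exp ((Complex.I * ((Ej j : ℂ) - (Ej k : ℂ))) * (t : ℂ)) with hf
  -- the evolved state
  have hφt : ∀ t : ℝ, φ t
      = ∑ k, (c k * Complex.exp ((-Complex.I * (t : ℂ)) * (Ej k : ℂ))) • ψ k := by
    intro t
    rw [hφ, hφ0, map_sum]
    refine Finset.sum_congr rfl fun k _ => ?_
    rw [ContinuousLinearMap.map_smul, exp_apply_eigenvector _ _ ((-Complex.I * (t : ℂ)) * (Ej k : ℂ))
        (by rw [ContinuousLinearMap.smul_apply, heig, smul_smul]), smul_smul]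
  -- the integrand
  have hinner : ∀ t : ℝ, (inner ℂ (φ t) (P (φ t)) : ℂ) = ∑ j, ∑ k, coef j k * f j k t := by
    intro t
    have hP' : P (φ t) = ∑ k, (c k * Complex.exp ((-Complex.I * (t : ℂ)) * (Ej k : ℂ))) • P (ψ k) := by
      rw [hφt, map_sum]
      exact Finset.sum_congr rfl fun k _ => P.map_smul _ _
    rw [hP', hφt, sum_inner]
    refine Finset.sum_congr rfl fun j _ => ?_
    rw [inner_smul_left, inner_sum]
    simp only [inner_smul_right]
    rw [Finset.mul_sum]
    refine Finset.sum_congr rfl fun k _ => ?_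
    have h1 : (starRingEnd ℂ) (Complex.exp ((-Complex.I * (t : ℂ)) * (Ej j : ℂ)))
        = Complex.exp ((Complex.I * (t : ℂ)) * (Ej j : ℂ)) := by
      rw [← Complex.exp_conj]
      congr 1
      simp [Complex.conj_ofReal]
    have h2 : Complex.exp ((Complex.I * (t : ℂ)) * (Ej j : ℂ))
        * Complex.exp ((-Complex.I * (t : ℂ)) * (Ej k : ℂ)) = f j k t := by
      rw [hf, ← Complex.exp_add]
      congr 1
      ring
    calc (starRingEnd ℂ) (c j * Complex.exp ((-Complex.I * (t : ℂ)) * (Ej j : ℂ)))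
          * ((c k * Complex.exp ((-Complex.I * (t : ℂ)) * (Ej k : ℂ))) * m j k)
        = ((starRingEnd ℂ) (c j) * c k * m j k)
          * ((starRingEnd ℂ) (Complex.exp ((-Complex.I * (t : ℂ)) * (Ej j : ℂ)))
            * Complex.exp ((-Complex.I * (t : ℂ)) * (Ej k : ℂ))) := by
          rw [map_mul]; ring
      _ = coef j k * f j k t := by rw [h1, h2, hcoef]
  have hfc : ∀ j k, Continuous (f j k) := by
    intro j k
    exact Complex.continuous_exp.comp (by continuity)
  -- integral identity
  have key : ∀ τ : ℝ, (∫ t in (0:ℝ)..τ, (inner ℂ (φ t) (P (φ t)) : ℂ).re)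
      = (∑ j, ∑ k, coef j k * ∫ t in (0:ℝ)..τ, f j k t).re := by
    intro τ
    have hcont : Continuous (fun t : ℝ => ∑ j, ∑ k, coef j k * f j k t) := by
      refine continuous_finset_sum _ fun j _ => continuous_finset_sum _ fun k _ => ?_
      exact continuous_const.mul (hfc j k)
    calc (∫ t in (0:ℝ)..τ, (inner ℂ (φ t) (P (φ t)) : ℂ).re)
        = ∫ t in (0:ℝ)..τ, Complex.reCLM (∑ j, ∑ k, coef j k * f j k t) := by
          refine intervalIntegral.integral_congr fun t _ => ?_
          rw [hinner]; rfl
      _ = Complex.reCLM (∫ t in (0:ℝ)..τ, ∑ j, ∑ k, coef j k * f j k t) :=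
          ContinuousLinearMap.intervalIntegral_comp_comm _
            (hcont.intervalIntegrable _ _)
      _ = (∑ j, ∑ k, coef j k * ∫ t in (0:ℝ)..τ, f j k t).re := by
          rw [intervalIntegral.integral_finset_sum (f := fun j t => ∑ k, coef j k * f j k t) (fun j _ =>
            (continuous_finset_sum _ fun k _ =>
              continuous_const.mul (hfc j k)).intervalIntegrable _ _)]
          rw [Finset.sum_congr rfl (fun j _ => intervalIntegral.integral_finset_sum (f := fun k t => coef j k * f j k t)
            (fun k _ => (continuous_const.mul (hfc j k)).intervalIntegrable _ _))]
          simp only [intervalIntegral.integral_const_mul]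
          rfl
  -- averaged quantities
  set Avg : J → J → ℝ → ℂ := fun j k τ => (τ : ℂ)⁻¹ * ∫ t in (0:ℝ)..τ, f j k t with hAvg
  set G : ℝ → ℂ := fun τ => ∑ j, ∑ k, coef j k * Avg j k τ with hG
  -- limits of each average
  have hAvglim : ∀ j k, Tendsto (fun τ => coef j k * Avg j k τ) atTop
      (𝓝 (if j = k then coef j j else 0)) := by
    intro j k
    by_cases hjk : j = k
    · subst hjk
      simp only [if_pos rfl]
      have heq : ∀ᶠ τ in atTop, coef j j * Avg j j τ = coef j j := by
        filter_upwards [eventually_ge_atTop (1:ℝ)] with τ hτ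
        have hτ0 : (τ : ℂ) ≠ 0 := by
          exact_mod_cast ne_of_gt (lt_of_lt_of_le zero_lt_one hτ)
        have hint1 : (∫ t in (0:ℝ)..τ, f j j t) = ((τ : ℝ) : ℂ) := by
          simp [hf]
        rw [hAvg]
        simp only [hint1]
        rw [inv_mul_cancel₀ hτ0, mul_one]
      exact tendsto_const_nhds.congr' (Filter.EventuallyEq.symm heq)
    · simp only [if_neg hjk]
      set ωc : ℂ := Complex.I * ((Ej j : ℂ) - (Ej k : ℂ)) with hωc
      have hω : ωc ≠ 0 := by
        apply mul_ne_zero Complex.I_ne_zero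
        rw [sub_ne_zero]
        exact_mod_cast fun h => hjk (hEj (by exact_mod_cast h))
      have hbound : ∀ᶠ τ in atTop, ‖coef j k * Avg j k τ‖
          ≤ (‖coef j k‖ * (2 / ‖ωc‖)) * τ⁻¹ := by
        filter_upwards [eventually_ge_atTop (1:ℝ)] with τ hτ
        have hτ0 : (0:ℝ) < τ := lt_of_lt_of_le zero_lt_one hτ
        have hint : (∫ t in (0:ℝ)..τ, f j k t)
            = (Complex.exp (ωc * τ) - Complex.exp (ωc * 0)) / ωc :=
          integral_exp_mul_complex hω
        have hn1 : ‖Complex.exp (ωc * τ)‖ = 1 := by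
          have : ωc * (τ:ℂ) = Complex.I * (((Ej j - Ej k) * τ : ℝ) : ℂ) := by
            rw [hωc]; push_cast; ring
          rw [this, Complex.norm_exp]
          simp [Complex.mul_re]
        have hn2 : ‖Complex.exp (ωc * 0)‖ = 1 := by
          simp
        have hAvgle : ‖Avg j k τ‖ ≤ τ⁻¹ * (2 / ‖ωc‖) := by
          rw [hAvg]
          simp only
          rw [hint, norm_mul, norm_inv, norm_div]
          have hτn : ‖(τ:ℂ)‖ = τ := by
            rw [Complex.norm_real, Real.norm_eq_abs, abs_of_pos hτ0]
          rw [hτn]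
          gcongr
          calc ‖Complex.exp (ωc * τ) - Complex.exp (ωc * 0)‖
              ≤ ‖Complex.exp (ωc * τ)‖ + ‖Complex.exp (ωc * 0)‖ := norm_sub_le _ _
            _ ≤ 2 := by rw [hn1, hn2]; norm_num
        calc ‖coef j k * Avg j k τ‖ = ‖coef j k‖ * ‖Avg j k τ‖ := norm_mul _ _
          _ ≤ ‖coef j k‖ * (τ⁻¹ * (2 / ‖ωc‖)) :=
              mul_le_mul_of_nonneg_left hAvgle (norm_nonneg _)
          _ = (‖coef j k‖ * (2 / ‖ωc‖)) * τ⁻¹ := by ring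
      refine squeeze_zero_norm' hbound ?_
      have h0 : Tendsto (fun τ : ℝ => τ⁻¹) atTop (𝓝 0) := tendsto_inv_atTop_zero
      simpa using h0.const_mul (‖coef j k‖ * (2 / ‖ωc‖))
  -- limit of G
  have hGlim : Tendsto G atTop (𝓝 (∑ j, coef j j)) := by
    have h1 : Tendsto G atTop (𝓝 (∑ j, ∑ k, if j = k then coef j j else 0)) := by
      rw [hG]
      exact tendsto_finset_sum _ fun j _ => tendsto_finset_sum _ fun k _ => hAvglim j k
    simpa [Finset.sum_ite_eq] using h1
  have hRelim : Tendsto (fun τ => (G τ).re) atTop (𝓝 ((∑ j, coef j j).re)) :=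
    (Complex.continuous_re.tendsto _).comp hGlim
  -- value and bound of the limit
  have hLre : (∑ j, coef j j).re = ∑ j, ‖c j‖ ^ 2 * (m j j).re := by
    rw [Complex.re_sum]
    refine Finset.sum_congr rfl fun j _ => ?_
    rw [hcoef]
    simp only
    have hcc : (starRingEnd ℂ) (c j) * c j = ((‖c j‖ ^ 2 : ℝ) : ℂ) := by
      rw [mul_comm, Complex.mul_conj]
      norm_cast
      simp [Complex.normSq_eq_norm_sq]
    rw [hcc]
    simp [Complex.mul_re, ← Complex.ofReal_pow]
  have hp0 : ∀ j, 0 ≤ (m j j).re := fun j => hP0 _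
  have hp1 : ∀ j, (m j j).re ≤ 1 := fun j => by
    have := hP1 (ψ j); rwa [hψ.1 j, one_pow] at this
  have hsum_p : ∑ j, (m j j).re ≤ D * Real.exp (-γ * V) := by
    calc ∑ j, (m j j).re = (D : ℝ) * ((1 / D) * ∑ j, (m j j).re) := by
          field_simp
      _ ≤ D * Real.exp (-γ * V) := mul_le_mul_of_nonneg_left htdb hDpos.le
  have hsum_p2 : ∑ j, (m j j).re ^ 2 ≤ D * Real.exp (-γ * V) :=
    le_trans (Finset.sum_le_sum fun j _ => by nlinarith [hp0 j, hp1 j]) hsum_p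
  set S : ℝ := ∑ j, ‖c j‖ ^ 4 with hSdef
  have hS0 : 0 ≤ S := Finset.sum_nonneg fun j _ => by positivity
  have hSne : S ≠ 0 := by
    intro h
    rw [h] at heff
    simp only [inv_zero] at heff
    nlinarith [Real.exp_pos (-η * V)]
  have hSpos : 0 < S := lt_of_le_of_ne hS0 (Ne.symm hSne)
  have hSle : S ≤ (Real.exp (-η * V) * D)⁻¹ := by
    have h := inv_anti₀ (by positivity) heff
    rwa [inv_inv] at h
  have hq2 : ∑ j, (‖c j‖ ^ 2) ^ 2 = S := by
    rw [hSdef]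
    exact Finset.sum_congr rfl fun j _ => by rw [← pow_mul]
  have hCS : (∑ j, ‖c j‖ ^ 2 * (m j j).re) ^ 2
      ≤ (∑ j, (‖c j‖ ^ 2) ^ 2) * ∑ j, (m j j).re ^ 2 :=
    Finset.sum_mul_sq_le_sq_mul_sq _ _ _
  have hexp_eq : (Real.exp (-η * V) * D)⁻¹ * ((D : ℝ) * Real.exp (-γ * V))
      = Real.exp ((η - γ) * V) := by
    have h1 : (Real.exp (-η * V) * (D:ℝ))⁻¹ * ((D : ℝ) * Real.exp (-γ * V))
        = Real.exp (η * V) * Real.exp (-γ * V) * ((D:ℝ)⁻¹ * D) := by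
      have h2 : -(-η * V) = η * V := by ring
      rw [mul_inv, ← Real.exp_neg, h2]; ring
    rw [h1, inv_mul_cancel₀ (ne_of_gt hDpos), mul_one, ← Real.exp_add]
    congr 1
    ring
  have hlim_sq : (∑ j, ‖c j‖ ^ 2 * (m j j).re) ^ 2 ≤ Real.exp ((η - γ) * V) := by
    calc (∑ j, ‖c j‖ ^ 2 * (m j j).re) ^ 2
        ≤ (∑ j, (‖c j‖ ^ 2) ^ 2) * ∑ j, (m j j).re ^ 2 := hCS
      _ ≤ (Real.exp (-η * V) * D)⁻¹ * ((D : ℝ) * Real.exp (-γ * V)) := by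
          apply mul_le_mul (hq2 ▸ hSle) hsum_p2
            (Finset.sum_nonneg fun j _ => sq_nonneg _) (by positivity)
      _ = Real.exp ((η - γ) * V) := hexp_eq
  have hlim_le : ∑ j, ‖c j‖ ^ 2 * (m j j).re ≤ Real.exp ((η - γ) * V / 2) := by
    have hq0 : 0 ≤ ∑ j, ‖c j‖ ^ 2 * (m j j).re :=
      Finset.sum_nonneg fun j _ => mul_nonneg (by positivity) (hp0 j)
    have h2 : Real.exp ((η - γ) * V / 2) ^ 2 = Real.exp ((η - γ) * V) := by
      rw [sq, ← Real.exp_add]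
      ring_nf
    nlinarith [Real.exp_pos ((η - γ) * V / 2)]
  have hstrict : Real.exp ((η - γ) * V / 2) < Real.exp (-(α + ν) * V) :=
    Real.exp_lt_exp.2 (by nlinarith)
  have hLlt : (∑ j, coef j j).re < Real.exp (-(α + ν) * V) := by
    rw [hLre]; exact lt_of_le_of_lt hlim_le hstrict
  -- conclude
  have hev1 : ∀ᶠ τ in atTop, (G τ).re ≤ Real.exp (-(α + ν) * V) :=
    hRelim.eventually_le_const hLlt
  have hev2 : ∀ᶠ τ in atTop,
      (1 / τ) * (∫ t in (0:ℝ)..τ, (inner ℂ (φ t) (P (φ t)) : ℂ).re) = (G τ).re := by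
    filter_upwards [eventually_ge_atTop (1:ℝ)] with τ hτ
    have hτ0 : τ ≠ 0 := ne_of_gt (lt_of_lt_of_le zero_lt_one hτ)
    rw [key τ]
    have hGτ : G τ = ((1 / τ : ℝ) : ℂ) * ∑ j, ∑ k, coef j k * ∫ t in (0:ℝ)..τ, f j k t := by
      rw [hG]
      simp only [Finset.mul_sum]
      refine Finset.sum_congr rfl fun j _ => Finset.sum_congr rfl fun k _ => ?_
      rw [hAvg]
      push_cast
      ring
    rw [hGτ]
    simp [Complex.mul_re]
  obtain ⟨a, ha⟩ := eventually_atTop.1 (hev1.and hev2)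
  refine ⟨max a 1, lt_of_lt_of_le zero_lt_one (le_max_right _ _), fun τ hτ => ?_⟩
  have h := ha τ (le_trans (le_max_left _ _) hτ)
  rw [h.2]
  exact h.1
end

section
/- (Long-time average in the presence of degeneracy.) Let E be a finite-dimensional complex inner product space, H a self-adjoint operator on E, and (ψ_j)_{j∈J} an orthonormal family of eigenvectors of H with eigenvalues E_j (possibly repeated), where J is finite. Let d̄ := max over real numbers e of #{ j ∈ J : E_j = e } be the maximal degeneracy. Let P be a self-adjoint operator with 0 ≤ P ≤ 1, let φ₀ = ∑_{j∈J} c_j ψ_j be a unit vector, and φ(t) := exp(−itH)φ₀. Then the long-time average (1/τ)∫₀^τ ⟨φ(t), P φ(t)⟩ dt converges as τ → ∞, and its limit satisfies lim_{τ→∞} (1/τ)∫₀^τ ⟨φ(t), P φ(t)⟩ dt ≤ d̄ · ∑_{j∈J} |c_j|² ⟨ψ_j, P ψ_j⟩. -/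
open MeasureTheory Filter
open NormedSpace in
lemma exp_eigen {E : Type*} [NormedAddCommGroup E] [InnerProductSpace ℂ E] [FiniteDimensional ℂ E]
    (A : E →L[ℂ] E) (μ : ℂ) (x : E) (h : A x = μ • x) :
    NormedSpace.exp A x = Complex.exp μ • x := by
  have hpow : ∀ n : ℕ, (A ^ n) x = μ ^ n • x := by
    intro n
    induction n with
    | zero => simp
    | succ n ih =>
      rw [pow_succ, ContinuousLinearMap.mul_apply, h, _root_.map_smul, ih, smul_smul, pow_succ, mul_comm]
  have hsum : Summable fun n : ℕ => ((n.factorial : ℂ))⁻¹ • A ^ n := expSeries_summable' A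
  have hmu : Summable fun n : ℕ => ((n.factorial : ℂ))⁻¹ * μ ^ n := by
    simpa [smul_eq_mul] using expSeries_summable' (𝕂 := ℂ) μ
  have h1 : NormedSpace.exp A x = ∑' n : ℕ, (((n.factorial : ℂ))⁻¹ • A ^ n) x := by
    have := (ContinuousLinearMap.apply ℂ E x).map_tsum hsum
    simp only [ContinuousLinearMap.apply_apply] at this
    simp only [exp_eq_tsum ℂ]
    exact this
  rw [h1]
  have h2 : ∀ n : ℕ, (((n.factorial : ℂ))⁻¹ • A ^ n) x = (((n.factorial : ℂ))⁻¹ * μ ^ n) • x := by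
    intro n; rw [ContinuousLinearMap.smul_apply, hpow, smul_smul]
  rw [tsum_congr h2, hmu.tsum_smul_const]
  congr 1
  rw [Complex.exp_eq_exp_ℂ, exp_eq_tsum ℂ]
  simp [smul_eq_mul]
open MeasureTheory Filter intervalIntegral

lemma interval_re (f : ℝ → ℂ) (hf : Continuous f) (a b : ℝ) :
    (∫ t in a..b, (f t).re) = (∫ t in a..b, f t).re := by
  simpa using (Complex.reCLM.intervalIntegral_comp_comm (hf.intervalIntegrable a b : IntervalIntegrable f MeasureTheory.volume a b))

lemma avg_exp (ω : ℝ) (a : ℂ) :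
    Tendsto (fun τ : ℝ => (1/τ) * ∫ t in (0:ℝ)..τ,
        (Complex.exp ((Complex.I * ω) * t) * a).re)
      atTop (nhds (if ω = 0 then a.re else 0)) := by
  have hcont : Continuous fun t : ℝ => Complex.exp ((Complex.I * ω) * t) * a := by
    fun_prop
  have key : ∀ τ : ℝ, (∫ t in (0:ℝ)..τ, (Complex.exp ((Complex.I * ω) * t) * a).re)
      = ((∫ t in (0:ℝ)..τ, Complex.exp ((Complex.I * ω) * t)) * a).re := by
    intro τ
    rw [interval_re _ hcont, intervalIntegral.integral_mul_const]
  by_cases hω : ω = 0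
  · subst hω
    simp only [if_pos rfl]
    apply Tendsto.congr' (f₁ := fun _ => a.re)
    · filter_upwards [eventually_gt_atTop (0:ℝ)] with τ hτ
      rw [key]
      simp only [Complex.ofReal_zero, mul_zero, zero_mul, Complex.exp_zero]
      rw [intervalIntegral.integral_const]
      simp only [sub_zero, Complex.real_smul, mul_one, Complex.re_ofReal_mul]
      field_simp
    · exact tendsto_const_nhds
  · simp only [if_neg hω]
    have hc : (Complex.I * ω) ≠ 0 := by
      simp [Complex.I_ne_zero, Complex.ofReal_eq_zero, hω]
    refine squeeze_zero_norm'
      (a := fun τ : ℝ => (1/τ) * (2 * ‖a‖ / ‖(Complex.I * (ω:ℂ))‖)) ?_ ?_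
    · filter_upwards [eventually_gt_atTop (0:ℝ)] with τ hτ
      rw [key, integral_exp_mul_complex hc]
      set z := (Complex.exp (Complex.I * ↑ω * ↑τ) - Complex.exp (Complex.I * ↑ω * ↑0)) /
          (Complex.I * ↑ω) with hz
      have h1 : ‖z * a‖ ≤ 2 * ‖a‖ / ‖(Complex.I * (ω:ℂ))‖ := by
        rw [norm_mul, hz, norm_div]
        have hnum : ‖Complex.exp (Complex.I * ↑ω * ↑τ) - Complex.exp (Complex.I * ↑ω * ↑0)‖ ≤ 2 := by
          refine (norm_sub_le _ _).trans ?_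
          have e1 : ‖Complex.exp (Complex.I * ↑ω * ↑τ)‖ = 1 := by
            rw [Complex.norm_exp]; simp
          have e2 : ‖Complex.exp (Complex.I * ↑ω * ↑0)‖ = 1 := by
            rw [Complex.norm_exp]; simp
          rw [e1, e2]; norm_num
        have hC : 0 < ‖(Complex.I * (ω:ℂ))‖ := norm_pos_iff.mpr hc
        rw [div_mul_eq_mul_div, mul_div_assoc, mul_div_assoc]
        exact mul_le_mul_of_nonneg_right hnum (by positivity)
      have h2 : |(z * a).re| ≤ 2 * ‖a‖ / ‖(Complex.I * (ω:ℂ))‖ :=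
        (Complex.abs_re_le_norm _).trans h1
      rw [Real.norm_eq_abs, abs_mul, abs_of_pos (by positivity : (0:ℝ) < 1/τ)]
      exact mul_le_mul_of_nonneg_left h2 (by positivity)
    · have h := tendsto_inv_atTop_zero.mul_const (2 * ‖a‖ / ‖(Complex.I * (ω:ℂ))‖)
      simpa [one_div] using h

lemma cs_op {E : Type*} [NormedAddCommGroup E] [InnerProductSpace ℂ E] [FiniteDimensional ℂ E]
    (P : E →L[ℂ] E) (hP : IsSelfAdjoint P)
    (hP0 : ∀ x : E, 0 ≤ (inner ℂ x (P x) : ℂ).re) (x y : E) :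
    ‖(inner ℂ x (P y) : ℂ)‖ ^ 2 ≤ (inner ℂ x (P x) : ℂ).re * (inner ℂ y (P y) : ℂ).re := by
  have hsym := ContinuousLinearMap.isSelfAdjoint_iff_isSymmetric.mp hP
  letI core : PreInnerProductSpace.Core ℂ E :=
    { inner := fun u v => inner ℂ u (P v)
      conj_inner_symm := fun u v => by
        show (starRingEnd ℂ) (inner ℂ v (P u) : ℂ) = (inner ℂ u (P v) : ℂ)
        exact (inner_conj_symm (P u) v).trans (hsym u v)
      re_inner_nonneg := hP0
      add_left := fun u v w => by
        show (inner ℂ (u + v) (P w) : ℂ) = inner ℂ u (P w) + inner ℂ v (P w)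
        simp [inner_add_left]
      smul_left := fun u v r => by
        show (inner ℂ (r • u) (P v) : ℂ) = (starRingEnd ℂ) r * inner ℂ u (P v)
        simp [inner_smul_left, mul_comm]
      }
  have h := @InnerProductSpace.Core.inner_mul_inner_self_le ℂ E _ _ _ core x y
  have hxy : @inner ℂ E core.toInner x y = (inner ℂ x (P y) : ℂ) := rfl
  have hyx : ‖@inner ℂ E core.toInner y x‖ = ‖(inner ℂ x (P y) : ℂ)‖ := by
    have h2 : @inner ℂ E core.toInner y x = (starRingEnd ℂ) (inner ℂ x (P y) : ℂ) := by
      show (inner ℂ y (P x) : ℂ) = _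
      exact (inner_conj_symm y (P x)).symm.trans (congrArg _ (hsym x y))
    rw [h2, RCLike.norm_conj]
  rw [hxy, hyx] at h
  have hxx : @inner ℂ E core.toInner x x = (inner ℂ x (P x) : ℂ) := rfl
  have hyy : @inner ℂ E core.toInner y y = (inner ℂ y (P y) : ℂ) := rfl
  rw [hxx, hyy] at h
  simpa [sq, RCLike.re_to_complex] using h
/-- **Long-time average in the presence of degeneracy.**  For the evolution
`φ(t) = exp(−itH)φ₀` of `φ₀ = ∑_j c_j ψ_j`, where `(ψ_j)` is an orthonormal family of
eigenvectors of `H` with (possibly repeated) eigenvalues `E_j` of maximal degeneracy `d̄`,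
and `P` satisfies `0 ≤ P ≤ 1`, the long-time average of `⟪φ(t), P φ(t)⟫` converges, and its
limit is at most `d̄·∑_j |c_j|² ⟪ψ_j, P ψ_j⟫`. -/
theorem long_time_average_degenerate
    {E : Type*} [NormedAddCommGroup E] [InnerProductSpace ℂ E] [FiniteDimensional ℂ E]
    (H : E →L[ℂ] E) (hH : IsSelfAdjoint H)
    {J : Type*} [Fintype J]
    (ψ : J → E) (hψ : Orthonormal ℂ ψ)
    (Ej : J → ℝ) (heig : ∀ j, H (ψ j) = (Ej j : ℂ) • ψ j)
    (d : ℕ)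
    (hd : d = Finset.univ.sup fun j : J =>
      (Finset.univ.filter fun j' : J => Ej j' = Ej j).card)
    (P : E →L[ℂ] E) (hP : IsSelfAdjoint P)
    (hP0 : ∀ x : E, 0 ≤ (inner ℂ x (P x) : ℂ).re)
    (hP1 : ∀ x : E, (inner ℂ x (P x) : ℂ).re ≤ ‖x‖ ^ 2)
    (c : J → ℂ) (φ0 : E) (hφ0 : φ0 = ∑ j, c j • ψ j) (hφ0norm : ‖φ0‖ = 1)
    (φ : ℝ → E) (hφ : ∀ t : ℝ, φ t = NormedSpace.exp (((-Complex.I) * (t : ℂ)) • H) φ0) :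
    ∃ ℓ : ℝ,
      Tendsto (fun τ : ℝ => (1 / τ) * ∫ t in (0:ℝ)..τ, (inner ℂ (φ t) (P (φ t)) : ℂ).re)
        atTop (nhds ℓ) ∧
      ℓ ≤ (d : ℝ) * ∑ j, ‖c j‖ ^ 2 * (inner ℂ (ψ j) (P (ψ j)) : ℂ).re := by
  classical
  set a : J → J → ℂ := fun j k =>
    (starRingEnd ℂ) (c j) * c k * inner ℂ (ψ j) (P (ψ k)) with ha
  set p : J → ℝ := fun j => (inner ℂ (ψ j) (P (ψ j)) : ℂ).re with hp
  -- step 1 : explicit evolution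
  have hφt : ∀ t : ℝ, φ t = ∑ j, (Complex.exp ((-Complex.I * t) * Ej j) * c j) • ψ j := by
    intro t
    rw [hφ t, hφ0, _root_.map_sum]
    refine Finset.sum_congr rfl fun j _ => ?_
    rw [_root_.map_smul]
    have hA : ((-Complex.I * (t:ℂ)) • H) (ψ j) = ((-Complex.I * t) * Ej j) • ψ j := by
      rw [ContinuousLinearMap.smul_apply, heig j, smul_smul]
    rw [exp_eigen _ _ _ hA, smul_smul, mul_comm]
  -- step 2 : expansion of the observable
  have hinner : ∀ t : ℝ, (inner ℂ (φ t) (P (φ t)) : ℂ)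
      = ∑ j, ∑ k, Complex.exp ((Complex.I * ((Ej j - Ej k : ℝ) : ℂ)) * t) * a j k := by
    intro t
    rw [hφt t, _root_.map_sum, sum_inner]
    refine Finset.sum_congr rfl fun j _ => ?_
    rw [inner_sum]
    refine Finset.sum_congr rfl fun k _ => ?_
    rw [_root_.map_smul, inner_smul_left, inner_smul_right]
    rw [_root_.map_mul]
    have hconj : (starRingEnd ℂ) (Complex.exp ((-Complex.I * t) * Ej j))
        = Complex.exp ((Complex.I * t) * Ej j) := by
      rw [← Complex.exp_conj]
      congr 1
      simp [_root_.map_mul, Complex.conj_ofReal]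
    rw [hconj]
    have hsplit : Complex.exp ((Complex.I * ((Ej j - Ej k : ℝ) : ℂ)) * t)
        = Complex.exp ((Complex.I * t) * Ej j) * Complex.exp ((-Complex.I * t) * Ej k) := by
      rw [← Complex.exp_add]
      congr 1
      push_cast
      ring
    rw [ha]
    simp only []
    rw [hsplit]
    ring
  -- step 3 : rewrite the time-average as a finite sum of elementary averages
  have hfun : (fun τ : ℝ => (1 / τ) * ∫ t in (0:ℝ)..τ, (inner ℂ (φ t) (P (φ t)) : ℂ).re)
      = fun τ : ℝ => ∑ j, ∑ k, (1/τ) *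
          ∫ t in (0:ℝ)..τ, (Complex.exp ((Complex.I * ((Ej j - Ej k : ℝ) : ℂ)) * t) * a j k).re := by
    funext τ
    have h1 : ∀ t : ℝ, (inner ℂ (φ t) (P (φ t)) : ℂ).re
        = ∑ j, ∑ k, (Complex.exp ((Complex.I * ((Ej j - Ej k : ℝ) : ℂ)) * t) * a j k).re := by
      intro t
      rw [hinner t, Complex.re_sum]
      exact Finset.sum_congr rfl fun j _ => Complex.re_sum _ _
    simp only [h1]
    rw [intervalIntegral.integral_finset_sum (fun j _ => by
      apply Continuous.intervalIntegrable
      apply continuous_finset_sum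
      intro k _
      fun_prop)]
    rw [Finset.mul_sum]
    refine Finset.sum_congr rfl fun j _ => ?_
    rw [intervalIntegral.integral_finset_sum (fun k _ => by
      apply Continuous.intervalIntegrable; fun_prop)]
    rw [Finset.mul_sum]
  -- step 4 : convergence
  refine ⟨∑ j, ∑ k, if Ej j - Ej k = 0 then (a j k).re else 0, ?_, ?_⟩
  · rw [hfun]
    exact tendsto_finset_sum _ fun j _ => tendsto_finset_sum _ fun k _ =>
      avg_exp (Ej j - Ej k) (a j k)
  -- step 5 : the bound
  · set w : J → ℝ := fun j => ‖c j‖ ^ 2 * p j with hw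
    have hwnn : ∀ j, 0 ≤ w j := fun j => mul_nonneg (by positivity) (hP0 _)
    have hkey : ∀ j k, (if Ej j - Ej k = 0 then (a j k).re else 0) ≤
        (if Ej j = Ej k then (w j + w k)/2 else 0) := by
      intro j k
      by_cases h : Ej j = Ej k
      · rw [if_pos (sub_eq_zero.mpr h), if_pos h]
        have hB := cs_op P hP hP0 (ψ j) (ψ k)
        have h1 : (a j k).re ≤ ‖a j k‖ :=
          (le_abs_self _).trans (by exact Complex.abs_re_le_norm _)
        have h2 : ‖a j k‖ = ‖c j‖ * ‖c k‖ * ‖(inner ℂ (ψ j) (P (ψ k)) : ℂ)‖ := by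
          rw [ha]
          simp only [norm_mul, RCLike.norm_conj]
        set B := ‖(inner ℂ (ψ j) (P (ψ k)) : ℂ)‖ with hBdef
        have hBnn : (0:ℝ) ≤ B := norm_nonneg _
        have hpj : 0 ≤ p j := hP0 _
        have hpk : 0 ≤ p k := hP0 _
        have hsqrt : B ≤ Real.sqrt (p j) * Real.sqrt (p k) := by
          rw [← Real.sqrt_mul hpj]
          exact (Real.le_sqrt hBnn (mul_nonneg hpj hpk)).mpr hB
        calc (a j k).re ≤ ‖c j‖ * ‖c k‖ * B := by rw [← h2]; exact h1
          _ ≤ ‖c j‖ * ‖c k‖ * (Real.sqrt (p j) * Real.sqrt (p k)) :=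
              mul_le_mul_of_nonneg_left hsqrt (by positivity)
          _ = (‖c j‖ * Real.sqrt (p j)) * (‖c k‖ * Real.sqrt (p k)) := by ring
          _ ≤ (w j + w k)/2 := by
              rw [hw]
              simp only []
              nlinarith [sq_nonneg (‖c j‖ * Real.sqrt (p j) - ‖c k‖ * Real.sqrt (p k)),
                Real.sq_sqrt hpj, Real.sq_sqrt hpk, norm_nonneg (c j), norm_nonneg (c k),
                Real.sqrt_nonneg (p j), Real.sqrt_nonneg (p k)]
      · rw [if_neg (fun hs => h (sub_eq_zero.mp hs)), if_neg h]
    have hdeg : ∀ j : J, ((Finset.univ.filter fun j' : J => Ej j' = Ej j).card : ℝ) ≤ d := by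
      intro j
      exact_mod_cast Nat.cast_le.mpr (hd ▸ Finset.le_sup (f := fun j : J =>
        (Finset.univ.filter fun j' : J => Ej j' = Ej j).card) (Finset.mem_univ j))
    calc (∑ j, ∑ k, if Ej j - Ej k = 0 then (a j k).re else 0)
        ≤ ∑ j, ∑ k, (if Ej j = Ej k then (w j + w k)/2 else 0) :=
          Finset.sum_le_sum fun j _ => Finset.sum_le_sum fun k _ => hkey j k
      _ = (∑ j, ∑ k, (if Ej j = Ej k then w j else 0))/2
          + (∑ j, ∑ k, (if Ej j = Ej k then w k else 0))/2 := by
          have hterm : ∀ j k : J, (if Ej j = Ej k then (w j + w k)/2 else 0)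
              = (if Ej j = Ej k then w j else 0)/2 + (if Ej j = Ej k then w k else 0)/2 := by
            intro j k; by_cases h : Ej j = Ej k <;> simp [h] <;> ring
          simp only [hterm, Finset.sum_add_distrib, Finset.sum_div]
      _ = (∑ j, ((Finset.univ.filter fun j' : J => Ej j' = Ej j).card : ℝ) * w j)/2
          + (∑ k, ((Finset.univ.filter fun j' : J => Ej j' = Ej k).card : ℝ) * w k)/2 := by
          congr 1
          · refine congrArg (· / 2) (Finset.sum_congr rfl fun j _ => ?_)
            have hfe : (Finset.univ.filter fun k => Ej j = Ej k)
                = (Finset.univ.filter fun j' : J => Ej j' = Ej j) := by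
              apply Finset.filter_congr
              intro x _
              simp [eq_comm]
            rw [← Finset.sum_filter, hfe, Finset.sum_const, nsmul_eq_mul]
          · rw [Finset.sum_comm]
            refine congrArg (· / 2) (Finset.sum_congr rfl fun k _ => ?_)
            rw [← Finset.sum_filter, Finset.sum_const, nsmul_eq_mul]
      _ = ∑ j, ((Finset.univ.filter fun j' : J => Ej j' = Ej j).card : ℝ) * w j := by ring
      _ ≤ ∑ j, (d : ℝ) * w j :=
          Finset.sum_le_sum fun j _ => mul_le_mul_of_nonneg_right (hdeg j) (hwnn j)
      _ = (d : ℝ) * ∑ j, w j := by rw [Finset.mul_sum]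
end

section
/- Let D ≥ 1, let μ be the uniform probability measure on the unit sphere of ℂ^D, and let η > 0 and V > 0. Then μ{ φ = (c_1,…,c_D) on the unit sphere : ∑_{j=1}^{D} |c_j|⁴ ≥ exp(ηV)/D } ≤ 2·exp(−ηV); that is, a randomly chosen normalized state has effective dimension D_eff := (∑_j |c_j|⁴)^{−1} ≥ exp(−ηV)·D with probability at least 1 − 2·exp(−ηV). -/
open MeasureTheory

set_option maxHeartbeats 1000000

variable {D : ℕ}

noncomputable def mixFun (j k : Fin D) (z : ℂ) (φ : EuclideanSpace ℂ (Fin D)) :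
    EuclideanSpace ℂ (Fin D) :=
  WithLp.toLp 2 fun i => if i = j then (φ j + z * φ k) / (Real.sqrt 2 : ℂ)
    else if i = k then (φ j - z * φ k) / (Real.sqrt 2 : ℂ) else φ i

noncomputable def mixInv (j k : Fin D) (z : ℂ) (ψ : EuclideanSpace ℂ (Fin D)) :
    EuclideanSpace ℂ (Fin D) :=
  WithLp.toLp 2 fun i => if i = j then (ψ j + ψ k) / (Real.sqrt 2 : ℂ)
    else if i = k then (starRingEnd ℂ z) * (ψ j - ψ k) / (Real.sqrt 2 : ℂ) else ψ i

lemma sqrt2_ne : ((Real.sqrt 2 : ℝ) : ℂ) ≠ 0 :=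
  Complex.ofReal_ne_zero.2 (by positivity)

lemma sqrt2_sq : ((Real.sqrt 2 : ℝ) : ℂ) ^ 2 = 2 := by
  rw [sq, ← Complex.ofReal_mul, Real.mul_self_sqrt (by norm_num)]
  norm_num

lemma conj_mul_self_one {z : ℂ} (hz : ‖z‖ = 1) : (starRingEnd ℂ z) * z = 1 := by
  rw [← Complex.normSq_eq_conj_mul_self]
  rw [show Complex.normSq z = ‖z‖^2 by rw [Complex.normSq_eq_norm_sq], hz]
  norm_num

lemma mixFun_apply_j (j k : Fin D) (z : ℂ) (φ : EuclideanSpace ℂ (Fin D)) :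
    mixFun j k z φ j = (φ j + z * φ k) / (Real.sqrt 2 : ℂ) := if_pos rfl

lemma mixFun_apply_k (j k : Fin D) (hjk : j ≠ k) (z : ℂ) (φ : EuclideanSpace ℂ (Fin D)) :
    mixFun j k z φ k = (φ j - z * φ k) / (Real.sqrt 2 : ℂ) := by
  unfold mixFun; simp only [WithLp.ofLp_toLp]; rw [if_neg (Ne.symm hjk), if_pos trivial]

lemma mixFun_apply_other (j k : Fin D) (z : ℂ) (φ : EuclideanSpace ℂ (Fin D))
    {i : Fin D} (hij : i ≠ j) (hik : i ≠ k) : mixFun j k z φ i = φ i := by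
  unfold mixFun; simp only [WithLp.ofLp_toLp]; rw [if_neg hij, if_neg hik]

lemma mixInv_apply_j (j k : Fin D) (z : ℂ) (ψ : EuclideanSpace ℂ (Fin D)) :
    mixInv j k z ψ j = (ψ j + ψ k) / (Real.sqrt 2 : ℂ) := if_pos rfl

lemma mixInv_apply_k (j k : Fin D) (hjk : j ≠ k) (z : ℂ) (ψ : EuclideanSpace ℂ (Fin D)) :
    mixInv j k z ψ k = (starRingEnd ℂ z) * (ψ j - ψ k) / (Real.sqrt 2 : ℂ) := by
  unfold mixInv; simp only [WithLp.ofLp_toLp]; rw [if_neg (Ne.symm hjk), if_pos trivial]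

lemma mixInv_apply_other (j k : Fin D) (z : ℂ) (ψ : EuclideanSpace ℂ (Fin D))
    {i : Fin D} (hij : i ≠ j) (hik : i ≠ k) : mixInv j k z ψ i = ψ i := by
  unfold mixInv; simp only [WithLp.ofLp_toLp]; rw [if_neg hij, if_neg hik]

lemma two_norm_identity (z u v : ℂ) (hz : ‖z‖ = 1) :
    ‖(u + z * v) / (Real.sqrt 2 : ℂ)‖ ^ 2 + ‖(u - z * v) / (Real.sqrt 2 : ℂ)‖ ^ 2
      = ‖u‖ ^ 2 + ‖v‖ ^ 2 := by
  have h2 : ‖((Real.sqrt 2 : ℝ) : ℂ)‖ = Real.sqrt 2 := by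
    simp [Complex.norm_real, Real.sqrt_nonneg, abs_of_nonneg]
  have hs : Real.sqrt 2 * Real.sqrt 2 = 2 := Real.mul_self_sqrt (by norm_num)
  have hp := parallelogram_law_with_norm ℝ u (z * v)
  rw [norm_div, norm_div, h2, div_pow, div_pow, show Real.sqrt 2 ^ 2 = 2 by
    rw [sq, hs]]
  have hzv : ‖z * v‖ = ‖v‖ := by rw [norm_mul, hz, one_mul]
  rw [hzv] at hp
  simp only [sq]
  linarith

lemma mixFun_sum_sq (j k : Fin D) (hjk : j ≠ k) (z : ℂ) (hz : ‖z‖ = 1)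
    (φ : EuclideanSpace ℂ (Fin D)) (f : ℝ → ℝ)
    (hf : f (‖mixFun j k z φ j‖ ^ 2) + f (‖mixFun j k z φ k‖ ^ 2)
        = f (‖φ j‖ ^ 2) + f (‖φ k‖ ^ 2)) :
    ∑ i, f (‖mixFun j k z φ i‖ ^ 2) = ∑ i, f (‖φ i‖ ^ 2) := by
  rw [← Finset.add_sum_erase _ _ (Finset.mem_univ j),
    ← Finset.add_sum_erase _ (fun i => f (‖φ i‖^2)) (Finset.mem_univ j),
    ← Finset.add_sum_erase _ _ (Finset.mem_erase.2 ⟨Ne.symm hjk, Finset.mem_univ k⟩),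
    ← Finset.add_sum_erase _ (fun i => f (‖φ i‖^2)) (Finset.mem_erase.2 ⟨Ne.symm hjk, Finset.mem_univ k⟩)]
  have hrest : ∀ i ∈ (Finset.univ.erase j).erase k,
      f (‖mixFun j k z φ i‖^2) = f (‖φ i‖^2) := by
    intro i hi
    rcases Finset.mem_erase.1 hi with ⟨hik, hi2⟩
    rcases Finset.mem_erase.1 hi2 with ⟨hij, _⟩
    rw [mixFun_apply_other j k z φ hij hik]
  rw [Finset.sum_congr rfl hrest, ← add_assoc, ← add_assoc, hf]

lemma mix_left_inv (j k : Fin D) (hjk : j ≠ k) (z : ℂ) (hz : ‖z‖ = 1)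
    (φ : EuclideanSpace ℂ (Fin D)) : mixInv j k z (mixFun j k z φ) = φ := by
  have hzz := conj_mul_self_one hz
  ext i
  by_cases h1 : i = j
  · rw [h1, mixInv_apply_j, mixFun_apply_j, mixFun_apply_k j k hjk]
    field_simp
    linear_combination (-(φ j)) * sqrt2_sq
  by_cases h2 : i = k
  · rw [h2, mixInv_apply_k j k hjk, mixFun_apply_j, mixFun_apply_k j k hjk]
    field_simp
    linear_combination (2 * φ k) * hzz - φ k * sqrt2_sq
  · rw [mixInv_apply_other j k z _ h1 h2, mixFun_apply_other j k z _ h1 h2]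

lemma mix_right_inv (j k : Fin D) (hjk : j ≠ k) (z : ℂ) (hz : ‖z‖ = 1)
    (ψ : EuclideanSpace ℂ (Fin D)) : mixFun j k z (mixInv j k z ψ) = ψ := by
  have hzz := conj_mul_self_one hz
  ext i
  by_cases h1 : i = j
  · rw [h1, mixFun_apply_j, mixInv_apply_j, mixInv_apply_k j k hjk]
    field_simp
    linear_combination (ψ j - ψ k) * hzz - ψ j * sqrt2_sq
  by_cases h2 : i = k
  · rw [h2, mixFun_apply_k j k hjk, mixInv_apply_j, mixInv_apply_k j k hjk]
    field_simp
    linear_combination (ψ k - ψ j) * hzz - ψ k * sqrt2_sq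
  · rw [mixFun_apply_other j k z _ h1 h2, mixInv_apply_other j k z _ h1 h2]

noncomputable def mixU (j k : Fin D) (hjk : j ≠ k) (z : ℂ) (hz : ‖z‖ = 1) :
    EuclideanSpace ℂ (Fin D) ≃ₗᵢ[ℂ] EuclideanSpace ℂ (Fin D) where
  toFun := mixFun j k z
  invFun := mixInv j k z
  map_add' φ ψ := by
    ext i
    simp only [mixFun, PiLp.add_apply, WithLp.ofLp_toLp]
    split_ifs <;> ring
  map_smul' c φ := by
    ext i
    simp only [mixFun, PiLp.smul_apply, smul_eq_mul, RingHom.id_apply, WithLp.ofLp_toLp]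
    split_ifs <;> ring
  left_inv φ := mix_left_inv j k hjk z hz φ
  right_inv ψ := mix_right_inv j k hjk z hz ψ
  norm_map' φ := by
    rw [EuclideanSpace.norm_eq, EuclideanSpace.norm_eq]
    exact congrArg Real.sqrt
      (mixFun_sum_sq j k hjk z hz φ id (by
        simp only [id]
        rw [mixFun_apply_j, mixFun_apply_k j k hjk, two_norm_identity z (φ j) (φ k) hz]))

noncomputable def permU (e : Fin D ≃ Fin D) :
    EuclideanSpace ℂ (Fin D) ≃ₗᵢ[ℂ] EuclideanSpace ℂ (Fin D) :=
  LinearIsometryEquiv.piLpCongrLeft 2 ℂ ℂ e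

lemma permU_apply (e : Fin D ≃ Fin D) (φ : EuclideanSpace ℂ (Fin D)) (i : Fin D) :
    permU e φ i = φ (e.symm i) := by
  simp [permU, LinearIsometryEquiv.piLpCongrLeft_apply, Equiv.piCongrLeft'_apply]

lemma mixU_apply (j k : Fin D) (hjk : j ≠ k) (z : ℂ) (hz : ‖z‖ = 1)
    (φ : EuclideanSpace ℂ (Fin D)) : mixU j k hjk z hz φ = mixFun j k z φ := rfl

lemma four_norm_identity (u v : ℂ) :
    ‖(u + 1 * v) / (Real.sqrt 2 : ℂ)‖ ^ 4 + ‖(u + (-1) * v) / (Real.sqrt 2 : ℂ)‖ ^ 4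
      + ‖(u + Complex.I * v) / (Real.sqrt 2 : ℂ)‖ ^ 4
      + ‖(u + (-Complex.I) * v) / (Real.sqrt 2 : ℂ)‖ ^ 4
      = ‖u‖ ^ 4 + ‖v‖ ^ 4 + 4 * (‖u‖ ^ 2 * ‖v‖ ^ 2) := by
  have h2 : ‖((Real.sqrt 2 : ℝ) : ℂ)‖ = Real.sqrt 2 := by
    simp [Complex.norm_real, Real.sqrt_nonneg, abs_of_nonneg]
  have hs : Real.sqrt 2 * Real.sqrt 2 = 2 := Real.mul_self_sqrt (by norm_num)
  have hnsq : ∀ w : ℂ, ‖w‖ ^ 2 = Complex.normSq w := by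
    intro w; rw [Complex.sq_norm]
  have hw : ∀ w : ℂ, ‖w / (Real.sqrt 2 : ℂ)‖ ^ 4 = (Complex.normSq w)^2 / 4 := by
    intro w
    rw [norm_div, h2, div_pow]
    rw [show ‖w‖ ^ 4 = (‖w‖^2)^2 by ring, show Real.sqrt 2 ^ 4 = (Real.sqrt 2 * Real.sqrt 2)^2 by ring, hs, hnsq]
    norm_num
  rw [hw, hw, hw, hw, show ‖u‖^4 = (‖u‖^2)^2 by ring, show ‖v‖^4 = (‖v‖^2)^2 by ring,
    hnsq, hnsq]
  simp only [Complex.normSq_apply, Complex.add_re, Complex.add_im, Complex.mul_re,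
    Complex.mul_im, Complex.I_re, Complex.I_im, Complex.neg_re, Complex.neg_im,
    Complex.one_re, Complex.one_im]
  ring

section meas
variable [MeasurableSpace (EuclideanSpace ℂ (Fin D))] [BorelSpace (EuclideanSpace ℂ (Fin D))]
  (μ : Measure (EuclideanSpace ℂ (Fin D)))

lemma integral_comp_isometry
    (hinv : ∀ U : EuclideanSpace ℂ (Fin D) ≃ₗᵢ[ℂ] EuclideanSpace ℂ (Fin D), μ.map U = μ)
    (U : EuclideanSpace ℂ (Fin D) ≃ₗᵢ[ℂ] EuclideanSpace ℂ (Fin D))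
    {g : EuclideanSpace ℂ (Fin D) → ℝ} (hg : AEStronglyMeasurable g μ) :
    ∫ φ, g (U φ) ∂μ = ∫ φ, g φ ∂μ := by
  have hU : Measurable (U : EuclideanSpace ℂ (Fin D) → EuclideanSpace ℂ (Fin D)) :=
    U.continuous.measurable
  have hg' : AEStronglyMeasurable g (μ.map U) := by rw [hinv U]; exact hg
  rw [← integral_map hU.aemeasurable hg', hinv U]

lemma integrable_comp_isometry
    (hinv : ∀ U : EuclideanSpace ℂ (Fin D) ≃ₗᵢ[ℂ] EuclideanSpace ℂ (Fin D), μ.map U = μ)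
    (U : EuclideanSpace ℂ (Fin D) ≃ₗᵢ[ℂ] EuclideanSpace ℂ (Fin D))
    {g : EuclideanSpace ℂ (Fin D) → ℝ} (hgi : Integrable g μ) :
    Integrable (fun φ => g (U φ)) μ :=
  (integrable_map_measure (by rw [hinv U]; exact hgi.aestronglyMeasurable)
    U.continuous.measurable.aemeasurable).mp (by rw [hinv U]; exact hgi)

end meas

theorem effective_dimension_typically_large'
    {D : ℕ} (hD : 1 ≤ D)
    [MeasurableSpace (EuclideanSpace ℂ (Fin D))] [BorelSpace (EuclideanSpace ℂ (Fin D))]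
    (μ : Measure (EuclideanSpace ℂ (Fin D))) [IsProbabilityMeasure μ]
    (hsphere : μ {x : EuclideanSpace ℂ (Fin D) | ‖x‖ ≠ 1} = 0)
    (hinv : ∀ U : EuclideanSpace ℂ (Fin D) ≃ₗᵢ[ℂ] EuclideanSpace ℂ (Fin D), μ.map U = μ)
    (η V : ℝ) (hη : 0 < η) (hV : 0 < V) :
    μ {φ : EuclideanSpace ℂ (Fin D) | Real.exp (η * V) / (D : ℝ) ≤ ∑ j, ‖φ j‖ ^ 4}
      ≤ ENNReal.ofReal (2 * Real.exp (-η * V)) := by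
  have hD0 : (0:ℝ) < D := by exact_mod_cast hD
  let j0 : Fin D := ⟨0, hD⟩
  -- a.e. facts
  have hsae : ∀ᵐ φ ∂μ, ‖φ‖ = 1 := by
    rw [ae_iff]; exact hsphere
  have hsum1 : ∀ᵐ φ ∂μ, ∑ i, ‖φ i‖^2 = 1 := by
    filter_upwards [hsae] with φ h
    have h2 : Real.sqrt (∑ i, ‖φ i‖^2) = 1 := by
      rw [← EuclideanSpace.norm_eq]; exact h
    have h3 : (0:ℝ) ≤ ∑ i, ‖φ i‖^2 := Finset.sum_nonneg fun _ _ => sq_nonneg _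
    nlinarith [Real.sq_sqrt h3]
  have hcont : ∀ i : Fin D, Continuous fun φ : EuclideanSpace ℂ (Fin D) => φ i :=
    fun i => (EuclideanSpace.proj (𝕜 := ℂ) i).continuous
  have hcoord : ∀ (i : Fin D) (φ : EuclideanSpace ℂ (Fin D)), ‖φ‖ = 1 → ‖φ i‖ ≤ 1 := by
    intro i φ h
    rw [← h, EuclideanSpace.norm_eq,
      show ‖φ i‖ = Real.sqrt (‖φ i‖^2) by rw [Real.sqrt_sq (norm_nonneg _)]]
    exact Real.sqrt_le_sqrt (Finset.single_le_sum (f := fun i => ‖φ i‖^2)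
      (fun _ _ => sq_nonneg _) (Finset.mem_univ i))
  -- integrability
  have hm_cont : ∀ i k : Fin D, Continuous fun φ : EuclideanSpace ℂ (Fin D) => ‖φ i‖^2 * ‖φ k‖^2 :=
    fun i k => (((hcont i).norm.pow 2).mul ((hcont k).norm.pow 2))
  have h4_cont : ∀ i : Fin D, Continuous fun φ : EuclideanSpace ℂ (Fin D) => ‖φ i‖^4 :=
    fun i => ((hcont i).norm.pow 4)
  have hm_int : ∀ i k : Fin D, Integrable (fun φ : EuclideanSpace ℂ (Fin D) => ‖φ i‖^2 * ‖φ k‖^2) μ := by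
    intro i k
    refine Integrable.mono' (integrable_const 1) (hm_cont i k).aestronglyMeasurable ?_
    filter_upwards [hsae] with φ h
    have hi := hcoord i φ h; have hk := hcoord k φ h
    rw [Real.norm_eq_abs, abs_of_nonneg (by positivity)]
    have hi2 : ‖φ i‖^2 ≤ 1 := pow_le_one₀ (norm_nonneg _) hi
    have hk2 : ‖φ k‖^2 ≤ 1 := pow_le_one₀ (norm_nonneg _) hk
    nlinarith [pow_nonneg (norm_nonneg (φ i)) 2, pow_nonneg (norm_nonneg (φ k)) 2]
  have h4_int : ∀ i : Fin D, Integrable (fun φ : EuclideanSpace ℂ (Fin D) => ‖φ i‖^4) μ := by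
    intro i
    refine Integrable.mono' (integrable_const 1) (h4_cont i).aestronglyMeasurable ?_
    filter_upwards [hsae] with φ h
    have hi := hcoord i φ h
    rw [Real.norm_eq_abs, abs_of_nonneg (by positivity)]
    exact pow_le_one₀ (norm_nonneg _) hi
  set A := ∫ φ : EuclideanSpace ℂ (Fin D), ‖φ j0‖^4 ∂μ with hA
  -- step 1 : all fourth moments equal
  have step1 : ∀ i : Fin D, ∫ φ : EuclideanSpace ℂ (Fin D), ‖φ i‖^4 ∂μ = A := by
    intro i
    have h := integral_comp_isometry μ hinv (permU (Equiv.swap i j0))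
      (g := fun φ : EuclideanSpace ℂ (Fin D) => ‖φ j0‖^4) (h4_cont j0).aestronglyMeasurable
    rw [hA, ← h]
    refine integral_congr_ae (Filter.Eventually.of_forall fun φ => ?_)
    simp only [permU_apply, Equiv.symm_swap]
    rw [Equiv.swap_apply_right]
  -- step 2 : cross moments
  have step2 : ∀ i k : Fin D, i ≠ k → ∫ φ : EuclideanSpace ℂ (Fin D), ‖φ i‖^2 * ‖φ k‖^2 ∂μ = A/2 := by
    intro i k hik
    have hIz : ∀ (z : ℂ) (hz : ‖z‖ = 1),
        ∫ φ : EuclideanSpace ℂ (Fin D), ‖(φ i + z * φ k) / (Real.sqrt 2 : ℂ)‖^4 ∂μ = A := by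
      intro z hz
      have h := integral_comp_isometry μ hinv (mixU i k hik z hz)
        (g := fun φ : EuclideanSpace ℂ (Fin D) => ‖φ i‖^4) (h4_cont i).aestronglyMeasurable
      rw [← step1 i, ← h]
      refine integral_congr_ae (Filter.Eventually.of_forall fun φ => ?_)
      simp only [mixU_apply, mixFun_apply_j]
    have hIz_int : ∀ (z : ℂ) (hz : ‖z‖ = 1),
        Integrable (fun φ : EuclideanSpace ℂ (Fin D) => ‖(φ i + z * φ k) / (Real.sqrt 2 : ℂ)‖^4) μ := by
      intro z hz
      have h := integrable_comp_isometry μ hinv (mixU i k hik z hz) (h4_int i)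
      refine h.congr (Filter.Eventually.of_forall fun φ => ?_)
      simp only [mixU_apply, mixFun_apply_j]
    have hz1 : ‖(1:ℂ)‖ = 1 := by simp
    have hzm1 : ‖(-1:ℂ)‖ = 1 := by simp
    have hzI : ‖Complex.I‖ = 1 := by simp
    have hzmI : ‖-Complex.I‖ = 1 := by simp
    have hsum : ∫ φ : EuclideanSpace ℂ (Fin D), (‖φ i‖^4 + ‖φ k‖^4 + 4*(‖φ i‖^2 * ‖φ k‖^2)) ∂μ = 4*A := by
      have heq : ∀ φ : EuclideanSpace ℂ (Fin D), ‖φ i‖^4 + ‖φ k‖^4 + 4*(‖φ i‖^2 * ‖φ k‖^2)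
          = ‖(φ i + 1 * φ k) / (Real.sqrt 2 : ℂ)‖^4
            + ‖(φ i + (-1) * φ k) / (Real.sqrt 2 : ℂ)‖^4
            + ‖(φ i + Complex.I * φ k) / (Real.sqrt 2 : ℂ)‖^4
            + ‖(φ i + (-Complex.I) * φ k) / (Real.sqrt 2 : ℂ)‖^4 :=
        fun φ => (four_norm_identity (φ i) (φ k)).symm
      have hi1 := hIz_int 1 hz1
      have hi2 := hIz_int (-1) hzm1
      have hi3 := hIz_int Complex.I hzI
      have hi4 := hIz_int (-Complex.I) hzmI
      have h12 : Integrable (fun φ : EuclideanSpace ℂ (Fin D) =>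
          ‖(φ i + 1 * φ k) / (Real.sqrt 2 : ℂ)‖^4
            + ‖(φ i + (-1) * φ k) / (Real.sqrt 2 : ℂ)‖^4) μ := hi1.add hi2
      have h123 : Integrable (fun φ : EuclideanSpace ℂ (Fin D) =>
          ‖(φ i + 1 * φ k) / (Real.sqrt 2 : ℂ)‖^4
            + ‖(φ i + (-1) * φ k) / (Real.sqrt 2 : ℂ)‖^4
            + ‖(φ i + Complex.I * φ k) / (Real.sqrt 2 : ℂ)‖^4) μ := h12.add hi3
      rw [integral_congr_ae (Filter.Eventually.of_forall heq)]
      rw [integral_add h123 hi4, integral_add h12 hi3, integral_add hi1 hi2,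
        hIz 1 hz1, hIz (-1) hzm1, hIz Complex.I hzI, hIz (-Complex.I) hzmI]
      ring
    have hsplit : ∫ φ : EuclideanSpace ℂ (Fin D), (‖φ i‖^4 + ‖φ k‖^4 + 4*(‖φ i‖^2 * ‖φ k‖^2)) ∂μ
        = A + A + 4 * ∫ φ : EuclideanSpace ℂ (Fin D), ‖φ i‖^2 * ‖φ k‖^2 ∂μ := by
      have ha : Integrable (fun φ : EuclideanSpace ℂ (Fin D) => ‖φ i‖^4 + ‖φ k‖^4) μ :=
        (h4_int i).add (h4_int k)
      have hb : Integrable (fun φ : EuclideanSpace ℂ (Fin D) => 4*(‖φ i‖^2 * ‖φ k‖^2)) μ :=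
        (hm_int i k).const_mul 4
      rw [integral_add ha hb, integral_add (h4_int i) (h4_int k), integral_const_mul,
        step1 i, step1 k]
    rw [hsplit] at hsum
    linarith
  -- step 3 : total sum gives value of A
  have hmval : ∀ i k : Fin D, ∫ φ : EuclideanSpace ℂ (Fin D), ‖φ i‖^2 * ‖φ k‖^2 ∂μ
      = A/2 + (if i = k then A/2 else 0) := by
    intro i k
    by_cases h : i = k
    · subst h
      rw [if_pos rfl]
      rw [show (fun φ : EuclideanSpace ℂ (Fin D) => ‖φ i‖^2 * ‖φ i‖^2) = fun φ : EuclideanSpace ℂ (Fin D) => ‖φ i‖^4 by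
        funext φ; ring]
      rw [step1 i]; ring
    · rw [if_neg h, step2 i k h, add_zero]
  have step3 : (A/2) * (D^2 + D) = 1 := by
    have hint1 : ∫ φ : EuclideanSpace ℂ (Fin D), (∑ i, ∑ k, ‖φ i‖^2 * ‖φ k‖^2) ∂μ = 1 := by
      have heq : ∀ᵐ φ ∂μ, (∑ i, ∑ k, ‖φ i‖^2 * ‖φ k‖^2) = 1 := by
        filter_upwards [hsum1] with φ h
        rw [← Finset.sum_mul_sum, h, mul_one]
      rw [integral_congr_ae heq, integral_const, smul_eq_mul, mul_one, probReal_univ]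
    have hint2 : ∫ φ : EuclideanSpace ℂ (Fin D), (∑ i, ∑ k, ‖φ i‖^2 * ‖φ k‖^2) ∂μ
        = ∑ i : Fin D, ∑ k : Fin D, ∫ φ : EuclideanSpace ℂ (Fin D), ‖φ i‖^2 * ‖φ k‖^2 ∂μ := by
      rw [integral_finset_sum _ (fun i _ => integrable_finset_sum _ (fun k _ => hm_int i k))]
      exact Finset.sum_congr rfl fun i _ => integral_finset_sum _ (fun k _ => hm_int i k)
    rw [hint2] at hint1
    have : ∑ i : Fin D, ∑ k : Fin D, (A/2 + (if i = k then A/2 else 0))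
        = (A/2) * (D^2 + D) := by
      have hrow : ∀ i : Fin D, ∑ k : Fin D, (A/2 + (if i = k then A/2 else 0))
          = D * (A/2) + A/2 := by
        intro i
        rw [Finset.sum_add_distrib, Finset.sum_const, Finset.card_univ, Fintype.card_fin,
          Finset.sum_ite_eq, if_pos (Finset.mem_univ i), nsmul_eq_mul]
      rw [Finset.sum_congr rfl fun i _ => hrow i, Finset.sum_const, Finset.card_univ,
        Fintype.card_fin, nsmul_eq_mul]
      ring
    rw [Finset.sum_congr rfl (fun i _ => Finset.sum_congr rfl fun k _ => hmval i k), this]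
      at hint1
    exact hint1
  have hDA : (D:ℝ) * A = 2 / ((D:ℝ) + 1) := by
    have h1 : (0:ℝ) < (D:ℝ) + 1 := by linarith
    field_simp
    nlinarith [step3]
  -- step 4 : integral of the summed fourth moments
  have hf_int : Integrable (fun φ : EuclideanSpace ℂ (Fin D) => ∑ j, ‖φ j‖^4) μ :=
    integrable_finset_sum _ (fun i _ => h4_int i)
  have hf_val : ∫ φ : EuclideanSpace ℂ (Fin D), (∑ j, ‖φ j‖^4) ∂μ = 2 / ((D:ℝ) + 1) := by
    rw [integral_finset_sum _ (fun i _ => h4_int i),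
      Finset.sum_congr rfl (fun i _ => step1 i), Finset.sum_const, Finset.card_univ,
      Fintype.card_fin, nsmul_eq_mul, hDA]
  -- step 5 : Markov
  set ε := Real.exp (η * V) / (D : ℝ) with hε
  have hε0 : 0 < ε := div_pos (Real.exp_pos _) hD0
  have hmarkov := mul_meas_ge_le_integral_of_nonneg
    (Filter.Eventually.of_forall fun φ : EuclideanSpace ℂ (Fin D) => Finset.sum_nonneg fun i _ =>
      pow_nonneg (norm_nonneg _) 4) hf_int ε
  rw [hf_val] at hmarkov
  set S := {φ : EuclideanSpace ℂ (Fin D) | ε ≤ ∑ j, ‖φ j‖ ^ 4} with hS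
  have hfin : μ S ≠ ⊤ := measure_ne_top μ S
  have htR : (μ S).toReal ≤ 2 * Real.exp (-η * V) := by
    have he := Real.exp_pos (η * V)
    have h1 : (μ S).toReal ≤ (2 / ((D:ℝ) + 1)) / ε := by
      rw [le_div_iff₀ hε0, mul_comm]
      exact hmarkov
    refine h1.trans ?_
    rw [hε, neg_mul, Real.exp_neg, div_le_iff₀ (div_pos he hD0)]
    have h3 : 2 * (Real.exp (η*V))⁻¹ * (Real.exp (η*V)/(D:ℝ)) = 2/(D:ℝ) := by
      field_simp
    rw [h3]
    have h4 : 2/((D:ℝ)+1) ≤ 2/(D:ℝ) := by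
      apply div_le_div_of_nonneg_left (by norm_num) hD0 (by linarith)
    exact h4
  calc μ S = ENNReal.ofReal (μ S).toReal := (ENNReal.ofReal_toReal hfin).symm
    _ ≤ ENNReal.ofReal (2 * Real.exp (-η * V)) := ENNReal.ofReal_le_ofReal htR


/-- With respect to the uniform (unitarily invariant) probability measure `μ` on the unit
sphere of `ℂ^D`, the set of states `φ = (c_1,…,c_D)` with `∑_j |c_j|⁴ ≥ exp(ηV)/D` has
measure at most `2·exp(−ηV)`; equivalently, a random normalized state has effective dimension
`(∑_j |c_j|⁴)⁻¹ ≥ exp(−ηV)·D` with probability at least `1 − 2·exp(−ηV)`. -/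
theorem effective_dimension_typically_large
    {D : ℕ} (hD : 1 ≤ D)
    [MeasurableSpace (EuclideanSpace ℂ (Fin D))] [BorelSpace (EuclideanSpace ℂ (Fin D))]
    (μ : Measure (EuclideanSpace ℂ (Fin D))) [IsProbabilityMeasure μ]
    (hsphere : μ {x : EuclideanSpace ℂ (Fin D) | ‖x‖ ≠ 1} = 0)
    (hinv : ∀ U : EuclideanSpace ℂ (Fin D) ≃ₗᵢ[ℂ] EuclideanSpace ℂ (Fin D), μ.map U = μ)
    (η V : ℝ) (hη : 0 < η) (hV : 0 < V) :
    μ {φ : EuclideanSpace ℂ (Fin D) | Real.exp (η * V) / (D : ℝ) ≤ ∑ j, ‖φ j‖ ^ 4}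
      ≤ ENNReal.ofReal (2 * Real.exp (-η * V)) :=
  effective_dimension_typically_large' hD μ hsphere hinv η V hη hV
end

section
/- (Sufficient condition for a moderate energy distribution.) Let E be a finite-dimensional complex inner product space, (ψ_j)_{j∈J} an orthonormal family in E with |J| = D ≥ 1, and (ξ_i)_{i=1,…,N} an orthonormal family contained in the span of (ψ_j), with expansions ξ_i = ∑_{j∈J} g_{i,j} ψ_j. Let V > 0, ε > 0, η > ε, and assume that for every i: ∑_{j∈J} |g_{i,j}|⁴ ≤ exp((η−ε)V)/D. Choose α = (α_1,…,α_N) according to the uniform probability measure on the unit sphere of ℂ^N and set φ₀ := ∑_{i=1}^N α_i ξ_i, so that c_j := ⟨ψ_j, φ₀⟩ = ∑_i α_i g_{i,j}. Then with probability at least 1 − 2·exp(−εV) one has ∑_{j∈J} |c_j|⁴ ≤ exp(ηV)/D, i.e. the effective dimension of φ₀ satisfies D_eff := (∑_j |c_j|⁴)^{−1} ≥ exp(−ηV)·D. -/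
open MeasureTheory
set_option linter.unusedSectionVars false
open scoped ComplexInnerProductSpace
set_option maxHeartbeats 1000000


section medaux2

variable {N : ℕ}

lemma med_basis_single [NeZero N] {x : EuclideanSpace ℂ (Fin N)} (hx : ‖x‖ = 1) :
    ∃ b : OrthonormalBasis (Fin N) ℂ (EuclideanSpace ℂ (Fin N)), b 0 = x := by
  have hON : Orthonormal ℂ (({0} : Set (Fin N)).restrict (fun _ => x)) := by
    constructor
    · intro i; exact hx
    · rintro ⟨i, hi⟩ ⟨j, hj⟩ hij
      simp only [Set.mem_singleton_iff] at hi hj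
      exact absurd (Subtype.ext (hi.trans hj.symm)) hij
  obtain ⟨b, hb⟩ := hON.exists_orthonormalBasis_extension_of_card_eq
    (by simp [finrank_euclideanSpace_fin])
  exact ⟨b, hb 0 (by simp)⟩

lemma med_basis_pair [NeZero N] (h01 : (0 : Fin N) ≠ 1) {x y : EuclideanSpace ℂ (Fin N)}
    (hx : ‖x‖ = 1) (hy : ‖y‖ = 1) (hxy : ⟪x, y⟫ = 0) :
    ∃ b : OrthonormalBasis (Fin N) ℂ (EuclideanSpace ℂ (Fin N)), b 0 = x ∧ b 1 = y := by
  classical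
  have hyx : ⟪y, x⟫ = 0 := by rw [← inner_conj_symm, hxy, map_zero]
  have hON : Orthonormal ℂ
      (({0, 1} : Set (Fin N)).restrict (fun t => if t = 0 then x else y)) := by
    constructor
    · rintro ⟨i, hi⟩
      rcases hi with rfl | hi
      · exact hx
      · simp only [Set.mem_singleton_iff] at hi; subst hi
        show ‖(if (1 : Fin N) = 0 then x else y)‖ = 1
        rw [if_neg (Ne.symm h01)]
        exact hy
    · rintro ⟨i, hi⟩ ⟨j, hj⟩ hij
      have hij' : i ≠ j := fun h => hij (Subtype.ext h)
      simp only [Set.mem_insert_iff, Set.mem_singleton_iff] at hi hj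
      rcases hi with rfl | rfl <;> rcases hj with rfl | rfl
      · exact absurd rfl hij'
      · show ⟪(if (0 : Fin N) = 0 then x else y), (if (1 : Fin N) = 0 then x else y)⟫ = 0
        rw [if_pos (rfl : (0 : Fin N) = 0), if_neg (Ne.symm h01)]
        exact hxy
      · show ⟪(if (1 : Fin N) = 0 then x else y), (if (0 : Fin N) = 0 then x else y)⟫ = 0
        rw [if_pos (rfl : (0 : Fin N) = 0), if_neg (Ne.symm h01)]
        exact hyx
      · exact absurd rfl hij'
  obtain ⟨b, hb⟩ := hON.exists_orthonormalBasis_extension_of_card_eq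
    (by simp [finrank_euclideanSpace_fin])
  refine ⟨b, ?_, ?_⟩
  · simpa using hb 0 (by simp)
  · have := hb 1 (by simp)
    rw [if_neg (Ne.symm h01)] at this
    exact this

/-- the rotated vectors -/
noncomputable def medU [NeZero N] (z : ℂ) : EuclideanSpace ℂ (Fin N) :=
  (((Real.sqrt 2)⁻¹ : ℝ) : ℂ) •
    (EuclideanSpace.single (0 : Fin N) (1:ℂ) + z • EuclideanSpace.single (1 : Fin N) (1:ℂ))

lemma med_u_inner [NeZero N] (z : ℂ) (v : EuclideanSpace ℂ (Fin N)) :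
    ⟪medU z, v⟫ = (((Real.sqrt 2)⁻¹ : ℝ) : ℂ) * (v 0 + (starRingEnd ℂ) z * v 1) := by
  simp only [medU, inner_smul_left, inner_add_left, EuclideanSpace.inner_single_left,
    Complex.conj_ofReal, map_one, one_mul]

lemma med_ne_one [NeZero N] (h01 : (0 : Fin N) ≠ 1) : N ≠ 1 := by
  rintro rfl
  exact h01 (Subsingleton.elim _ _)

lemma med_u_coord0 [NeZero N] (h01 : (0 : Fin N) ≠ 1) (z : ℂ) :
    (medU z : EuclideanSpace ℂ (Fin N)) 0 = (((Real.sqrt 2)⁻¹ : ℝ) : ℂ) := by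
  simp [medU, EuclideanSpace.single_apply, if_neg h01, PiLp.smul_apply, PiLp.add_apply,
    med_ne_one h01]

lemma med_u_coord1 [NeZero N] (h01 : (0 : Fin N) ≠ 1) (z : ℂ) :
    (medU z : EuclideanSpace ℂ (Fin N)) 1 = (((Real.sqrt 2)⁻¹ : ℝ) : ℂ) * z := by
  simp [medU, EuclideanSpace.single_apply, if_neg (Ne.symm h01), PiLp.smul_apply,
    PiLp.add_apply, med_ne_one h01]

lemma med_sqrt_sq : (((Real.sqrt 2)⁻¹ : ℝ) : ℂ) * (((Real.sqrt 2)⁻¹ : ℝ) : ℂ) = (1/2 : ℂ) := by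
  have h : ((Real.sqrt 2)⁻¹ : ℝ) * ((Real.sqrt 2)⁻¹ : ℝ) = 1/2 := by
    rw [← mul_inv]
    rw [← Real.sqrt_mul_self (by norm_num : (0:ℝ) ≤ 2)]
    norm_num
  calc (((Real.sqrt 2)⁻¹ : ℝ) : ℂ) * (((Real.sqrt 2)⁻¹ : ℝ) : ℂ)
      = (((Real.sqrt 2)⁻¹ * (Real.sqrt 2)⁻¹ : ℝ) : ℂ) := by push_cast; ring
    _ = (1/2 : ℂ) := by rw [h]; norm_num

lemma med_u_norm [NeZero N] (h01 : (0 : Fin N) ≠ 1) {z : ℂ} (hz : ‖z‖ = 1) :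
    ‖(medU z : EuclideanSpace ℂ (Fin N))‖ = 1 := by
  have h := med_u_inner (N := N) z (medU z)
  rw [med_u_coord0 h01, med_u_coord1 h01] at h
  have hzz : (starRingEnd ℂ) z * z = 1 := by
    rw [Complex.conj_mul']
    norm_cast
    rw [hz]; norm_num
  have h2 : ⟪(medU z : EuclideanSpace ℂ (Fin N)), medU z⟫ = 1 := by
    rw [h]
    have e : (((Real.sqrt 2)⁻¹:ℝ):ℂ) * ((((Real.sqrt 2)⁻¹:ℝ):ℂ) +
        (starRingEnd ℂ) z * ((((Real.sqrt 2)⁻¹:ℝ):ℂ) * z)) =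
        ((((Real.sqrt 2)⁻¹:ℝ):ℂ) * (((Real.sqrt 2)⁻¹:ℝ):ℂ)) * (1 + (starRingEnd ℂ) z * z) := by
      ring
    rw [e, med_sqrt_sq, hzz]
    norm_num
  have h3 := inner_self_eq_norm_sq (𝕜 := ℂ) (medU z : EuclideanSpace ℂ (Fin N))
  rw [h2] at h3
  have h4 : (‖(medU z : EuclideanSpace ℂ (Fin N))‖ : ℝ)^2 = 1 := by
    rw [← h3]
    simp
  nlinarith [norm_nonneg (medU z : EuclideanSpace ℂ (Fin N))]

lemma med_u_orth [NeZero N] (h01 : (0 : Fin N) ≠ 1) {z : ℂ} (hz : ‖z‖ = 1) :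
    ⟪(medU z : EuclideanSpace ℂ (Fin N)), medU (-z)⟫ = 0 := by
  have h := med_u_inner (N := N) z (medU (-z))
  rw [med_u_coord0 h01, med_u_coord1 h01] at h
  have hzz : (starRingEnd ℂ) z * z = 1 := by
    rw [Complex.conj_mul']
    norm_cast
    rw [hz]; norm_num
  rw [h]
  have e : (((Real.sqrt 2)⁻¹:ℝ):ℂ) * ((((Real.sqrt 2)⁻¹:ℝ):ℂ) +
      (starRingEnd ℂ) z * ((((Real.sqrt 2)⁻¹:ℝ):ℂ) * (-z))) =
      ((((Real.sqrt 2)⁻¹:ℝ):ℂ) * (((Real.sqrt 2)⁻¹:ℝ):ℂ)) * (1 - (starRingEnd ℂ) z * z) := by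
    ring
  rw [e, med_sqrt_sq, hzz]
  norm_num

end medaux2

section medaux

variable {N : ℕ} [MeasurableSpace (EuclideanSpace ℂ (Fin N))]
  [BorelSpace (EuclideanSpace ℂ (Fin N))]
  {μ : Measure (EuclideanSpace ℂ (Fin N))} [IsProbabilityMeasure μ]

lemma med_integral_comp
    (hinv : ∀ U : EuclideanSpace ℂ (Fin N) ≃ₗᵢ[ℂ] EuclideanSpace ℂ (Fin N), μ.map U = μ)
    (U : EuclideanSpace ℂ (Fin N) ≃ₗᵢ[ℂ] EuclideanSpace ℂ (Fin N))
    {F : EuclideanSpace ℂ (Fin N) → ℝ} (hF : AEStronglyMeasurable F μ) :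
    ∫ a, F (U a) ∂μ = ∫ a, F a ∂μ := by
  have h := hinv U
  calc ∫ a, F (U a) ∂μ = ∫ a, F a ∂(μ.map U) :=
        (integral_map U.continuous.measurable.aemeasurable (by rw [h]; exact hF)).symm
    _ = ∫ a, F a ∂μ := by rw [h]

lemma med_ae_norm_one (hsphere : μ {a : EuclideanSpace ℂ (Fin N) | ‖a‖ ≠ 1} = 0) :
    ∀ᵐ a ∂μ, ‖a‖ = 1 := by
  rw [MeasureTheory.ae_iff]; exact hsphere

lemma med_integrable (hsphere : μ {a : EuclideanSpace ℂ (Fin N) | ‖a‖ ≠ 1} = 0)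
    {F : EuclideanSpace ℂ (Fin N) → ℝ} (hF : Continuous F) {C : ℝ}
    (hC : ∀ a : EuclideanSpace ℂ (Fin N), ‖a‖ = 1 → |F a| ≤ C) : Integrable F μ := by
  refine Integrable.mono' (integrable_const C) hF.aestronglyMeasurable ?_
  filter_upwards [med_ae_norm_one hsphere] with a ha
  simpa [Real.norm_eq_abs] using hC a ha

lemma med_coord_le (a : EuclideanSpace ℂ (Fin N)) (i : Fin N) : ‖a i‖ ≤ ‖a‖ := by
  have h2 : ‖a i‖^2 ≤ ‖a‖^2 := by
    rw [EuclideanSpace.norm_eq, Real.sq_sqrt (by positivity)]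
    exact Finset.single_le_sum (f := fun j => ‖a j‖^2) (fun j _ => by positivity)
      (Finset.mem_univ i)
  nlinarith [norm_nonneg (a i), norm_nonneg a]

lemma med_sum_sq_coords (a : EuclideanSpace ℂ (Fin N)) : ∑ i, ‖a i‖^2 = ‖a‖^2 := by
  rw [EuclideanSpace.norm_eq, Real.sq_sqrt (by positivity)]

/-- permutation invariance for 4th moment of one coordinate -/
lemma med_P_diag
    (hinv : ∀ U : EuclideanSpace ℂ (Fin N) ≃ₗᵢ[ℂ] EuclideanSpace ℂ (Fin N), μ.map U = μ)
    [NeZero N] (i : Fin N) :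
    ∫ a, ‖a i‖^2 * ‖a i‖^2 ∂μ = ∫ a, ‖a 0‖^2 * ‖a 0‖^2 ∂μ := by
  classical
  set σ : Fin N ≃ Fin N := Equiv.swap 0 i with hσ
  set U := LinearIsometryEquiv.piLpCongrLeft 2 ℂ ℂ σ.symm with hU
  have hF : Continuous fun a : EuclideanSpace ℂ (Fin N) => ‖a i‖^2 * ‖a i‖^2 := by
    have := (PiLp.continuous_apply (p := 2) (β := fun _ : Fin N => ℂ) i)
    fun_prop
  have key : ∀ a : EuclideanSpace ℂ (Fin N), ‖(U a) i‖^2 * ‖(U a) i‖^2 = ‖a 0‖^2 * ‖a 0‖^2 := by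
    intro a
    have : (U a) i = a 0 := by
      rw [hU, LinearIsometryEquiv.piLpCongrLeft_apply, Equiv.piCongrLeft'_apply,
        Equiv.symm_symm, show σ i = 0 from Equiv.swap_apply_right 0 i]
    rw [this]
  calc ∫ a, ‖a i‖^2 * ‖a i‖^2 ∂μ
      = ∫ a, ‖(U a) i‖^2 * ‖(U a) i‖^2 ∂μ := (med_integral_comp hinv U hF.aestronglyMeasurable).symm
    _ = ∫ a, ‖a 0‖^2 * ‖a 0‖^2 ∂μ := by simp only [key]

lemma med_P_off
    (hinv : ∀ U : EuclideanSpace ℂ (Fin N) ≃ₗᵢ[ℂ] EuclideanSpace ℂ (Fin N), μ.map U = μ)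
    [NeZero N] (h01 : (0 : Fin N) ≠ 1) {i k : Fin N} (hik : i ≠ k) :
    ∫ a, ‖a i‖^2 * ‖a k‖^2 ∂μ = ∫ a, ‖a 0‖^2 * ‖a 1‖^2 ∂μ := by
  classical
  set τ : Fin N ≃ Fin N := Equiv.swap 0 i with hτ
  set ρ : Fin N ≃ Fin N := τ.trans (Equiv.swap 1 (τ k)) with hρ
  have h1 : τ i = 0 := Equiv.swap_apply_right 0 i
  have h2 : τ k ≠ 0 := fun h => hik (τ.injective (h.trans h1.symm)).symm
  have hρi : ρ i = 0 := by
    show (Equiv.swap 1 (τ k)) (τ i) = 0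
    rw [h1]
    exact Equiv.swap_apply_of_ne_of_ne h01 (Ne.symm h2)
  have hρk : ρ k = 1 := by
    show (Equiv.swap 1 (τ k)) (τ k) = 1
    exact Equiv.swap_apply_right _ _
  set U := LinearIsometryEquiv.piLpCongrLeft 2 ℂ ℂ ρ.symm with hU
  have hF : Continuous fun a : EuclideanSpace ℂ (Fin N) => ‖a i‖^2 * ‖a k‖^2 := by
    have hc1 := (PiLp.continuous_apply (p := 2) (β := fun _ : Fin N => ℂ) i)
    have hc2 := (PiLp.continuous_apply (p := 2) (β := fun _ : Fin N => ℂ) k)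
    fun_prop
  have key : ∀ a : EuclideanSpace ℂ (Fin N),
      ‖(U a) i‖^2 * ‖(U a) k‖^2 = ‖a 0‖^2 * ‖a 1‖^2 := by
    intro a
    have hi : (U a) i = a 0 := by
      rw [hU, LinearIsometryEquiv.piLpCongrLeft_apply, Equiv.piCongrLeft'_apply,
        Equiv.symm_symm, hρi]
    have hk : (U a) k = a 1 := by
      rw [hU, LinearIsometryEquiv.piLpCongrLeft_apply, Equiv.piCongrLeft'_apply,
        Equiv.symm_symm, hρk]
    rw [hi, hk]
  calc ∫ a, ‖a i‖^2 * ‖a k‖^2 ∂μ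
      = ∫ a, ‖(U a) i‖^2 * ‖(U a) k‖^2 ∂μ := (med_integral_comp hinv U hF.aestronglyMeasurable).symm
    _ = _ := by simp only [key]

end medaux

lemma med_quad_key (x y : ℂ) :
    ‖x+y‖^2*‖x+y‖^2 + ‖x-y‖^2*‖x-y‖^2 + ‖x-Complex.I*y‖^2*‖x-Complex.I*y‖^2
      + ‖x+Complex.I*y‖^2*‖x+Complex.I*y‖^2
      = 4*((‖x‖^2*‖x‖^2 + ‖y‖^2*‖y‖^2) + 4*(‖x‖^2*‖y‖^2)) := by
  have h : ∀ z : ℂ, ‖z‖^2 = Complex.normSq z := fun z => by rw [← Complex.sq_norm]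
  simp only [h, Complex.normSq_apply, Complex.add_re, Complex.add_im, Complex.sub_re,
    Complex.sub_im, Complex.mul_re, Complex.mul_im, Complex.I_re, Complex.I_im]
  ring

lemma med_cnorm : ‖(((Real.sqrt 2)⁻¹:ℝ):ℂ)‖ = (Real.sqrt 2)⁻¹ := by
  rw [Complex.norm_real, Real.norm_eq_abs, abs_of_nonneg (by positivity)]

lemma med_c2 : ((Real.sqrt 2)⁻¹:ℝ)^2 = 1/2 := by
  rw [inv_pow, Real.sq_sqrt (by norm_num : (0:ℝ) ≤ 2)]; norm_num

section medrot

variable {N : ℕ} [MeasurableSpace (EuclideanSpace ℂ (Fin N))]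
  [BorelSpace (EuclideanSpace ℂ (Fin N))]
  {μ : Measure (EuclideanSpace ℂ (Fin N))} [IsProbabilityMeasure μ]

lemma med_rot (hsphere : μ {a : EuclideanSpace ℂ (Fin N) | ‖a‖ ≠ 1} = 0)
    (hinv : ∀ U : EuclideanSpace ℂ (Fin N) ≃ₗᵢ[ℂ] EuclideanSpace ℂ (Fin N), μ.map U = μ)
    [NeZero N] (h01 : (0 : Fin N) ≠ 1) :
    ∫ a, ‖a 0‖^2*‖a 0‖^2 ∂μ = 2 * ∫ a, ‖a 0‖^2*‖a 1‖^2 ∂μ := by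
  obtain ⟨b1, hb10, hb11⟩ := med_basis_pair h01
    (med_u_norm h01 (by norm_num : ‖(1:ℂ)‖ = 1))
    (med_u_norm h01 (by norm_num : ‖(-1:ℂ)‖ = 1))
    (med_u_orth h01 (by norm_num : ‖(1:ℂ)‖ = 1))
  obtain ⟨b2, hb20, hb21⟩ := med_basis_pair h01
    (med_u_norm h01 (by simp : ‖Complex.I‖ = 1))
    (med_u_norm h01 (by simp : ‖-Complex.I‖ = 1))
    (med_u_orth h01 (by simp : ‖Complex.I‖ = 1))
  have hcont : ∀ i : Fin N, Continuous fun a : EuclideanSpace ℂ (Fin N) => a i :=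
    fun i => PiLp.continuous_apply (p := 2) (β := fun _ : Fin N => ℂ) i
  have hFik : ∀ i k : Fin N, Continuous fun a : EuclideanSpace ℂ (Fin N) => ‖a i‖^2*‖a k‖^2 := by
    intro i k
    have h1 := hcont i
    have h2 := hcont k
    fun_prop
  have hIik : ∀ i k : Fin N, Integrable (fun a : EuclideanSpace ℂ (Fin N) => ‖a i‖^2 * ‖a k‖^2) μ := by
    intro i k
    refine med_integrable hsphere (hFik i k) (C := 1) ?_
    intro a ha
    have h1 : ‖a i‖ ≤ 1 := ha ▸ med_coord_le a i
    have h2 : ‖a k‖ ≤ 1 := ha ▸ med_coord_le a k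
    have n1 := norm_nonneg (a i); have n2 := norm_nonneg (a k)
    have p1 : ‖a i‖^2 ≤ 1 := by nlinarith
    have p2 : ‖a k‖^2 ≤ 1 := by nlinarith
    have q1 : (0:ℝ) ≤ ‖a i‖^2 := by positivity
    rw [abs_of_nonneg (by positivity)]
    nlinarith [mul_nonneg q1 (sub_nonneg.mpr p2)]
  have hBint : ∀ (b : OrthonormalBasis (Fin N) ℂ (EuclideanSpace ℂ (Fin N))) (i : Fin N),
      Integrable (fun a => ‖(b.repr a) i‖^2 * ‖(b.repr a) i‖^2) μ := by
    intro b i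
    have hc : Continuous fun a : EuclideanSpace ℂ (Fin N) => (b.repr a) i :=
      (hcont i).comp b.repr.continuous
    refine med_integrable hsphere (by fun_prop) (C := 1) ?_
    intro a ha
    have h1 : ‖(b.repr a) i‖ ≤ 1 := by
      have h := med_coord_le (b.repr a) i
      rwa [b.repr.norm_map, ha] at h
    have n1 := norm_nonneg ((b.repr a) i)
    have p1 : ‖(b.repr a) i‖^2 ≤ 1 := by nlinarith
    have q1 : (0:ℝ) ≤ ‖(b.repr a) i‖^2 := by positivity
    rw [abs_of_nonneg (by positivity)]
    nlinarith [mul_nonneg q1 (sub_nonneg.mpr p1)]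
  have hBeq : ∀ (b : OrthonormalBasis (Fin N) ℂ (EuclideanSpace ℂ (Fin N))) (i : Fin N),
      ∫ a, ‖(b.repr a) i‖^2*‖(b.repr a) i‖^2 ∂μ = ∫ a, ‖a 0‖^2*‖a 0‖^2 ∂μ := by
    intro b i
    have h := med_integral_comp hinv b.repr
      (F := fun a => ‖a i‖^2*‖a i‖^2) (hFik i i).aestronglyMeasurable
    exact h.trans (med_P_diag hinv i)
  have hpt : ∀ a : EuclideanSpace ℂ (Fin N),
      (‖(b1.repr a) 0‖^2*‖(b1.repr a) 0‖^2 + ‖(b1.repr a) 1‖^2*‖(b1.repr a) 1‖^2)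
      + (‖(b2.repr a) 0‖^2*‖(b2.repr a) 0‖^2 + ‖(b2.repr a) 1‖^2*‖(b2.repr a) 1‖^2)
      = (‖a 0‖^2*‖a 0‖^2 + ‖a 1‖^2*‖a 1‖^2) + 4*(‖a 0‖^2*‖a 1‖^2) := by
    intro a
    have e10 : (b1.repr a) 0 = (((Real.sqrt 2)⁻¹:ℝ):ℂ) * (a 0 + a 1) := by
      rw [b1.repr_apply_apply, hb10, med_u_inner]
      simp
    have e11 : (b1.repr a) 1 = (((Real.sqrt 2)⁻¹:ℝ):ℂ) * (a 0 - a 1) := by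
      rw [b1.repr_apply_apply, hb11, med_u_inner]
      simp only [map_neg, map_one]
      ring
    have e20 : (b2.repr a) 0 = (((Real.sqrt 2)⁻¹:ℝ):ℂ) * (a 0 - Complex.I * a 1) := by
      rw [b2.repr_apply_apply, hb20, med_u_inner]
      simp only [Complex.conj_I]
      ring
    have e21 : (b2.repr a) 1 = (((Real.sqrt 2)⁻¹:ℝ):ℂ) * (a 0 + Complex.I * a 1) := by
      rw [b2.repr_apply_apply, hb21, med_u_inner]
      simp only [map_neg, Complex.conj_I]
      ring
    rw [e10, e11, e20, e21]
    simp only [norm_mul, med_cnorm, mul_pow, med_c2]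
    have hk := med_quad_key (a 0) (a 1)
    linear_combination (1/4 : ℝ) * hk
  have hL : ∫ a, ((‖(b1.repr a) 0‖^2*‖(b1.repr a) 0‖^2 + ‖(b1.repr a) 1‖^2*‖(b1.repr a) 1‖^2)
      + (‖(b2.repr a) 0‖^2*‖(b2.repr a) 0‖^2 + ‖(b2.repr a) 1‖^2*‖(b2.repr a) 1‖^2)) ∂μ
      = 4 * ∫ a, ‖a 0‖^2*‖a 0‖^2 ∂μ := by
    have hI1 : Integrable (fun a : EuclideanSpace ℂ (Fin N) =>
        ‖(b1.repr a) 0‖^2*‖(b1.repr a) 0‖^2 + ‖(b1.repr a) 1‖^2*‖(b1.repr a) 1‖^2) μ :=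
      (hBint b1 0).add (hBint b1 1)
    have hI2 : Integrable (fun a : EuclideanSpace ℂ (Fin N) =>
        ‖(b2.repr a) 0‖^2*‖(b2.repr a) 0‖^2 + ‖(b2.repr a) 1‖^2*‖(b2.repr a) 1‖^2) μ :=
      (hBint b2 0).add (hBint b2 1)
    rw [integral_add hI1 hI2,
      integral_add (hBint b1 0) (hBint b1 1), integral_add (hBint b2 0) (hBint b2 1),
      hBeq b1 0, hBeq b1 1, hBeq b2 0, hBeq b2 1]
    ring
  have hR : ∫ a, ((‖a 0‖^2*‖a 0‖^2 + ‖a 1‖^2*‖a 1‖^2) + 4*(‖a 0‖^2*‖a 1‖^2)) ∂μ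
      = 2 * (∫ a, ‖a 0‖^2*‖a 0‖^2 ∂μ) + 4 * ∫ a, ‖a 0‖^2*‖a 1‖^2 ∂μ := by
    have hI1 : Integrable (fun a : EuclideanSpace ℂ (Fin N) =>
        ‖a 0‖^2*‖a 0‖^2 + ‖a 1‖^2*‖a 1‖^2) μ := (hIik 0 0).add (hIik 1 1)
    have hI2 : Integrable (fun a : EuclideanSpace ℂ (Fin N) =>
        4*(‖a 0‖^2*‖a 1‖^2)) μ := (hIik 0 1).const_mul 4
    rw [integral_add hI1 hI2,
      integral_add (hIik 0 0) (hIik 1 1), integral_const_mul, med_P_diag hinv 1]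
    ring
  have hEq : ∫ a, ((‖(b1.repr a) 0‖^2*‖(b1.repr a) 0‖^2 + ‖(b1.repr a) 1‖^2*‖(b1.repr a) 1‖^2)
      + (‖(b2.repr a) 0‖^2*‖(b2.repr a) 0‖^2 + ‖(b2.repr a) 1‖^2*‖(b2.repr a) 1‖^2)) ∂μ
      = ∫ a, ((‖a 0‖^2*‖a 0‖^2 + ‖a 1‖^2*‖a 1‖^2) + 4*(‖a 0‖^2*‖a 1‖^2)) ∂μ :=
    integral_congr_ae (Filter.Eventually.of_forall hpt)
  have hfin := (hL.symm.trans hEq).trans hR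
  linarith

end medrot

section medfinal

variable {N : ℕ} [MeasurableSpace (EuclideanSpace ℂ (Fin N))]
  [BorelSpace (EuclideanSpace ℂ (Fin N))]
  {μ : Measure (EuclideanSpace ℂ (Fin N))} [IsProbabilityMeasure μ]

lemma med_int_ik (hsphere : μ {a : EuclideanSpace ℂ (Fin N) | ‖a‖ ≠ 1} = 0) (i k : Fin N) :
    Integrable (fun a : EuclideanSpace ℂ (Fin N) => ‖a i‖^2 * ‖a k‖^2) μ := by
  have h1 : Continuous fun a : EuclideanSpace ℂ (Fin N) => a i := PiLp.continuous_apply (p := 2) (β := fun _ : Fin N => ℂ) i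
  have h2 : Continuous fun a : EuclideanSpace ℂ (Fin N) => a k := PiLp.continuous_apply (p := 2) (β := fun _ : Fin N => ℂ) k
  refine med_integrable hsphere (by fun_prop) (C := 1) ?_
  intro a ha
  have h1 : ‖a i‖ ≤ 1 := ha ▸ med_coord_le a i
  have h2 : ‖a k‖ ≤ 1 := ha ▸ med_coord_le a k
  have n1 := norm_nonneg (a i); have n2 := norm_nonneg (a k)
  have p1 : ‖a i‖^2 ≤ 1 := by nlinarith
  have p2 : ‖a k‖^2 ≤ 1 := by nlinarith
  have q1 : (0:ℝ) ≤ ‖a i‖^2 := by positivity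
  rw [abs_of_nonneg (by positivity)]
  nlinarith [mul_nonneg q1 (sub_nonneg.mpr p2)]

lemma med_sum_one (hsphere : μ {a : EuclideanSpace ℂ (Fin N) | ‖a‖ ≠ 1} = 0) :
    ∑ i : Fin N, ∑ k : Fin N, ∫ a, ‖a i‖^2 * ‖a k‖^2 ∂μ = 1 := by
  have key : ∀ᵐ a ∂μ, (∑ i : Fin N, ∑ k : Fin N, ‖a i‖^2 * ‖a k‖^2) = (1:ℝ) := by
    filter_upwards [med_ae_norm_one hsphere] with a ha
    have hs : ∑ i : Fin N, ‖a i‖^2 = 1 := by rw [med_sum_sq_coords, ha]; norm_num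
    rw [← Finset.sum_mul_sum, hs, one_mul]
  calc ∑ i : Fin N, ∑ k : Fin N, ∫ a, ‖a i‖^2 * ‖a k‖^2 ∂μ
      = ∑ i : Fin N, ∫ a, ∑ k : Fin N, ‖a i‖^2 * ‖a k‖^2 ∂μ :=
        Finset.sum_congr rfl fun i _ =>
          (integral_finset_sum Finset.univ fun k _ => med_int_ik hsphere i k).symm
    _ = ∫ a, ∑ i : Fin N, ∑ k : Fin N, ‖a i‖^2 * ‖a k‖^2 ∂μ :=
        (integral_finset_sum Finset.univ fun i _ =>
          integrable_finset_sum Finset.univ fun k _ => med_int_ik hsphere i k).symm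
    _ = ∫ _a, (1:ℝ) ∂μ := integral_congr_ae key
    _ = 1 := by simp

lemma med_int_f (hsphere : μ {a : EuclideanSpace ℂ (Fin N) | ‖a‖ ≠ 1} = 0) (v : Fin N → ℂ) :
    Integrable (fun a : EuclideanSpace ℂ (Fin N) => ‖∑ i, a i * v i‖^4) μ := by
  have hsum : Continuous fun a : EuclideanSpace ℂ (Fin N) => ∑ i, a i * v i :=
    continuous_finset_sum _ fun i _ => (PiLp.continuous_apply (p := 2) (β := fun _ : Fin N => ℂ) i).mul continuous_const
  refine med_integrable hsphere ((hsum.norm).pow 4) (C := (∑ i, ‖v i‖)^4) ?_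
  intro a ha
  have hb : ‖∑ i, a i * v i‖ ≤ ∑ i, ‖v i‖ := by
    refine (norm_sum_le _ _).trans (Finset.sum_le_sum fun i _ => ?_)
    rw [norm_mul]
    have h1 : ‖a i‖ ≤ 1 := ha ▸ med_coord_le a i
    nlinarith [norm_nonneg (v i), norm_nonneg (a i)]
  rw [abs_of_nonneg (by positivity)]
  exact pow_le_pow_left₀ (norm_nonneg _) hb 4

lemma med_align
    (hinv : ∀ U : EuclideanSpace ℂ (Fin N) ≃ₗᵢ[ℂ] EuclideanSpace ℂ (Fin N), μ.map U = μ)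
    [NeZero N] (v : Fin N → ℂ) :
    ∫ a, ‖∑ i, a i * v i‖^4 ∂μ = (∑ i, ‖v i‖^2)^2 * ∫ a, ‖a 0‖^4 ∂μ := by
  by_cases hv : ∀ i, v i = 0
  · have h0 : ∀ a : EuclideanSpace ℂ (Fin N), ‖∑ i, a i * v i‖^4 = 0 := by
      intro a; simp [hv]
    simp only [h0]
    simp [hv]
  · push_neg at hv
    obtain ⟨i0, hi0⟩ := hv
    set w : EuclideanSpace ℂ (Fin N) :=
      (WithLp.equiv 2 (Fin N → ℂ)).symm (fun i => (starRingEnd ℂ) (v i)) with hw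
    have hw_apply : ∀ i, w i = (starRingEnd ℂ) (v i) := fun i => rfl
    have hw0 : w ≠ 0 := by
      intro h
      apply hi0
      have h2 : w i0 = 0 := by rw [h]; rfl
      rw [hw_apply] at h2
      simpa using h2
    have hr : (0:ℝ) < ‖w‖ := norm_pos_iff.mpr hw0
    set x : EuclideanSpace ℂ (Fin N) := ((‖w‖⁻¹ : ℝ) : ℂ) • w with hx
    have hxnorm : ‖x‖ = 1 := by
      rw [hx, norm_smul, Complex.norm_real, Real.norm_eq_abs, abs_of_nonneg (by positivity)]
      field_simp
    obtain ⟨b, hb0⟩ := med_basis_single hxnorm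
    have hwx : w = ((‖w‖ : ℝ) : ℂ) • x := by
      rw [hx, smul_smul,
        show ((‖w‖ : ℝ):ℂ) * ((‖w‖⁻¹ : ℝ):ℂ) = (((‖w‖ * ‖w‖⁻¹ : ℝ)):ℂ) by push_cast; ring,
        mul_inv_cancel₀ (ne_of_gt hr)]
      simp
    set U := b.repr.symm with hU
    have key : ∀ a : EuclideanSpace ℂ (Fin N),
        ∑ i, (U a) i * v i = ((‖w‖:ℝ):ℂ) * a 0 := by
      intro a
      have h1 : ∑ i, (U a) i * v i
          = (starRingEnd ℂ) (⟪(U a : EuclideanSpace ℂ (Fin N)), w⟫) := by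
        rw [PiLp.inner_apply, map_sum]
        refine Finset.sum_congr rfl fun i _ => ?_
        simp [hw_apply, map_mul]
        ring
      rw [h1]
      have h2 : ⟪(U a : EuclideanSpace ℂ (Fin N)), w⟫
          = ((‖w‖:ℝ):ℂ) * (starRingEnd ℂ) (a 0) := by
        conv_lhs => rw [hwx]
        rw [inner_smul_right, ← hb0, ← inner_conj_symm, ← OrthonormalBasis.repr_apply_apply,
          hU, LinearIsometryEquiv.apply_symm_apply]
      rw [h2, map_mul, Complex.conj_ofReal]
      simp
    have hsum : Continuous fun a : EuclideanSpace ℂ (Fin N) => ∑ i, a i * v i :=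
      continuous_finset_sum _ fun i _ => (PiLp.continuous_apply (p := 2) (β := fun _ : Fin N => ℂ) i).mul continuous_const
    have hFc : Continuous fun a : EuclideanSpace ℂ (Fin N) => ‖∑ i, a i * v i‖^4 :=
      (hsum.norm).pow 4
    rw [← med_integral_comp hinv U (F := fun a => ‖∑ i, a i * v i‖^4) hFc.aestronglyMeasurable]
    have hpt : ∀ a : EuclideanSpace ℂ (Fin N),
        ‖∑ i, (U a) i * v i‖^4 = (∑ i, ‖v i‖^2)^2 * ‖a 0‖^4 := by
      intro a
      rw [key a, norm_mul, Complex.norm_real, Real.norm_eq_abs, abs_of_nonneg hr.le, mul_pow]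
      congr 1
      have h3 : ∑ i, ‖v i‖^2 = ‖w‖^2 := by
        rw [← med_sum_sq_coords w]
        exact Finset.sum_congr rfl fun i _ => by rw [hw_apply]; simp [RCLike.norm_conj]
      rw [h3]
      ring
    simp only [hpt]
    rw [integral_const_mul]

end medfinal

/-- **Sufficient condition for a moderate energy distribution.**  Let `(ψ_j)_{j∈J}` be an
orthonormal family (`|J| = D ≥ 1`) and `(ξ_i)_{i<N}` an orthonormal family with
`ξ_i = ∑_j g_{i,j} ψ_j` satisfying `∑_j |g_{i,j}|⁴ ≤ exp((η−ε)V)/D` for all `i`.  If the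
coefficient vector `a = (α_1,…,α_N)` is drawn from the uniform (unitarily invariant)
probability measure on the unit sphere of `ℂ^N`, so that `φ₀ = ∑_i α_i ξ_i` has expansion
coefficients `c_j = ∑_i α_i g_{i,j}`, then the bad set where `∑_j |c_j|⁴ > exp(ηV)/D` has
measure at most `2·exp(−εV)`. -/
theorem moderate_energy_distribution_sufficient
    {E : Type*} [NormedAddCommGroup E] [InnerProductSpace ℂ E]
    {J : Type*} [Fintype J] {D : ℕ} (hD : 1 ≤ D) (hcard : Fintype.card J = D)
    (ψ : J → E) (hψ : Orthonormal ℂ ψ)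
    {N : ℕ} (ξ : Fin N → E) (hξ : Orthonormal ℂ ξ)
    (g : Fin N → J → ℂ) (hexp : ∀ i, ξ i = ∑ j, g i j • ψ j)
    (V ε η : ℝ) (hV : 0 < V) (hε : 0 < ε) (hεη : ε < η)
    (hg : ∀ i, ∑ j, ‖g i j‖ ^ 4 ≤ Real.exp ((η - ε) * V) / (D : ℝ))
    [MeasurableSpace (EuclideanSpace ℂ (Fin N))] [BorelSpace (EuclideanSpace ℂ (Fin N))]
    (μ : Measure (EuclideanSpace ℂ (Fin N))) [IsProbabilityMeasure μ]
    (hsphere : μ {a : EuclideanSpace ℂ (Fin N) | ‖a‖ ≠ 1} = 0)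
    (hinv : ∀ U : EuclideanSpace ℂ (Fin N) ≃ₗᵢ[ℂ] EuclideanSpace ℂ (Fin N), μ.map U = μ) :
    μ {a : EuclideanSpace ℂ (Fin N) |
        ¬ (∑ j, ‖∑ i, a i * g i j‖ ^ 4 ≤ Real.exp (η * V) / (D : ℝ))}
      ≤ ENNReal.ofReal (2 * Real.exp (-ε * V)) := by
  classical
  have hD0 : (0:ℝ) < (D:ℝ) := by exact_mod_cast hD
  rcases Nat.eq_zero_or_pos N with hN0 | hNpos
  · exfalso
    subst hN0
    have huniv : {a : EuclideanSpace ℂ (Fin 0) | ‖a‖ ≠ 1} = Set.univ := by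
      ext a
      simp [Subsingleton.elim a (0 : EuclideanSpace ℂ (Fin 0))]
    rw [huniv] at hsphere
    have hone := measure_univ (μ := μ)
    rw [hsphere] at hone
    exact one_ne_zero hone.symm
  have : NeZero N := ⟨hNpos.ne'⟩
  set K := Real.exp ((η - ε) * V) / (D:ℝ) with hK
  set t := Real.exp (η * V) / (D:ℝ) with ht
  have htpos : 0 < t := by rw [ht]; positivity
  set S : EuclideanSpace ℂ (Fin N) → ℝ := fun a => ∑ j, ‖∑ i, a i * g i j‖^4 with hS
  have hSint : Integrable S μ :=
    integrable_finset_sum _ fun j _ => med_int_f hsphere (fun i => g i j)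
  set M := ∫ a : EuclideanSpace ℂ (Fin N), ‖a 0‖^4 ∂μ with hM
  have hM2 : M = ∫ a : EuclideanSpace ℂ (Fin N), ‖a 0‖^2 * ‖a 0‖^2 ∂μ := by
    rw [hM]
    exact integral_congr_ae (Filter.Eventually.of_forall fun a => by ring)
  have hsum1 := med_sum_one (μ := μ) hsphere
  -- value of M
  have hMval : M = 2 / ((N:ℝ) * ((N:ℝ)+1)) := by
    by_cases hN1 : N = 1
    · have hsub : ∀ i : Fin N, i = 0 := by
        intro i
        apply Fin.ext
        have := i.isLt
        omega
      have h00 : ∀ i k : Fin N, (∫ a, ‖a i‖^2 * ‖a k‖^2 ∂μ)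
          = ∫ a : EuclideanSpace ℂ (Fin N), ‖a 0‖^2 * ‖a 0‖^2 ∂μ := by
        intro i k
        rw [hsub i, hsub k]
      have hall : ∑ i : Fin N, ∑ k : Fin N, ∫ a, ‖a i‖^2 * ‖a k‖^2 ∂μ
          = ∫ a : EuclideanSpace ℂ (Fin N), ‖a 0‖^2 * ‖a 0‖^2 ∂μ := by
        rw [Finset.sum_congr rfl (fun i _ => Finset.sum_congr rfl (fun k _ => h00 i k))]
        simp [Finset.sum_const, Finset.card_univ, hN1]
      rw [hall] at hsum1
      rw [hM2, hsum1, hN1]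
      norm_num
    · have hN2 : 2 ≤ N := by omega
      have h01 : (0 : Fin N) ≠ 1 := by
        intro h
        have hv : ((1 : Fin N)).val = 1 := by
          rw [Fin.val_one']
          exact Nat.mod_eq_of_lt hN2
        rw [← h] at hv
        simp at hv
      set p := ∫ a : EuclideanSpace ℂ (Fin N), ‖a 0‖^2 * ‖a 1‖^2 ∂μ with hp
      set q := ∫ a : EuclideanSpace ℂ (Fin N), ‖a 0‖^2 * ‖a 0‖^2 ∂μ with hq
      have hrot : q = 2 * p := med_rot hsphere hinv h01
      have hrow : ∀ i : Fin N, ∑ k : Fin N, ∫ a, ‖a i‖^2 * ‖a k‖^2 ∂μ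
          = q + ((N-1:ℕ):ℝ) * p := by
        intro i
        rw [← Finset.add_sum_erase Finset.univ
          (fun k => ∫ a, ‖a i‖^2 * ‖a k‖^2 ∂μ) (Finset.mem_univ i)]
        congr 1
        · exact med_P_diag hinv i
        · rw [Finset.sum_congr rfl
            (fun k hk => med_P_off hinv h01 (Ne.symm (Finset.mem_erase.mp hk).1)),
            Finset.sum_const, Finset.card_erase_of_mem (Finset.mem_univ i), Finset.card_univ,
            Fintype.card_fin, nsmul_eq_mul]
      rw [Finset.sum_congr rfl (fun i _ => hrow i), Finset.sum_const, Finset.card_univ,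
        Fintype.card_fin, nsmul_eq_mul] at hsum1
      have hcast : ((N-1:ℕ):ℝ) = (N:ℝ) - 1 := by
        rw [Nat.cast_sub (by omega)]
        norm_num
      rw [hcast] at hsum1
      -- hsum1 : (N:ℝ) * (q + ((N:ℝ)-1) * p) = 1
      have hNr : (1:ℝ) ≤ (N:ℝ) := by exact_mod_cast hNpos
      have hne : (N:ℝ) * ((N:ℝ)+1) ≠ 0 := by positivity
      rw [hM2, eq_div_iff hne, hrot]
      nlinarith [hsum1, hrot, sq_nonneg ((N:ℝ))]
  have hMnn : 0 ≤ M := by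
    rw [hMval]
    positivity
  -- integral of S
  have hSval : ∫ a, S a ∂μ = M * ∑ j, (∑ i, ‖g i j‖^2)^2 := by
    calc ∫ a, S a ∂μ = ∑ j, ∫ a, ‖∑ i, a i * g i j‖^4 ∂μ :=
          integral_finset_sum _ fun j _ => med_int_f hsphere (fun i => g i j)
      _ = ∑ j, (∑ i, ‖g i j‖^2)^2 * M :=
          Finset.sum_congr rfl fun j _ => med_align hinv (fun i => g i j)
      _ = M * ∑ j, (∑ i, ‖g i j‖^2)^2 := by rw [Finset.mul_sum]; exact Finset.sum_congr rfl fun j _ => by ring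
  have hbound : ∑ j, (∑ i, ‖g i j‖^2)^2 ≤ (N:ℝ)^2 * K := by
    have h1 : ∀ j, (∑ i, ‖g i j‖^2)^2 ≤ (N:ℝ) * ∑ i, ‖g i j‖^4 := by
      intro j
      have h := sq_sum_le_card_mul_sum_sq (s := (Finset.univ : Finset (Fin N)))
        (f := fun i : Fin N => ‖g i j‖^2)
      have h2 : ∀ i : Fin N, (‖g i j‖^2)^2 = ‖g i j‖^4 := fun i => by ring
      calc (∑ i, ‖g i j‖^2)^2 ≤ (Finset.univ.card : ℝ) * ∑ i, (‖g i j‖^2)^2 := by exact_mod_cast h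
        _ = (N:ℝ) * ∑ i, ‖g i j‖^4 := by
            rw [Finset.card_univ, Fintype.card_fin, Finset.sum_congr rfl fun i _ => h2 i]
    calc ∑ j, (∑ i, ‖g i j‖^2)^2 ≤ ∑ j, (N:ℝ) * ∑ i, ‖g i j‖^4 :=
          Finset.sum_le_sum fun j _ => h1 j
      _ = (N:ℝ) * ∑ i : Fin N, ∑ j, ‖g i j‖^4 := by rw [← Finset.mul_sum, Finset.sum_comm]
      _ ≤ (N:ℝ) * ∑ _i : Fin N, K :=
          mul_le_mul_of_nonneg_left (Finset.sum_le_sum fun i _ => hg i) (Nat.cast_nonneg N)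
      _ = (N:ℝ)^2 * K := by
          rw [Finset.sum_const, Finset.card_univ, Fintype.card_fin, nsmul_eq_mul]
          ring
  have hKnn : 0 ≤ K := by rw [hK]; positivity
  have hSle : ∫ a, S a ∂μ ≤ 2 * K := by
    rw [hSval, hMval]
    have hNr : (1:ℝ) ≤ (N:ℝ) := by exact_mod_cast hNpos
    have hstep : 2 / ((N:ℝ) * ((N:ℝ)+1)) * ∑ j, (∑ i, ‖g i j‖^2)^2
        ≤ 2 / ((N:ℝ) * ((N:ℝ)+1)) * ((N:ℝ)^2 * K) :=
      mul_le_mul_of_nonneg_left hbound (by positivity)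
    refine hstep.trans ?_
    rw [div_mul_eq_mul_div, div_le_iff₀ (by positivity : (0:ℝ) < (N:ℝ) * ((N:ℝ)+1))]
    nlinarith [mul_nonneg hKnn (by positivity : (0:ℝ) ≤ (N:ℝ))]
  -- Markov
  have hSnn : 0 ≤ᵐ[μ] S := Filter.Eventually.of_forall fun a => by
    rw [hS]
    exact Finset.sum_nonneg fun j _ => by positivity
  have hmar := mul_meas_ge_le_integral_of_nonneg hSnn hSint t
  have hKt : 2 * K / t = 2 * Real.exp (-ε * V) := by
    have h1 : K / t = Real.exp (-ε * V) := by
      rw [hK, ht]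
      have hDne : (D:ℝ) ≠ 0 := ne_of_gt hD0
      have h2 : Real.exp ((η-ε)*V) / (D:ℝ) / (Real.exp (η*V) / (D:ℝ))
          = Real.exp ((η-ε)*V) / Real.exp (η*V) := by
        field_simp
      rw [h2, ← Real.exp_sub]
      congr 1
      ring
    rw [mul_div_assoc, h1]
  have htoReal : (μ {x | t ≤ S x}).toReal ≤ 2 * Real.exp (-ε * V) := by
    rw [← hKt, le_div_iff₀ htpos]
    calc (μ {x | t ≤ S x}).toReal * t = t * (μ {x | t ≤ S x}).toReal := by ring
      _ ≤ ∫ x, S x ∂μ := hmar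
      _ ≤ 2 * K := hSle
  calc μ {a : EuclideanSpace ℂ (Fin N) | ¬ (∑ j, ‖∑ i, a i * g i j‖ ^ 4 ≤ t)}
      ≤ μ {x | t ≤ S x} := measure_mono fun a ha => (lt_of_not_ge ha).le
    _ = ENNReal.ofReal ((μ {x | t ≤ S x}).toReal) :=
        (ENNReal.ofReal_toReal (measure_ne_top μ _)).symm
    _ ≤ ENNReal.ofReal (2 * Real.exp (-ε * V)) := ENNReal.ofReal_le_ofReal htoReal
end

section
/- Let L > 2 be a prime number. For a tuple n = (n_1,…,n_{2L}) with each n_j ∈ {0,1}, set |n| := ∑_{j=1}^{2L} n_j, z₂(n) := ∑_{j=1}^{2L} n_j exp(2πij/L), and z₁(n) := ∑_{j=1}^{2L} n_j exp(πij/L). Then for any two such tuples n and n' with |n| = |n'| < L/2, one has z₂(n) = z₂(n') and z₁(n) = z₁(n') simultaneously if and only if n = n'. -/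
open Polynomial Finset

lemma keyPrime (p : ℕ) (hp : p.Prime) {μ : ℂ} (hμ : IsPrimitiveRoot μ p)
    (a : ℕ → ℚ) (h : ∑ i ∈ Finset.range p, (a i : ℂ) * μ ^ i = 0) :
    ∀ i < p, a i = a 0 := by
  haveI : Fact p.Prime := ⟨hp⟩
  set P : ℚ[X] := ∑ i ∈ range p, C (a i) * X ^ i with hP
  have hcoeff : ∀ i < p, P.coeff i = a i := by
    intro i hi
    rw [hP, finset_sum_coeff]
    simp only [coeff_C_mul, coeff_X_pow, mul_ite, mul_one, mul_zero]
    rw [Finset.sum_ite_eq (range p) i a]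
    simp [hi]
  have haev : aeval μ P = 0 := by
    rw [hP, map_sum]
    simp only [map_mul, aeval_C, aeval_X_pow, eq_ratCast]
    exact h
  have hd : cyclotomic p ℚ ∣ P := by
    rw [cyclotomic_eq_minpoly_rat hμ hp.pos]
    exact minpoly.dvd _ _ haev
  obtain ⟨Q, hQ⟩ := hd
  by_cases h0 : P = 0
  · intro i hi
    have h1 := hcoeff i hi
    have h2 := hcoeff 0 hp.pos
    rw [h0] at h1 h2
    simp at h1 h2
    rw [← h1, ← h2]
  · have hQ0 : Q ≠ 0 := by
      rintro rfl; rw [mul_zero] at hQ; exact h0 hQ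
    have hdegP : P.natDegree ≤ p - 1 := by
      apply natDegree_sum_le_of_forall_le
      intro i hi
      exact (natDegree_C_mul_X_pow_le _ _).trans (by
        have := Finset.mem_range.mp hi; omega)
    have hdegc : (cyclotomic p ℚ).natDegree = p - 1 := by
      rw [natDegree_cyclotomic, Nat.totient_prime hp]
    have hdeg : P.natDegree = (cyclotomic p ℚ).natDegree + Q.natDegree := by
      rw [hQ, natDegree_mul (cyclotomic_ne_zero p ℚ) hQ0]
    have hQdeg : Q.natDegree = 0 := by omega
    have hQC : Q = C (Q.coeff 0) := eq_C_of_natDegree_eq_zero hQdeg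
    have hcyc : ∀ i < p, (cyclotomic p ℚ).coeff i = 1 := by
      intro i hi
      rw [cyclotomic_prime, finset_sum_coeff]
      simp only [coeff_X_pow]
      rw [Finset.sum_ite_eq (range p) i (fun _ => (1:ℚ))]
      simp [hi]
    have key : ∀ i < p, a i = Q.coeff 0 := by
      intro i hi
      rw [← hcoeff i hi, hQ, hQC, coeff_mul_C, hcyc i hi, one_mul]; simp
    intro i hi
    rw [key i hi, key 0 hp.pos]

/-- For a prime `L > 2` and 0-1 tuples `n, n'` of length `2L` with
`|n| = |n'| < L/2`, the pair of sums `z₂(n) = ∑_j n_j exp(2πij/L)` and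
`z₁(n) = ∑_j n_j exp(πij/L)` (with `j` running over `1,…,2L`) determines `n`:
one has `z₂(n) = z₂(n')` and `z₁(n) = z₁(n')` simultaneously if and only if `n = n'`. -/
theorem double_chain_occupation_determined
    (L : ℕ) (hL : Nat.Prime L) (hL2 : 2 < L)
    (n n' : Fin (2 * L) → ℕ)
    (hn : ∀ j, n j ≤ 1) (hn' : ∀ j, n' j ≤ 1)
    (hsum : ∑ j, n j = ∑ j, n' j)
    (hhalf : 2 * ∑ j, n j < L) :
    ((∑ j, (n j : ℂ) * Complex.exp (2 * Real.pi * Complex.I * ((j : ℕ) + 1) / (L : ℂ))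
        = ∑ j, (n' j : ℂ) * Complex.exp (2 * Real.pi * Complex.I * ((j : ℕ) + 1) / (L : ℂ))) ∧
     (∑ j, (n j : ℂ) * Complex.exp (Real.pi * Complex.I * ((j : ℕ) + 1) / (L : ℂ))
        = ∑ j, (n' j : ℂ) * Complex.exp (Real.pi * Complex.I * ((j : ℕ) + 1) / (L : ℂ))))
    ↔ n = n' := by
  constructor
  case mpr => rintro rfl; exact ⟨rfl, rfl⟩
  rintro ⟨h2, h1⟩
  have hLne : L ≠ 0 := hL.pos.ne'
  have hLC : (L : ℂ) ≠ 0 := Nat.cast_ne_zero.mpr hLne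
  set ω : ℂ := Complex.exp (2 * Real.pi * Complex.I / L) with hωdef
  set ζ : ℂ := Complex.exp (Real.pi * Complex.I / L) with hζdef
  have hω : IsPrimitiveRoot ω L := Complex.isPrimitiveRoot_exp L hLne
  have hζ : IsPrimitiveRoot ζ (2 * L) := by
    have h := Complex.isPrimitiveRoot_exp (2 * L) (by omega)
    have : (2 * Real.pi * Complex.I / ((2 * L : ℕ) : ℂ)) = Real.pi * Complex.I / L := by
      push_cast
      field_simp
    rwa [this] at h
  -- the natural-number occupation functions on `ℕ`
  set nn : ℕ → ℕ := fun j => if h : j < 2 * L then n ⟨j, h⟩ else 0 with hnn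
  set nn' : ℕ → ℕ := fun j => if h : j < 2 * L then n' ⟨j, h⟩ else 0 with hnn'
  have hnnv : ∀ j : Fin (2 * L), nn j.val = n j := by
    intro j; simp [hnn, j.isLt]
  have hnnv' : ∀ j : Fin (2 * L), nn' j.val = n' j := by
    intro j; simp [hnn', j.isLt]
  set c : ℕ → ℚ := fun j => (nn j : ℚ) - (nn' j : ℚ) with hc
  -- sums as range sums
  have hsumR : ∑ j ∈ range (2 * L), nn j = ∑ j ∈ range (2 * L), nn' j := by
    rw [← Fin.sum_univ_eq_sum_range nn, ← Fin.sum_univ_eq_sum_range nn']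
    calc ∑ j : Fin (2 * L), nn j.val = ∑ j, n j := Finset.sum_congr rfl (fun j _ => hnnv j)
      _ = ∑ j, n' j := hsum
      _ = ∑ j : Fin (2 * L), nn' j.val := (Finset.sum_congr rfl (fun j _ => hnnv' j)).symm
  have hhalfR : 2 * ∑ j ∈ range (2 * L), nn j < L := by
    rw [← Fin.sum_univ_eq_sum_range nn]
    calc 2 * ∑ j : Fin (2 * L), nn j.val = 2 * ∑ j, n j := by
          rw [Finset.sum_congr rfl (fun j _ => hnnv j)]
      _ < L := hhalf
  -- exponentials as powers
  have e2 : ∀ j : ℕ, Complex.exp (2 * Real.pi * Complex.I * ((j : ℂ) + 1) / L) = ω ^ (j + 1) := by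
    intro j
    rw [hωdef, ← Complex.exp_nat_mul]
    congr 1; push_cast; ring
  have e1 : ∀ j : ℕ, Complex.exp (Real.pi * Complex.I * ((j : ℂ) + 1) / L) = ζ ^ (j + 1) := by
    intro j
    rw [hζdef, ← Complex.exp_nat_mul]
    congr 1; push_cast; ring
  -- the two vanishing relations
  have H2 : ∑ j ∈ range (2 * L), (c j : ℂ) * ω ^ (j + 1) = 0 := by
    have l : ∑ j ∈ range (2 * L), (nn j : ℂ) * ω ^ (j + 1)
        = ∑ j ∈ range (2 * L), (nn' j : ℂ) * ω ^ (j + 1) := by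
      rw [← Fin.sum_univ_eq_sum_range (fun j => (nn j : ℂ) * ω ^ (j + 1)),
        ← Fin.sum_univ_eq_sum_range (fun j => (nn' j : ℂ) * ω ^ (j + 1))]
      calc ∑ j : Fin (2 * L), (nn j.val : ℂ) * ω ^ (j.val + 1)
          = ∑ j, (n j : ℂ) * Complex.exp (2 * Real.pi * Complex.I * ((j : ℕ) + 1) / L) := by
            refine Finset.sum_congr rfl (fun j _ => ?_)
            rw [hnnv j, e2 j.val]
        _ = ∑ j, (n' j : ℂ) * Complex.exp (2 * Real.pi * Complex.I * ((j : ℕ) + 1) / L) := h2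
        _ = ∑ j : Fin (2 * L), (nn' j.val : ℂ) * ω ^ (j.val + 1) := by
            refine Finset.sum_congr rfl (fun j _ => ?_)
            rw [hnnv' j, e2 j.val]
    simp only [hc]
    push_cast
    simp only [sub_mul]
    rw [Finset.sum_sub_distrib, l, sub_self]
  have H1 : ∑ j ∈ range (2 * L), (c j : ℂ) * ζ ^ (j + 1) = 0 := by
    have l : ∑ j ∈ range (2 * L), (nn j : ℂ) * ζ ^ (j + 1)
        = ∑ j ∈ range (2 * L), (nn' j : ℂ) * ζ ^ (j + 1) := by
      rw [← Fin.sum_univ_eq_sum_range (fun j => (nn j : ℂ) * ζ ^ (j + 1)),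
        ← Fin.sum_univ_eq_sum_range (fun j => (nn' j : ℂ) * ζ ^ (j + 1))]
      calc ∑ j : Fin (2 * L), (nn j.val : ℂ) * ζ ^ (j.val + 1)
          = ∑ j, (n j : ℂ) * Complex.exp (Real.pi * Complex.I * ((j : ℕ) + 1) / L) := by
            refine Finset.sum_congr rfl (fun j _ => ?_)
            rw [hnnv j, e1 j.val]
        _ = ∑ j, (n' j : ℂ) * Complex.exp (Real.pi * Complex.I * ((j : ℕ) + 1) / L) := h1
        _ = ∑ j : Fin (2 * L), (nn' j.val : ℂ) * ζ ^ (j.val + 1) := by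
            refine Finset.sum_congr rfl (fun j _ => ?_)
            rw [hnnv' j, e1 j.val]
    simp only [hc]
    push_cast
    simp only [sub_mul]
    rw [Finset.sum_sub_distrib, l, sub_self]
  have hωL : ω ^ L = 1 := hω.pow_eq_one
  have hζL : ζ ^ L = -1 := by
    rw [hζdef, ← Complex.exp_nat_mul,
      show ((L : ℂ) * (Real.pi * Complex.I / L)) = Real.pi * Complex.I by field_simp]
    exact Complex.exp_pi_mul_I
  -- reduce the ω-relation mod ω^L = 1
  have S2 : ∑ j ∈ range L, ((c j + c (L + j) : ℚ) : ℂ) * ω ^ (j + 1) = 0 := by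
    rw [two_mul, Finset.sum_range_add] at H2
    calc ∑ j ∈ range L, ((c j + c (L + j) : ℚ) : ℂ) * ω ^ (j + 1)
        = ∑ j ∈ range L, (c j : ℂ) * ω ^ (j + 1)
            + ∑ j ∈ range L, (c (L + j) : ℂ) * ω ^ (L + j + 1) := by
          rw [← Finset.sum_add_distrib]
          refine Finset.sum_congr rfl (fun j _ => ?_)
          have hpow : ω ^ (L + (j + 1)) = ω ^ (j + 1) := by
            rw [pow_add, hωL, one_mul]
          rw [show L + j + 1 = L + (j + 1) by ring, hpow]
          push_cast; ring
      _ = 0 := H2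
  have S2' : ∑ j ∈ range L, ((fun j => c j + c (L + j)) j : ℂ) * ω ^ j = 0 := by
    have hω0 : ω ≠ 0 := Complex.exp_ne_zero _
    have hm : ω * (∑ j ∈ range L, ((c j + c (L + j) : ℚ) : ℂ) * ω ^ j) = 0 := by
      rw [Finset.mul_sum, ← S2]
      exact Finset.sum_congr rfl (fun j _ => by rw [pow_succ]; ring)
    rcases mul_eq_zero.mp hm with h | h
    · exact absurd h hω0
    · exact h
  have hball := keyPrime L hL hω (fun j => c j + c (L + j)) S2'
  have hcsum : ∑ j ∈ range (2 * L), c j = 0 := by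
    simp only [hc]
    rw [Finset.sum_sub_distrib]
    have : ((∑ j ∈ range (2 * L), nn j : ℕ) : ℚ) = ((∑ j ∈ range (2 * L), nn' j : ℕ) : ℚ) := by
      exact_mod_cast hsumR
    push_cast at this
    rw [this, sub_self]
  have hb0 : c 0 + c (L + 0) = 0 := by
    have hsum0 : ∑ j ∈ range L, (c j + c (L + j)) = 0 := by
      rw [Finset.sum_add_distrib]
      rw [two_mul, Finset.sum_range_add] at hcsum
      exact hcsum
    have hconst : ∑ j ∈ range L, (c j + c (L + j)) = (L : ℚ) * (c 0 + c (L + 0)) := by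
      rw [Finset.sum_congr rfl (fun j hj => hball j (mem_range.mp hj)),
        Finset.sum_const, Finset.card_range, nsmul_eq_mul]
    rw [hconst] at hsum0
    have hLQ : (L : ℚ) ≠ 0 := Nat.cast_ne_zero.mpr hLne
    exact (mul_eq_zero.mp hsum0).resolve_left hLQ
  have hbz : ∀ j < L, c (L + j) = -c j := by
    intro j hj
    have h := hball j hj
    rw [hb0] at h
    linarith
  -- reduce the ζ-relation mod ζ^L = -1 and antisymmetry
  have S1 : ∑ j ∈ range L, ((2 * c j : ℚ) : ℂ) * ζ ^ (j + 1) = 0 := by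
    rw [two_mul, Finset.sum_range_add] at H1
    calc ∑ j ∈ range L, ((2 * c j : ℚ) : ℂ) * ζ ^ (j + 1)
        = ∑ j ∈ range L, (c j : ℂ) * ζ ^ (j + 1)
            + ∑ j ∈ range L, (c (L + j) : ℂ) * ζ ^ (L + j + 1) := by
          rw [← Finset.sum_add_distrib]
          refine Finset.sum_congr rfl (fun j hj => ?_)
          have hpow : ζ ^ (L + (j + 1)) = -ζ ^ (j + 1) := by
            rw [pow_add, hζL]; ring
          rw [show L + j + 1 = L + (j + 1) by ring, hpow, hbz j (mem_range.mp hj)]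
          push_cast; ring
      _ = 0 := H1
  have hs : ∀ j : ℕ, ((-1 : ℂ) ^ j) * (-1 : ℂ) ^ j = 1 := by
    intro j; rw [← pow_add, ← two_mul, pow_mul]; norm_num
  have S1' : ∑ j ∈ range L, ((fun j => (-1 : ℚ) ^ j * c j) j : ℂ) * (-ζ) ^ j = 0 := by
    have hζ0 : (2 : ℂ) * ζ ≠ 0 := by
      exact mul_ne_zero two_ne_zero (Complex.exp_ne_zero _)
    have hm : (2 * ζ) * (∑ j ∈ range L, (((-1 : ℚ) ^ j * c j : ℚ) : ℂ) * (-ζ) ^ j) = 0 := by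
      rw [Finset.mul_sum, ← S1]
      refine Finset.sum_congr rfl (fun j _ => ?_)
      push_cast
      rw [neg_pow, pow_succ]
      linear_combination (2 * ζ * (c j : ℂ) * ζ ^ j) * hs j
    rcases mul_eq_zero.mp hm with h | h
    · exact absurd h hζ0
    · exact h
  have hLodd : Odd L := hL.odd_of_ne_two (by omega)
  have hη : IsPrimitiveRoot (-ζ) L := by
    have hηL : (-ζ) ^ L = 1 := by
      rw [neg_pow, hζL, Odd.neg_one_pow hLodd]; ring
    have hη1 : (-ζ) ≠ 1 := by
      intro hcon
      have hz : ζ = -1 := by linear_combination -hcon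
      have h2 : ζ ^ 2 = 1 := by rw [hz]; ring
      have := Nat.le_of_dvd (by norm_num) (hζ.dvd_of_pow_eq_one 2 h2)
      omega
    refine ⟨hηL, fun l hl => ?_⟩
    have hd := (pow_gcd_eq_one (a := -ζ)).mpr ⟨hηL, hl⟩
    rcases hL.eq_one_or_self_of_dvd _ (Nat.gcd_dvd_left L l) with h | h
    · rw [h, pow_one] at hd; exact absurd hd hη1
    · conv_lhs => rw [← h]
      exact Nat.gcd_dvd_right L l
  have ha := keyPrime L hL hη (fun j => (-1 : ℚ) ^ j * c j) S1'
  simp only [pow_zero, one_mul] at ha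
  -- conclude c vanishes below L
  have hczero : ∀ j < L, c j = 0 := by
    by_cases h00 : c 0 = 0
    · intro j hj
      have h := ha j hj
      rw [h00, mul_eq_zero] at h
      rcases h with h | h
      · exact absurd h (pow_ne_zero j (by norm_num))
      · exact h
    · exfalso
      have hne : ∀ j < L, c j ≠ 0 := by
        intro j hj hc0
        have h := ha j hj
        rw [hc0, mul_zero] at h
        exact h00 h.symm
      have hone : ∀ j < L, 1 ≤ nn j + nn' j := by
        intro j hj
        by_contra hcon
        push_neg at hcon
        have h1 : nn j = 0 := by omega
        have h2 : nn' j = 0 := by omega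
        exact hne j hj (by simp [hc, h1, h2])
      have hLle : L ≤ ∑ j ∈ range L, (nn j + nn' j) := by
        calc L = ∑ _j ∈ range L, 1 := by simp
          _ ≤ _ := Finset.sum_le_sum (fun j hj => hone j (mem_range.mp hj))
      have hle2 : ∑ j ∈ range L, (nn j + nn' j) ≤ ∑ j ∈ range (2 * L), (nn j + nn' j) :=
        Finset.sum_le_sum_of_subset (Finset.range_subset_range.mpr (by omega))
      have hR : ∑ j ∈ range (2 * L), (nn j + nn' j) = 2 * ∑ j ∈ range (2 * L), nn j := by
        rw [Finset.sum_add_distrib, ← hsumR]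
        omega
      omega
  have hczero2 : ∀ j < 2 * L, c j = 0 := by
    intro j hj
    rcases lt_or_ge j L with h | h
    · exact hczero j h
    · have hj' : j - L < L := by omega
      have hb := hbz (j - L) hj'
      rw [show L + (j - L) = j by omega] at hb
      rw [hb, hczero _ hj', neg_zero]
  funext j
  have hcj := hczero2 j.val j.isLt
  simp only [hc, sub_eq_zero, Nat.cast_inj] at hcj
  rw [hnnv j, hnnv' j] at hcj
  exact hcj
end

section
/- (Generic nondegeneracy of the free-fermion spectrum on a double chain.) Let L > 2 be a prime number, let N be a positive integer with N < L/2, and let λ₀ > 0. For a finite set K of wave numbers contained in 𝒦 := { (π/L)·j : j = 1,2,…,2L } and parameters λ, θ ∈ ℝ, define E_K(λ,θ) := ∑_{k∈K} ( cos(2k+θ) + λ·cos(k+θ) ). Then there exists a finite set F ⊂ ℝ such that for every λ ∈ (0, λ₀] \ F there exists a finite set G(λ) ⊂ ℝ such that for every θ ∈ [0, 2π) \ G(λ) the following holds: for all subsets K, K' ⊆ 𝒦 with |K| = |K'| = N, E_K(λ,θ) = E_{K'}(λ,θ) implies K = K'. -/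
open Polynomial Finset

section FreeFermionAux

lemma lemD (L : ℕ) (hL : 2 ≤ L) (μ : ℂ) (M : Polynomial ℚ)
    (hmin : minpoly ℚ μ = M) (hdeg : M.natDegree = L - 1) (hM0 : M.coeff 0 ≠ 0)
    (c : ℕ → ℚ) (hc0 : c 0 = 0)
    (h : ∑ j ∈ Finset.range (L+1), (c j : ℂ) * μ ^ j = 0) :
    ∃ s : ℚ, ∀ j, 1 ≤ j → j ≤ L → c j = s * M.coeff (j-1) := by
  set P : Polynomial ℚ := ∑ j ∈ Finset.range (L+1), C (c j) * X ^ j with hP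
  have coeffP : ∀ k, P.coeff k = if k ∈ Finset.range (L+1) then c k else 0 := by
    intro k
    rw [hP, finset_sum_coeff]
    simp only [coeff_C_mul, coeff_X_pow, mul_ite, mul_one, mul_zero]
    rw [Finset.sum_ite_eq (Finset.range (L+1)) k (fun x => c x)]
  have hPμ : Polynomial.aeval μ P = 0 := by
    rw [hP]
    simp only [map_sum, map_mul, aeval_C, map_pow, aeval_X]
    simpa using h
  have hdvd : M ∣ P := hmin ▸ minpoly.dvd ℚ μ hPμ
  obtain ⟨Q, hQ⟩ := hdvd
  by_cases hQ0 : Q = 0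
  · refine ⟨0, fun j h1 h2 => ?_⟩
    have : P = 0 := by rw [hQ, hQ0, mul_zero]
    have := coeffP j
    rw [this] at *
    simp only [this] at *
    have : P.coeff j = 0 := by rw [hQ, hQ0, mul_zero, coeff_zero]
    rw [coeffP j] at this
    simp only [Finset.mem_range] at this
    rw [if_pos (by omega)] at this
    simp [this]
  · have hM : M ≠ 0 := by
      intro h0
      rw [h0, Polynomial.natDegree_zero] at hdeg
      omega
    have hPdeg : P.natDegree ≤ L := by
      rw [Polynomial.natDegree_le_iff_coeff_eq_zero]
      intro k hk
      rw [coeffP k, if_neg (by simp; omega)]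
    have hPne : P ≠ 0 := by rw [hQ]; exact mul_ne_zero hM hQ0
    have hdQ : Q.natDegree ≤ 1 := by
      have := Polynomial.natDegree_mul hM hQ0
      rw [← hQ] at this
      omega
    have hQ0' : Q.coeff 0 = 0 := by
      have h0 : P.coeff 0 = 0 := by rw [coeffP 0, if_pos (by simp)]; exact hc0
      rw [hQ, Polynomial.mul_coeff_zero] at h0
      exact (mul_eq_zero.1 h0).resolve_left hM0
    set s := Q.coeff 1 with hs
    have hQform : Q = C s * X := by
      ext k
      rcases k with _ | _ | k
      · simpa using hQ0'
      · simp [hs]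
      · rw [Polynomial.coeff_eq_zero_of_natDegree_lt (by omega)]
        simp [Polynomial.coeff_C_mul, Polynomial.coeff_X]
    refine ⟨s, fun j h1 h2 => ?_⟩
    have : P.coeff j = c j := by rw [coeffP j, if_pos (by simp; omega)]
    rw [hQ, hQform, ← mul_assoc] at this
    obtain ⟨i, rfl⟩ : ∃ i, j = i + 1 := ⟨j - 1, by omega⟩
    rw [Polynomial.coeff_mul_X] at this
    rw [← this]
    simp [Polynomial.coeff_mul_C, mul_comm]

noncomputable def Mone (L : ℕ) : Polynomial ℚ := ∑ i ∈ Finset.range L, X ^ i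
noncomputable def Mtwo (L : ℕ) : Polynomial ℚ := ∑ i ∈ Finset.range L, C ((-1 : ℚ)^i) * X ^ i

lemma coeff_Mone (L k : ℕ) : (Mone L).coeff k = if k < L then 1 else 0 := by
  rw [Mone, finset_sum_coeff]
  simp only [coeff_X_pow]
  rw [Finset.sum_ite_eq (Finset.range L) k (fun _ => (1:ℚ))]
  simp

lemma coeff_Mtwo (L k : ℕ) : (Mtwo L).coeff k = if k < L then (-1:ℚ)^k else 0 := by
  rw [Mtwo, finset_sum_coeff]
  simp only [coeff_C_mul, coeff_X_pow, mul_ite, mul_one, mul_zero]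
  rw [Finset.sum_ite_eq (Finset.range L) k (fun i => (-1:ℚ)^i)]
  simp

lemma minpoly_omega {L : ℕ} (hL : Nat.Prime L) {ω : ℂ} (hω : IsPrimitiveRoot ω L) :
    minpoly ℚ ω = Mone L := by
  haveI : Fact (Nat.Prime L) := ⟨hL⟩
  rw [← Polynomial.cyclotomic_eq_minpoly_rat hω hL.pos, Polynomial.cyclotomic_prime, Mone]

lemma natDegree_Mone {L : ℕ} (hL : Nat.Prime L) : (Mone L).natDegree = L - 1 := by
  haveI : Fact (Nat.Prime L) := ⟨hL⟩
  have := Polynomial.natDegree_cyclotomic L ℚ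
  rw [Polynomial.cyclotomic_prime, Nat.totient_prime hL] at this
  rw [Mone]; exact this

lemma natDegree_Mtwo {L : ℕ} (hL : Nat.Prime L) (hL2 : 2 < L) : (Mtwo L).natDegree = L - 1 := by
  have hodd : Odd L := hL.odd_of_ne_two (by omega)
  have hcoeff : (Mtwo L).coeff (L-1) = 1 := by
    rw [coeff_Mtwo, if_pos (by omega)]
    have : Even (L - 1) := by
      rcases hodd with ⟨m, hm⟩; exact ⟨m, by omega⟩
    exact Even.neg_one_pow this
  apply le_antisymm
  · rw [Polynomial.natDegree_le_iff_coeff_eq_zero]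
    intro k hk
    rw [coeff_Mtwo, if_neg (by omega)]
  · exact Polynomial.le_natDegree_of_ne_zero (by rw [hcoeff]; norm_num)

lemma monic_Mtwo {L : ℕ} (hL : Nat.Prime L) (hL2 : 2 < L) : (Mtwo L).Monic := by
  have hodd : Odd L := hL.odd_of_ne_two (by omega)
  rw [Polynomial.Monic, Polynomial.leadingCoeff, natDegree_Mtwo hL hL2, coeff_Mtwo,
    if_pos (by omega)]
  rcases hodd with ⟨m, hm⟩
  exact Even.neg_one_pow ⟨m, by omega⟩

lemma zeta_pow_L {L : ℕ} (hL2 : 2 < L) {ζ : ℂ} (hζ : IsPrimitiveRoot ζ (2*L)) :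
    ζ ^ L = -1 := by
  have h1 : (ζ^L - 1) * (ζ^L + 1) = 0 := by
    have : ζ ^ (L*2) = 1 := by rw [mul_comm]; exact hζ.pow_eq_one
    rw [pow_mul] at this
    ring_nf
    ring_nf at this
    linear_combination this
  rcases mul_eq_zero.1 h1 with h | h
  · exact absurd (by linear_combination h : ζ^L = 1)
      (hζ.pow_ne_one_of_pos_of_lt (by omega) (by omega))
  · linear_combination h

lemma minpoly_zeta {L : ℕ} (hL : Nat.Prime L) (hL2 : 2 < L) {ζ : ℂ}
    (hζ : IsPrimitiveRoot ζ (2*L)) : minpoly ℚ ζ = Mtwo L := by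
  have hodd : Odd L := hL.odd_of_ne_two (by omega)
  have hdeg2L : (minpoly ℚ ζ).natDegree = L - 1 := by
    rw [← Polynomial.cyclotomic_eq_minpoly_rat hζ (by omega), Polynomial.natDegree_cyclotomic,
      Nat.totient_mul ((Nat.coprime_primes Nat.prime_two hL).2 (by omega)),
      Nat.totient_prime hL, Nat.totient_two, one_mul]
  have hζne : ζ ≠ -1 := by
    intro h
    have : ζ ^ 2 = 1 := by rw [h]; ring
    exact hζ.pow_ne_one_of_pos_of_lt (by omega) (by omega) this
  have haev : Polynomial.aeval ζ (Mtwo L) = 0 := by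
    have hgeom : ∑ i ∈ Finset.range L, (-ζ) ^ i = 0 := by
      rw [geom_sum_eq (fun h => hζne (by linear_combination -h)) L, neg_pow,
        Odd.neg_one_pow hodd, zeta_pow_L hL2 hζ]
      norm_num
    rw [Mtwo, map_sum, ← hgeom]
    refine Finset.sum_congr rfl fun i _ => ?_
    rw [map_mul, aeval_C, aeval_X_pow, neg_pow ζ]
    push_cast
    ring
  have hdvd : minpoly ℚ ζ ∣ Mtwo L := minpoly.dvd ℚ ζ haev
  obtain ⟨q, hq⟩ := hdvd
  have hint : IsIntegral ℚ ζ :=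
    ⟨X ^ (2*L) - C 1, Polynomial.monic_X_pow_sub_C 1 (by omega : 2*L ≠ 0),
      by simp [hζ.pow_eq_one]⟩
  have hmonic := minpoly.monic hint
  have hM2 := monic_Mtwo hL hL2
  have hqne : q ≠ 0 := by
    intro h0; rw [h0, mul_zero] at hq; exact hM2.ne_zero hq
  have hdq : q.natDegree = 0 := by
    have := Polynomial.natDegree_mul (hmonic.ne_zero) hqne
    rw [← hq, natDegree_Mtwo hL hL2, hdeg2L] at this
    omega
  have hq1 : q = 1 := by
    have hlc : q.leadingCoeff = 1 := by
      have := congrArg Polynomial.leadingCoeff hq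
      rw [Polynomial.leadingCoeff_mul, hmonic.leadingCoeff, one_mul, hM2.leadingCoeff] at this
      exact this.symm
    rw [Polynomial.leadingCoeff, hdq] at hlc
    rw [Polynomial.eq_C_of_natDegree_le_zero hdq.le, hlc, map_one]
  rw [hq, hq1, mul_one]

lemma key (L : ℕ) (hL : Nat.Prime L) (hL2 : 2 < L) (N : ℕ) (hNL : 2*N < L)
    (J J' : Finset ℕ) (hJ : J ⊆ Finset.Icc 1 (2*L)) (hJ' : J' ⊆ Finset.Icc 1 (2*L))
    (hcard : J.card = N) (hcard' : J'.card = N)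
    (ζ : ℂ) (hζ : IsPrimitiveRoot ζ (2*L))
    (h1 : ∑ j ∈ J, ζ ^ (2*j) = ∑ j ∈ J', ζ ^ (2*j))
    (h2 : ∑ j ∈ J, ζ ^ j = ∑ j ∈ J', ζ ^ j) : J = J' := by
  classical
  set d : ℕ → ℤ := fun j => (if j ∈ J then 1 else 0) - (if j ∈ J' then 1 else 0) with hd
  -- rewrite Icc 1 x as Ioc 0 x
  have hIoc : ∀ x : ℕ, Finset.Icc 1 x = Finset.Ioc 0 x := fun x => by
    rw [← Finset.Icc_add_one_left_eq_Ioc, zero_add]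
  rw [hIoc] at hJ hJ'
  -- generic expansion
  have expand : ∀ {β : Type} [inst : CommRing β] (g : ℕ → β),
      ∑ j ∈ Finset.Ioc 0 (2*L), (d j : β) * g j = ∑ j ∈ J, g j - ∑ j ∈ J', g j := by
    intro β _ g
    have step : ∀ j, (d j : β) * g j
        = (if j ∈ J then g j else 0) - (if j ∈ J' then g j else 0) := by
      intro j
      rw [hd]
      push_cast
      split <;> split <;> ring
    rw [Finset.sum_congr rfl fun j _ => step j, Finset.sum_sub_distrib,
      Finset.sum_ite_mem, Finset.sum_ite_mem,
      Finset.inter_eq_right.2 hJ, Finset.inter_eq_right.2 hJ']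
  -- total sum zero
  have hd0 : ∑ j ∈ Finset.Ioc 0 (2*L), d j = 0 := by
    have := expand (β := ℤ) (fun _ => 1)
    simp only [mul_one, Int.cast_id, Finset.sum_const, nsmul_eq_mul] at this
    rw [this, hcard, hcard', sub_self]
  -- bound on absolute values
  have hbound : ∑ j ∈ Finset.Ioc 0 (2*L), |d j| ≤ 2 * (N : ℤ) := by
    have hptw : ∀ j, |d j| ≤ (if j ∈ J then (1:ℤ) else 0) + (if j ∈ J' then 1 else 0) := by
      intro j; by_cases hj : j ∈ J <;> by_cases hj' : j ∈ J' <;> simp [hd, hj, hj']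
    calc ∑ j ∈ Finset.Ioc 0 (2*L), |d j|
        ≤ ∑ j ∈ Finset.Ioc 0 (2*L), ((if j ∈ J then (1:ℤ) else 0) + (if j ∈ J' then 1 else 0)) :=
          Finset.sum_le_sum fun j _ => hptw j
      _ = 2 * (N : ℤ) := by
          rw [Finset.sum_add_distrib, Finset.sum_ite_mem, Finset.sum_ite_mem,
            Finset.inter_eq_right.2 hJ, Finset.inter_eq_right.2 hJ']
          simp [hcard, hcard']
          ring
  -- ζ^L = -1, ω := ζ^2
  have hζL : ζ ^ L = -1 := zeta_pow_L hL2 hζ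
  set ω : ℂ := ζ^2 with hω
  have hωprim : IsPrimitiveRoot ω L := hζ.pow (by omega) (rfl : 2*L = 2*L)
  have hωL : ω ^ L = 1 := hωprim.pow_eq_one
  -- split sums over Ioc 0 (2L)
  have split : ∀ {β : Type} [inst : AddCommMonoid β] (g : ℕ → β), ∑ j ∈ Finset.Ioc 0 (2*L), g j
      = ∑ j ∈ Finset.Ioc 0 L, g j + ∑ j ∈ Finset.Ioc 0 L, g (j + L) := by
    intro β _ g
    rw [← Finset.sum_Ioc_consecutive g (Nat.zero_le L) (by omega : L ≤ 2*L)]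
    congr 1
    have hmap : Finset.Ioc L (2*L) = (Finset.Ioc 0 L).map (addRightEmbedding L) := by
      rw [Finset.map_add_right_Ioc]; congr 1 <;> omega
    rw [hmap, Finset.sum_map]
    simp [addRightEmbedding_apply]
  have hins : Finset.range (L+1) = insert 0 (Finset.Ioc 0 L) := by
    ext x; simp only [Finset.mem_range, Finset.mem_insert, Finset.mem_Ioc]; omega
  have h2L1 : ζ^(2*L) = 1 := hζ.pow_eq_one
  -- first relation
  have hrel1 : ∑ j ∈ Finset.Ioc 0 L, ((d j + d (j+L) : ℤ) : ℂ) * ω ^ j = 0 := by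
    have e1 : ∑ j ∈ Finset.Ioc 0 (2*L), (d j : ℂ) * ζ^(2*j) = 0 := by
      rw [expand (fun j => ζ^(2*j))]; exact sub_eq_zero_of_eq h1
    rw [split (fun j => (d j : ℂ) * ζ^(2*j))] at e1
    have hstep : ∀ j ∈ Finset.Ioc 0 L, ((d j + d (j+L) : ℤ) : ℂ) * ω ^ j
        = (d j : ℂ) * ζ^(2*j) + (d (j+L) : ℂ) * ζ^(2*(j+L)) := by
      intro j _
      rw [show 2*(j+L) = 2*j + 2*L by ring, pow_add, h2L1, mul_one, hω, ← pow_mul]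
      push_cast; ring
    rw [Finset.sum_congr rfl hstep, Finset.sum_add_distrib]
    exact e1
  set c1 : ℕ → ℚ := fun j => if j = 0 then 0 else ((d j + d (j+L) : ℤ) : ℚ) with hc1
  have hc1rel : ∑ j ∈ Finset.range (L+1), (c1 j : ℂ) * ω^j = 0 := by
    rw [hins, Finset.sum_insert (by simp)]
    have : ∀ j ∈ Finset.Ioc 0 L, ((c1 j : ℚ) : ℂ) * ω^j = ((d j + d (j+L) : ℤ) : ℂ) * ω^j := by
      intro j hj
      have hj0 : j ≠ 0 := by have := (Finset.mem_Ioc.1 hj).1; omega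
      rw [hc1]; simp only [if_neg hj0]; push_cast; ring
    rw [Finset.sum_congr rfl this, hrel1, hc1]
    simp
  obtain ⟨s, hs⟩ := lemD L (by omega) ω (Mone L) (minpoly_omega hL hωprim)
    (natDegree_Mone hL) (by rw [coeff_Mone, if_pos hL.pos]; norm_num) c1 (by simp [hc1]) hc1rel
  have hc1const : ∀ j, 1 ≤ j → j ≤ L → ((d j + d (j+L) : ℤ) : ℚ) = s := by
    intro j hj1 hj2
    have := hs j hj1 hj2
    rw [coeff_Mone, if_pos (by omega), mul_one] at this
    rw [hc1] at this; simp only [if_neg (by omega : j ≠ 0)] at this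
    exact this
  have hs0 : s = 0 := by
    have hsum : ∑ j ∈ Finset.Ioc 0 L, ((d j + d (j+L) : ℤ) : ℚ) = (L : ℚ) * s := by
      rw [Finset.sum_congr rfl (fun j hj => hc1const j (Finset.mem_Ioc.1 hj).1 (Finset.mem_Ioc.1 hj).2)]
      rw [Finset.sum_const, Nat.card_Ioc, nsmul_eq_mul]
      norm_num
    have hzero : ∑ j ∈ Finset.Ioc 0 L, ((d j + d (j+L) : ℤ) : ℚ) = 0 := by
      have : ∑ j ∈ Finset.Ioc 0 L, (d j + d (j+L)) = 0 := by
        rw [Finset.sum_add_distrib, ← split d, hd0]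
      push_cast [← this]
      norm_cast
    rw [hzero] at hsum
    have hLne : (L : ℚ) ≠ 0 := by exact_mod_cast hL.pos.ne'
    field_simp at hsum
    exact (mul_eq_zero.1 hsum.symm).resolve_left hLne
  have hflip : ∀ j, 1 ≤ j → j ≤ L → d (j+L) = -d j := by
    intro j hj1 hj2
    have := hc1const j hj1 hj2
    rw [hs0] at this
    have : d j + d (j+L) = 0 := by exact_mod_cast this
    omega
  -- second relation
  have hrel2 : ∑ j ∈ Finset.Ioc 0 L, ((2 * d j : ℤ) : ℂ) * ζ ^ j = 0 := by
    have e2 : ∑ j ∈ Finset.Ioc 0 (2*L), (d j : ℂ) * ζ^j = 0 := by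
      rw [expand (fun j => ζ^j)]; exact sub_eq_zero_of_eq h2
    rw [split (fun j => (d j : ℂ) * ζ^j)] at e2
    have hstep : ∀ j ∈ Finset.Ioc 0 L, ((2 * d j : ℤ) : ℂ) * ζ ^ j
        = (d j : ℂ) * ζ^j + (d (j+L) : ℂ) * ζ^(j+L) := by
      intro j hj
      obtain ⟨hj1, hj2⟩ := Finset.mem_Ioc.1 hj
      rw [hflip j hj1 hj2, pow_add, hζL]
      push_cast; ring
    rw [Finset.sum_congr rfl hstep, Finset.sum_add_distrib]
    exact e2
  set c2 : ℕ → ℚ := fun j => if j = 0 then 0 else ((2 * d j : ℤ) : ℚ) with hc2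
  have hc2rel : ∑ j ∈ Finset.range (L+1), (c2 j : ℂ) * ζ^j = 0 := by
    rw [hins, Finset.sum_insert (by simp)]
    have : ∀ j ∈ Finset.Ioc 0 L, ((c2 j : ℚ) : ℂ) * ζ^j = ((2 * d j : ℤ) : ℂ) * ζ^j := by
      intro j hj
      have hj0 : j ≠ 0 := by have := (Finset.mem_Ioc.1 hj).1; omega
      rw [hc2]; simp only [if_neg hj0]; push_cast; ring
    rw [Finset.sum_congr rfl this, hrel2, hc2]
    simp
  obtain ⟨s2, hs2⟩ := lemD L (by omega) ζ (Mtwo L) (minpoly_zeta hL hL2 hζ)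
    (natDegree_Mtwo hL hL2) (by rw [coeff_Mtwo, if_pos hL.pos]; norm_num) c2 (by simp [hc2]) hc2rel
  have habs : ∀ j, 1 ≤ j → j ≤ L → |((2 * d j : ℤ) : ℚ)| = |s2| := by
    intro j hj1 hj2
    have := hs2 j hj1 hj2
    rw [coeff_Mtwo, if_pos (by omega)] at this
    rw [hc2] at this; simp only [if_neg (by omega : j ≠ 0)] at this
    rw [this, abs_mul, abs_pow, abs_neg, abs_one, one_pow, mul_one]
  -- conclude d = 0 on Ioc 0 L
  have hdzero : ∀ j ∈ Finset.Ioc 0 L, d j = 0 := by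
    by_contra hcon
    push_neg at hcon
    obtain ⟨j₀, hj₀, hdj₀⟩ := hcon
    obtain ⟨hj₀1, hj₀2⟩ := Finset.mem_Ioc.1 hj₀
    have hone : ∀ j, 1 ≤ j → j ≤ L → (1 : ℤ) ≤ |d j| := by
      intro j hj1 hj2
      have h1 := habs j hj1 hj2
      have h2 := habs j₀ hj₀1 hj₀2
      have : |((2 * d j : ℤ) : ℚ)| = |((2 * d j₀ : ℤ) : ℚ)| := by rw [h1, h2]
      have hZ : |2 * d j| = |2 * d j₀| := by exact_mod_cast (by rw [← Int.cast_abs, ← Int.cast_abs] at this; exact_mod_cast this : ((|2 * d j| : ℤ) : ℚ) = ((|2 * d j₀| : ℤ) : ℚ))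
      have : d j₀ ≠ 0 := hdj₀
      rw [abs_mul, abs_mul, abs_two] at hZ
      have h1' : (1:ℤ) ≤ |d j₀| := Int.one_le_abs (by simpa using hdj₀)
      omega
    have hlow : (L : ℤ) ≤ ∑ j ∈ Finset.Ioc 0 L, |d j| := by
      have := Finset.card_nsmul_le_sum (Finset.Ioc 0 L) (fun j => |d j|) 1
        (fun j hj => hone j (Finset.mem_Ioc.1 hj).1 (Finset.mem_Ioc.1 hj).2)
      rw [Nat.card_Ioc] at this
      simpa using this
    have hmono : ∑ j ∈ Finset.Ioc 0 L, |d j| ≤ ∑ j ∈ Finset.Ioc 0 (2*L), |d j| :=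
      Finset.sum_le_sum_of_subset_of_nonneg
        (Finset.Ioc_subset_Ioc le_rfl (by omega)) (fun j _ _ => abs_nonneg _)
    have : (L : ℤ) ≤ 2 * N := le_trans hlow (le_trans hmono hbound)
    have : (2 * N : ℤ) < L := by exact_mod_cast hNL
    omega
  -- d = 0 everywhere on Ioc 0 (2L)
  have hdzero2 : ∀ j ∈ Finset.Ioc 0 (2*L), d j = 0 := by
    intro j hj
    obtain ⟨hj1, hj2⟩ := Finset.mem_Ioc.1 hj
    by_cases hjL : j ≤ L
    · exact hdzero j (Finset.mem_Ioc.2 ⟨hj1, hjL⟩)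
    · have hj' : j = (j - L) + L := by omega
      rw [hj', hflip (j - L) (by omega) (by omega),
        hdzero (j - L) (Finset.mem_Ioc.2 ⟨by omega, by omega⟩), neg_zero]
  -- conclude J = J'
  ext x
  by_cases hx : x ∈ Finset.Ioc 0 (2*L)
  · have := hdzero2 x hx
    rw [hd] at this
    simp only [sub_eq_zero] at this
    constructor
    · intro hxJ
      by_contra hxJ'
      rw [if_pos hxJ, if_neg hxJ'] at this
      exact one_ne_zero this
    · intro hxJ'
      by_contra hxJ
      rw [if_neg hxJ, if_pos hxJ'] at this
      exact one_ne_zero this.symm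
  · constructor
    · intro h; exact absurd (hJ h) hx
    · intro h; exact absurd (hJ' h) hx

lemma expInjOn : Set.InjOn (fun θ : ℝ => Complex.exp (θ * Complex.I)) (Set.Ico 0 (2*Real.pi)) := by
  intro a ha b hb hab
  simp only at hab
  rw [Complex.exp_eq_exp_iff_exists_int] at hab
  obtain ⟨n, hn⟩ := hab
  have hI : (Complex.I : ℂ) ≠ 0 := Complex.I_ne_zero
  have : (a : ℂ) = (b + n * (2 * Real.pi)) := by
    apply mul_right_cancel₀ hI
    rw [hn]; ring
  have hr : a = b + n * (2 * Real.pi) := by exact_mod_cast this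
  have hπ : 0 < Real.pi := Real.pi_pos
  obtain ⟨ha0, ha2⟩ := ha
  obtain ⟨hb0, hb2⟩ := hb
  have hn1 : (n : ℝ) < 1 := by nlinarith
  have hn2 : (-1 : ℝ) < n := by nlinarith
  have hn1' : n < 1 := by exact_mod_cast hn1
  have hn2' : -1 < n := by exact_mod_cast hn2
  have : n = 0 := by omega
  rw [this] at hr; push_cast at hr; linarith

lemma lineFinite (w : ℂ) (hw : w ≠ 0) :
    {θ : ℝ | θ ∈ Set.Ico 0 (2*Real.pi) ∧ (Complex.exp (θ*Complex.I) * w).re = 0}.Finite := by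
  set S := {θ : ℝ | θ ∈ Set.Ico 0 (2*Real.pi) ∧ (Complex.exp (θ*Complex.I) * w).re = 0}
  apply Set.Finite.of_finite_image (f := fun θ : ℝ => Complex.exp (θ * Complex.I))
  · have hfin : ({((‖w‖ : ℝ) : ℂ) * Complex.I / w,
        -(((‖w‖ : ℝ) : ℂ) * Complex.I / w)} : Set ℂ).Finite :=
      (Set.finite_singleton _).insert _
    refine Set.Finite.subset hfin ?_
    rintro z ⟨θ, ⟨hθI, hθre⟩, rfl⟩
    simp only [Set.mem_insert_iff, Set.mem_singleton_iff]
    set u := Complex.exp (↑θ * Complex.I) * w with hu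
    have habs : ‖u‖ = ‖w‖ := by
      rw [hu, norm_mul, Complex.norm_exp]
      simp
    have huim : u = u.im * Complex.I := by
      apply Complex.ext <;> simp [hθre]
    have him2 : u.im^2 = (‖w‖)^2 := by
      have := Complex.sq_norm u
      rw [habs, Complex.normSq_apply, hθre] at this
      nlinarith [Complex.sq_norm w]
    have : u.im = ‖w‖ ∨ u.im = -(‖w‖) := sq_eq_sq_iff_eq_or_eq_neg.mp (by rw [him2]) |>.imp id id
    have hexp : Complex.exp (↑θ * Complex.I) = u / w := by
      rw [hu, mul_div_assoc, div_self hw, mul_one]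
    rcases this with h | h
    · left; rw [hexp, huim, h]
    · right; rw [hexp, huim, h]; push_cast; ring_nf
  · exact fun a ha b hb hab => expInjOn ha.1 hb.1 hab

end FreeFermionAux

/-- **Generic nondegeneracy of the free-fermion spectrum on a double chain.**  Let `L > 2` be
prime, `0 < N` with `N < L/2`, and `λ₀ > 0`.  For `K ⊆ 𝒦 = {(π/L)j : j = 1,…,2L}` set
`E_K(λ,θ) = ∑_{k∈K} (cos(2k+θ) + λ cos(k+θ))`.  Then for all `λ ∈ (0,λ₀]` outside a finite
set, and all `θ ∈ [0,2π)` outside a finite set (depending on `λ`), the energies `E_K(λ,θ)` of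
the `N`-element subsets `K ⊆ 𝒦` are pairwise distinct. -/
theorem free_fermion_generic_nondegeneracy
    (L : ℕ) (hL : Nat.Prime L) (hL2 : 2 < L)
    (N : ℕ) (hN : 0 < N) (hNL : 2 * N < L)
    (lam0 : ℝ) (hlam0 : 0 < lam0)
    (𝒦 : Finset ℝ)
    (h𝒦 : 𝒦 = (Finset.Icc 1 (2 * L)).image fun j : ℕ => (Real.pi / (L : ℝ)) * (j : ℝ)) :
    ∃ F : Set ℝ, F.Finite ∧ ∀ lam : ℝ, lam ∈ Set.Ioc 0 lam0 → lam ∉ F →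
      ∃ G : Set ℝ, G.Finite ∧ ∀ θ : ℝ, θ ∈ Set.Ico 0 (2 * Real.pi) → θ ∉ G →
        ∀ K K' : Finset ℝ, K ⊆ 𝒦 → K' ⊆ 𝒦 → K.card = N → K'.card = N →
          (∑ k ∈ K, (Real.cos (2 * k + θ) + lam * Real.cos (k + θ))
            = ∑ k ∈ K', (Real.cos (2 * k + θ) + lam * Real.cos (k + θ))) →
          K = K' := by
  classical
  have hLR : (0:ℝ) < L := by exact_mod_cast hL.pos
  have hLC : (L:ℂ) ≠ 0 := by exact_mod_cast hL.pos.ne'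
  set f : ℕ → ℝ := fun j => Real.pi / L * j with hf
  have hfinj : Function.Injective f := by
    intro a b hab
    have hπL : Real.pi / L ≠ 0 := by positivity
    rw [hf] at hab
    have : (a : ℝ) = b := mul_left_cancel₀ hπL hab
    exact_mod_cast this
  set ζ : ℂ := Complex.exp (2 * Real.pi * Complex.I / ((2*L : ℕ) : ℂ)) with hζdef
  have hζ : IsPrimitiveRoot ζ (2*L) := Complex.isPrimitiveRoot_exp (2*L) (by omega)
  have hexp : ∀ j : ℕ, Complex.exp ((f j : ℝ) * Complex.I) = ζ ^ j := by
    intro j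
    rw [hζdef, ← Complex.exp_nat_mul]
    congr 1
    rw [hf]
    push_cast
    field_simp
  have hexp2 : ∀ j : ℕ, Complex.exp ((2 * f j : ℝ) * Complex.I) = ζ ^ (2*j) := by
    intro j
    have : ((2 * f j : ℝ) : ℂ) * Complex.I = 2 * (((f j : ℝ) : ℂ) * Complex.I) := by
      push_cast; ring
    rw [this, show (2 : ℂ) * (((f j : ℝ)) * Complex.I) = (2:ℕ) * (((f j : ℝ)) * Complex.I) by norm_num,
      Complex.exp_nat_mul, hexp, ← pow_mul, mul_comm j 2]
  set A : Finset ℝ → ℂ := fun K => ∑ k ∈ K, Complex.exp ((2*k : ℝ) * Complex.I) with hA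
  set B : Finset ℝ → ℂ := fun K => ∑ k ∈ K, Complex.exp ((k : ℝ) * Complex.I) with hB
  -- step 1 : distinctness of (A,B) pairs
  have step1 : ∀ K K' : Finset ℝ, K ⊆ 𝒦 → K' ⊆ 𝒦 → K.card = N → K'.card = N →
      A K = A K' → B K = B K' → K = K' := by
    intro K K' hK hK' hcK hcK' hAe hBe
    set J := (Finset.Icc 1 (2*L)).filter (fun j => f j ∈ K) with hJ
    set J' := (Finset.Icc 1 (2*L)).filter (fun j => f j ∈ K') with hJ'
    have himg : ∀ (S : Finset ℝ), S ⊆ 𝒦 →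
        S = ((Finset.Icc 1 (2*L)).filter (fun j => f j ∈ S)).image f := by
      intro S hS
      ext x
      simp only [Finset.mem_image, Finset.mem_filter]
      constructor
      · intro hx
        have := hS hx
        rw [h𝒦] at this
        simp only [Finset.mem_image] at this
        obtain ⟨j, hj, hfj⟩ := this
        exact ⟨j, ⟨hj, by rw [show f j = x from hfj]; exact hx⟩, hfj⟩
      · rintro ⟨j, ⟨hj, hfj⟩, rfl⟩
        exact hfj
    have hKimg : K = J.image f := himg K hK
    have hKimg' : K' = J'.image f := himg K' hK'
    have hsumtrans : ∀ (S : Finset ℕ) (g : ℝ → ℂ), ∑ k ∈ S.image f, g k = ∑ j ∈ S, g (f j) :=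
      fun S g => Finset.sum_image (fun a _ b _ h => hfinj h)
    have hcJ : J.card = N := by
      rw [← hcK, hKimg, Finset.card_image_of_injective _ hfinj]
    have hcJ' : J'.card = N := by
      rw [← hcK', hKimg', Finset.card_image_of_injective _ hfinj]
    have h1 : ∑ j ∈ J, ζ ^ (2*j) = ∑ j ∈ J', ζ ^ (2*j) := by
      have h := hAe
      rw [hA] at h
      simp only [] at h
      rw [hKimg, hKimg', hsumtrans, hsumtrans] at h
      simpa only [hexp2] using h
    have h2 : ∑ j ∈ J, ζ ^ j = ∑ j ∈ J', ζ ^ j := by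
      have h := hBe
      rw [hB] at h
      simp only [] at h
      rw [hKimg, hKimg', hsumtrans, hsumtrans] at h
      simpa only [hexp] using h
    have := key L hL hL2 N hNL J J' (Finset.filter_subset _ _) (Finset.filter_subset _ _)
      hcJ hcJ' ζ hζ h1 h2
    rw [hKimg, hKimg', this]
  -- the pair set
  set pairs : Finset (Finset ℝ × Finset ℝ) :=
    (𝒦.powerset ×ˢ 𝒦.powerset).filter (fun p => p.1.card = N ∧ p.2.card = N ∧ p.1 ≠ p.2) with hpairs
  have hmem_pairs : ∀ p ∈ pairs, p.1 ⊆ 𝒦 ∧ p.2 ⊆ 𝒦 ∧ p.1.card = N ∧ p.2.card = N ∧ p.1 ≠ p.2 := by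
    intro p hp
    rw [hpairs, Finset.mem_filter, Finset.mem_product, Finset.mem_powerset, Finset.mem_powerset] at hp
    exact ⟨hp.1.1, hp.1.2, hp.2.1, hp.2.2.1, hp.2.2.2⟩
  -- the bad lambda set
  refine ⟨⋃ p ∈ (pairs : Set (Finset ℝ × Finset ℝ)),
    {lam : ℝ | A p.1 + lam * B p.1 = A p.2 + lam * B p.2}, ?_, ?_⟩
  · apply Set.Finite.biUnion pairs.finite_toSet
    intro p hp
    obtain ⟨hp1, hp2, hc1, hc2, hne⟩ := hmem_pairs p hp
    by_cases hBe : B p.1 = B p.2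
    · have hAe : A p.1 ≠ A p.2 := fun hAe => hne (step1 _ _ hp1 hp2 hc1 hc2 hAe hBe)
      have : {lam : ℝ | A p.1 + lam * B p.1 = A p.2 + lam * B p.2} = ∅ := by
        ext lam
        simp only [Set.mem_setOf_eq, Set.mem_empty_iff_false, iff_false]
        rw [hBe]
        intro h
        exact hAe (by linear_combination h)
      rw [this]; exact Set.finite_empty
    · set w : ℂ := (A p.2 - A p.1) / (B p.1 - B p.2) with hw
      apply Set.Finite.subset (Set.finite_singleton w.re)
      intro lam hlam
      simp only [Set.mem_setOf_eq] at hlam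
      have hBne : B p.1 - B p.2 ≠ 0 := sub_ne_zero_of_ne hBe
      have : (lam : ℂ) = w := by
        rw [hw]
        field_simp
        linear_combination hlam
      simp only [Set.mem_singleton_iff]
      rw [← this]
      simp
  -- given good lambda
  intro lam hlam hlamF
  set z : Finset ℝ → ℂ := fun K => A K + lam * B K with hz
  have hzne : ∀ p ∈ pairs, z p.1 - z p.2 ≠ 0 := by
    intro p hp h
    apply hlamF
    refine Set.mem_biUnion hp ?_
    simp only [Set.mem_setOf_eq]
    rw [hz] at h
    have : A p.1 + ↑lam * B p.1 = A p.2 + ↑lam * B p.2 := by linear_combination h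
    exact this
  refine ⟨⋃ p ∈ (pairs : Set (Finset ℝ × Finset ℝ)),
    {θ : ℝ | θ ∈ Set.Ico 0 (2*Real.pi) ∧ (Complex.exp ((θ:ℝ) * Complex.I) * (z p.1 - z p.2)).re = 0}, ?_, ?_⟩
  · exact Set.Finite.biUnion pairs.finite_toSet
      (fun p hp => lineFinite _ (hzne p hp))
  · intro θ hθ hθG K K' hK hK' hcK hcK' hEsum
    by_contra hne
    have hpmem : (K, K') ∈ pairs := by
      rw [hpairs, Finset.mem_filter, Finset.mem_product, Finset.mem_powerset, Finset.mem_powerset]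
      exact ⟨⟨hK, hK'⟩, hcK, hcK', hne⟩
    apply hθG
    refine Set.mem_biUnion hpmem ?_
    refine ⟨hθ, ?_⟩
    -- identify E with real part
    have hre : ∀ S : Finset ℝ, ∑ k ∈ S, (Real.cos (2 * k + θ) + lam * Real.cos (k + θ))
        = (Complex.exp ((θ:ℝ) * Complex.I) * z S).re := by
      intro S
      have hzexp : Complex.exp ((θ:ℝ) * Complex.I) * z S
          = ∑ k ∈ S, (Complex.exp (((2*k+θ:ℝ)) * Complex.I)
            + (lam:ℂ) * Complex.exp (((k+θ:ℝ)) * Complex.I)) := by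
        rw [hz, hA, hB]
        simp only []
        rw [Finset.mul_sum, mul_add, Finset.mul_sum, Finset.mul_sum, ← Finset.sum_add_distrib]
        refine Finset.sum_congr rfl fun k _ => ?_
        have e1 : Complex.exp ((θ:ℝ) * Complex.I) * Complex.exp (((2*k:ℝ)) * Complex.I)
            = Complex.exp (((2*k+θ:ℝ)) * Complex.I) := by
          rw [← Complex.exp_add]; congr 1; push_cast; ring
        have e2 : Complex.exp ((θ:ℝ) * Complex.I) * Complex.exp (((k:ℝ)) * Complex.I)
            = Complex.exp (((k+θ:ℝ)) * Complex.I) := by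
          rw [← Complex.exp_add]; congr 1; push_cast; ring
        rw [← e1, ← e2]; ring
      rw [hzexp, Complex.re_sum]
      refine Finset.sum_congr rfl fun k _ => ?_
      rw [Complex.add_re, Complex.exp_ofReal_mul_I_re, Complex.re_ofReal_mul,
        Complex.exp_ofReal_mul_I_re]
    have hK1 := hre K
    have hK2 := hre K'
    rw [hK1, hK2] at hEsum
    rw [mul_sub, Complex.sub_re]
    linarith
end
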